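/- arXiv:2503.09284 — 8 statements merged into one kernel-verified Lean document; each statement's English description precedes it below -/
import Mathlib

section
/- Let (X_n, x_n), n ≥ 1, be Gromov product spaces and (X, x) a Gromov product space such that (X_n, x_n) → (X, x) in the pointed Gromov–Hausdorff sense. If the boundaries (∂_P X_n, ρ_{x_n}), n ≥ 1, form an equicontinuous family of antipodal spaces, then (∂_P X_n, ρ_{x_n}) AI-converges to (∂_P X, ρ_x). -/
open Filter Topology Metric
open scoped ENNReal

universe u v

/-- A semi-metric (separating function) on a compact metrizable space: continuous, symmetric,
nonnegative, and vanishing exactly on the diagonal. -/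
def IsSemiMetric {Z : Type*} [TopologicalSpace Z] (ρ : Z → Z → ℝ) : Prop :=
  Continuous (Function.uncurry ρ) ∧ (∀ ξ η, ρ ξ η = ρ η ξ) ∧
    (∀ ξ η, 0 ≤ ρ ξ η) ∧ ∀ ξ η, ρ ξ η = 0 ↔ ξ = η

/-- An antipodal function: a semi-metric of diameter at most one such that every point has an
antipode at distance one. -/
def IsAntipodalFn {Z : Type*} [TopologicalSpace Z] (ρ : Z → Z → ℝ) : Prop :=
  IsSemiMetric ρ ∧ (∀ ξ η, ρ ξ η ≤ 1) ∧ ∀ ξ, ∃ η, ρ ξ η = 1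

/-- An `ε`-isometry between semi-metric spaces: distortion less than `ε`, and the image is an
`ε`-net. -/
def IsEpsIsometry {Z₁ : Type*} {Z₂ : Type*} (ρ₁ : Z₁ → Z₁ → ℝ) (ρ₂ : Z₂ → Z₂ → ℝ)
    (ε : ℝ) (f : Z₁ → Z₂) : Prop :=
  (∀ ξ η : Z₁, |ρ₂ (f ξ) (f η) - ρ₁ ξ η| < ε) ∧ ∀ ζ : Z₂, ∃ ξ : Z₁, ρ₂ (f ξ) ζ < ε

/-- AI-convergence of a sequence of semi-metric spaces `(Z n, ρ n)` to `(W, ρ₀)`: there are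
`ε n`-isometries `(Z n, ρ n) → (W, ρ₀)` with `ε n → 0+`. -/
def AIConverges {Z : ℕ → Type u} (ρ : ∀ n, Z n → Z n → ℝ) {W : Type v} (ρ₀ : W → W → ℝ) : Prop :=
  ∃ ε : ℕ → ℝ, (∀ n, 0 < ε n) ∧ Tendsto ε atTop (𝓝 0) ∧
    ∀ n, ∃ f : Z n → W, IsEpsIsometry (ρ n) ρ₀ (ε n) f

/-- An equicontinuous family of semi-metric spaces. -/
def EquicontinuousFamily {ι : Type*} {Z : ι → Type*} (ρ : ∀ i, Z i → Z i → ℝ) : Prop :=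
  ∀ ε : ℝ, 0 < ε → ∃ δ : ℝ, 0 < δ ∧ ∀ (i : ι) (ξ η : Z i), ρ i ξ η < δ →
    ∀ ζ : Z i, |ρ i ξ ζ - ρ i η ζ| < ε

/-- Pointed Gromov–Hausdorff convergence of pointed metric spaces `(X n, p n) → (Y, q)`:
for every `R > 0` and `ε > 0`, for all sufficiently large `n` there is a map between the closed
balls of radius `R` around the base points, sending base point to base point, with distortion
less than `ε` and whose image is an `ε`-net. -/
def PointedGHConverges (X : ℕ → Type u) [∀ n, MetricSpace (X n)] (p : ∀ n, X n)
    (Y : Type v) [MetricSpace Y] (q : Y) : Prop :=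
  ∀ (R : ℝ) (hR : 0 < R) (ε : ℝ) (_ : 0 < ε), ∃ N : ℕ, ∀ n, N ≤ n →
    ∃ f : Metric.closedBall (p n) R → Metric.closedBall q R,
      ((f ⟨p n, Metric.mem_closedBall_self hR.le⟩ : Y) = q) ∧
      (∀ a b : Metric.closedBall (p n) R,
        |dist (f a : Y) (f b : Y) - dist (a : X n) (b : X n)| < ε) ∧
      ∀ z : Metric.closedBall q R, ∃ a : Metric.closedBall (p n) R, dist (f a : Y) (z : Y) < ε

/-- A geodesic segment from `x` to `y`, parametrized by arclength on `[0, dist x y]`. -/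
def IsGeodesicSegment {X : Type*} [MetricSpace X] (γ : ℝ → X) (x y : X) : Prop :=
  γ 0 = x ∧ γ (dist x y) = y ∧
    ∀ s ∈ Set.Icc (0:ℝ) (dist x y), ∀ t ∈ Set.Icc (0:ℝ) (dist x y), dist (γ s) (γ t) = |s - t|

/-- A geodesic metric space: any two points are joined by a geodesic segment. -/
def IsGeodesicSpace (X : Type*) [MetricSpace X] : Prop :=
  ∀ x y : X, ∃ γ : ℝ → X, IsGeodesicSegment γ x y

/-- Geodesic completeness: any geodesic segment extends to a bi-infinite geodesic. -/
def IsGeodesicallyComplete (X : Type*) [MetricSpace X] : Prop :=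
  ∀ (x y : X) (γ : ℝ → X), IsGeodesicSegment γ x y →
    ∃ γ' : ℝ → X, (∀ s t : ℝ, dist (γ' s) (γ' t) = |s - t|) ∧
      ∀ s ∈ Set.Icc (0:ℝ) (dist x y), γ' s = γ s

/-- The data of a Gromov product space: a proper, geodesic, geodesically complete metric space
`X` together with a second countable Hausdorff compactification on which all the Gromov products
`(·|·)_x` extend continuously (with values in `[0, ∞]`), the extension being `∞` at a pair of
boundary points iff the two points coincide. -/
structure GromovProductData (X : Type u) [MetricSpace X] : Type (u + 1) where
  geodesic : IsGeodesicSpace X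
  geodesicallyComplete : IsGeodesicallyComplete X
  proper : ∀ (x : X) (r : ℝ), IsCompact (Metric.closedBall x r)
  Compactification : Type u
  [topC : TopologicalSpace Compactification]
  compactC : CompactSpace Compactification
  t2C : T2Space Compactification
  secondCountableC : SecondCountableTopology Compactification
  incl : X → Compactification
  isEmbedding_incl : Topology.IsEmbedding incl
  dense_incl : Dense (Set.range incl)
  Boundary : Type u
  [topB : TopologicalSpace Boundary]
  bIncl : Boundary → Compactification
  isEmbedding_bIncl : Topology.IsEmbedding bIncl
  range_bIncl : Set.range bIncl = (Set.range incl)ᶜ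
  gp : X → Compactification → Compactification → ℝ≥0∞
  continuous_gp : ∀ x : X,
    Continuous (fun pq : Compactification × Compactification => gp x pq.1 pq.2)
  gp_eq : ∀ x y z : X,
    gp x (incl y) (incl z) = ENNReal.ofReal ((dist y x + dist z x - dist y z) / 2)
  gp_top_iff : ∀ (x : X) (ξ η : Boundary), gp x (bIncl ξ) (bIncl η) = ⊤ ↔ ξ = η

attribute [instance] GromovProductData.topC GromovProductData.topB

/-- The visual antipodal function `ρ_x = exp (−(·|·)_x)` on the Gromov product boundary. -/
noncomputable def GromovProductData.visual {X : Type u} [MetricSpace X]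
    (D : GromovProductData X) (x : X) : D.Boundary → D.Boundary → ℝ :=
  fun ξ η =>
    if D.gp x (D.bIncl ξ) (D.bIncl η) = ⊤ then 0
    else Real.exp (-(D.gp x (D.bIncl ξ) (D.bIncl η)).toReal)

/-- Maximality of a Gromov product space, via the equivalent characterization: for every `x`,
the visual embedding `y ↦ ρ_y` is an isometry of `X` onto the Moebius space
`𝓜(∂_P X, ρ_x)`, i.e. it is isometric (the distance of `y, z` equals the sup-norm of
`log (dρ_z/dρ_y)`) and surjective onto the set of antipodal functions Moebius equivalent
to `ρ_x`. -/
def GromovProductData.IsMaximal {X : Type u} [MetricSpace X] (D : GromovProductData X) : Prop :=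
  ∀ x : X,
    (∀ y z : X, ∃ τ : D.Boundary → ℝ,
      (∀ ξ η, D.visual z ξ η ^ 2 = Real.exp (τ ξ) * Real.exp (τ η) * D.visual y ξ η ^ 2) ∧
      IsLUB (Set.range fun ξ => |τ ξ|) (dist y z)) ∧
    ∀ β : D.Boundary → D.Boundary → ℝ, IsAntipodalFn β →
      (∃ τ : D.Boundary → ℝ, Continuous τ ∧
        ∀ ξ η, β ξ η ^ 2 = Real.exp (τ ξ) * Real.exp (τ η) * D.visual x ξ η ^ 2) →
      ∃ y : X, D.visual y = β

section AuxLemmas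

variable {X : Type u} [MetricSpace X]

private lemma grp_nonneg (x a b : X) : 0 ≤ (dist a x + dist b x - dist a b) / 2 := by
  have h := dist_triangle a x b
  rw [dist_comm x b] at h
  linarith

private lemma grp_lip (x q w w' : X) :
    |(dist q x + dist w x - dist q w) / 2 - (dist q x + dist w' x - dist q w') / 2|
      ≤ dist w w' := by
  have h1 := abs_dist_sub_le w w' x
  have h2 := abs_dist_sub_le w w' q
  have e1 : dist q w = dist w q := dist_comm _ _
  have e2 : dist q w' = dist w' q := dist_comm _ _
  rw [abs_le] at h1 h2
  rw [abs_le, e1, e2]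
  constructor <;> linarith [h1.1, h1.2, h2.1, h2.2]

private lemma abs_exp_neg_sub {a b : ℝ} (ha : 0 ≤ a) (hb : 0 ≤ b) :
    |Real.exp (-a) - Real.exp (-b)| ≤ |a - b| := by
  wlog hab : a ≤ b generalizing a b
  · rw [abs_sub_comm, abs_sub_comm a b]
    exact this hb ha (le_of_not_ge hab)
  have h2 : Real.exp (-a) ≤ 1 := Real.exp_le_one_iff.mpr (by linarith)
  have h3 := Real.add_one_le_exp (a - b)
  have h4 : Real.exp (-a) * Real.exp (a - b) = Real.exp (-b) := by
    rw [← Real.exp_add]; congr 1; ring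
  have h5 : Real.exp (a - b) ≤ 1 := Real.exp_le_one_iff.mpr (by linarith)
  have h1 : Real.exp (-b) ≤ Real.exp (-a) := Real.exp_le_exp.mpr (by linarith)
  rw [abs_of_nonneg (by linarith), abs_of_nonpos (by linarith)]
  nlinarith [Real.exp_pos (-a)]

private lemma clusterPt_mem_of_closed {α : Type*} [TopologicalSpace α] {q : α} {F : Filter α}
    (hq : ClusterPt q F) {S : Set α} (hS : IsClosed S) (hF : S ∈ F) : q ∈ S := by
  have h1 : ClusterPt q (𝓟 S) := hq.mono (le_principal_iff.mpr hF)
  have h2 : q ∈ closure S := mem_closure_iff_clusterPt.mpr h1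
  rwa [hS.closure_eq] at h2

private lemma continuous_expneg :
    Continuous fun t : ℝ≥0∞ => if t = ⊤ then (0 : ℝ) else Real.exp (-t.toReal) := by
  rw [continuous_iff_continuousAt]
  intro t
  rcases eq_or_ne t ⊤ with rfl | ht
  · have h0 : (if (⊤ : ℝ≥0∞) = ⊤ then (0 : ℝ) else Real.exp (-(⊤ : ℝ≥0∞).toReal)) = 0 :=
      if_pos rfl
    rw [ContinuousAt, h0, Metric.tendsto_nhds]
    intro ε hε
    set m := min ε 1 with hm
    have hm0 : 0 < m := lt_min hε one_pos
    refine ENNReal.nhds_top_basis.eventually_iff.mpr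
      ⟨ENNReal.ofReal (-Real.log m + 1), ENNReal.ofReal_lt_top, ?_⟩
    intro v hv
    rcases eq_or_ne v ⊤ with rfl | hv'
    · rw [if_pos rfl, dist_self]; exact hε
    · rw [if_neg hv']
      have h2 : ENNReal.ofReal (-Real.log m + 1) ≤ v := le_of_lt hv
      have h1 : -Real.log m + 1 ≤ v.toReal := (ENNReal.ofReal_le_iff_le_toReal hv').mp h2
      rw [Real.dist_eq, sub_zero, abs_of_pos (Real.exp_pos _)]
      have h3 : Real.exp (-v.toReal) ≤ Real.exp (Real.log m - 1) :=
        Real.exp_le_exp.mpr (by linarith)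
      have h4 : Real.exp (Real.log m - 1) = m / Real.exp 1 := by
        rw [Real.exp_sub, Real.exp_log hm0]
      have h5 : (1 : ℝ) < Real.exp 1 := by
        have := Real.add_one_le_exp (1 : ℝ); linarith
      have h6 : m ≤ ε := min_le_left _ _
      have h7 : m / Real.exp 1 < m := by
        rw [div_lt_iff₀ (by linarith)]; nlinarith
      linarith
  · have h1 : ContinuousAt (fun t : ℝ≥0∞ => Real.exp (-t.toReal)) t :=
      Real.continuous_exp.continuousAt.comp ((ENNReal.continuousAt_toReal ht).neg)
    apply h1.congr
    have hmem : {v : ℝ≥0∞ | v ≠ ⊤} ∈ 𝓝 t := isOpen_ne.mem_nhds ht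
    exact Filter.eventuallyEq_of_mem hmem fun v hv => (if_neg hv).symm

end AuxLemmas
section GPDLemmas

variable {X : Type u} [MetricSpace X] (D : GromovProductData X) (x : X)

private lemma gpd_dense_prod :
    Dense ((Set.range D.incl) ×ˢ (Set.range D.incl)) :=
  D.dense_incl.prod D.dense_incl

private lemma gpd_gp_comm (q q' : D.Compactification) : D.gp x q q' = D.gp x q' q := by
  haveI := D.t2C
  have h : (fun pq : D.Compactification × D.Compactification => D.gp x pq.1 pq.2) =
      fun pq : D.Compactification × D.Compactification => D.gp x pq.2 pq.1 := by
    apply Continuous.ext_on (gpd_dense_prod D) (D.continuous_gp x)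
      ((D.continuous_gp x).comp continuous_swap)
    rintro ⟨q1, q2⟩ ⟨⟨a, rfl⟩, ⟨b, rfl⟩⟩
    show D.gp x (D.incl a) (D.incl b) = D.gp x (D.incl b) (D.incl a)
    rw [D.gp_eq, D.gp_eq, dist_comm a b]
    congr 1
    ring
  exact congrFun h (q, q')

private lemma gpd_gp_add_le (b : X) (q q' : D.Compactification) :
    D.gp x (D.incl b) q + D.gp x (D.incl b) q' ≤ ENNReal.ofReal (dist b x) + D.gp x q q' := by
  haveI := D.t2C
  set S : Set (D.Compactification × D.Compactification) :=
    {w | D.gp x (D.incl b) w.1 + D.gp x (D.incl b) w.2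
      ≤ ENNReal.ofReal (dist b x) + D.gp x w.1 w.2} with hSdef
  have hc1 : Continuous fun w : D.Compactification × D.Compactification =>
      D.gp x (D.incl b) w.1 + D.gp x (D.incl b) w.2 :=
    ((D.continuous_gp x).comp (continuous_const.prodMk continuous_fst)).add
      ((D.continuous_gp x).comp (continuous_const.prodMk continuous_snd))
  have hc2 : Continuous fun w : D.Compactification × D.Compactification =>
      ENNReal.ofReal (dist b x) + D.gp x w.1 w.2 :=
    continuous_const.add (D.continuous_gp x)
  have hS : IsClosed S := isClosed_le hc1 hc2
  have hsub : (Set.range D.incl) ×ˢ (Set.range D.incl) ⊆ S := by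
    rintro ⟨q1, q2⟩ ⟨⟨y, rfl⟩, ⟨z, rfl⟩⟩
    show D.gp x (D.incl b) (D.incl y) + D.gp x (D.incl b) (D.incl z)
      ≤ ENNReal.ofReal (dist b x) + D.gp x (D.incl y) (D.incl z)
    rw [D.gp_eq, D.gp_eq, D.gp_eq,
      ← ENNReal.ofReal_add (grp_nonneg x b y) (grp_nonneg x b z),
      ← ENNReal.ofReal_add dist_nonneg (grp_nonneg x y z)]
    apply ENNReal.ofReal_le_ofReal
    have h := dist_triangle y b z
    rw [dist_comm y b] at h
    linarith
  have huniv : S = Set.univ := by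
    have hdense : Dense S := (gpd_dense_prod D).mono hsub
    have := hdense.closure_eq
    rwa [hS.closure_eq] at this
  have : (q, q') ∈ S := by rw [huniv]; trivial
  exact this

private lemma gpd_gp_le_dist (b : X) (q : D.Compactification) :
    D.gp x (D.incl b) q ≤ ENNReal.ofReal (dist b x) := by
  set S : Set D.Compactification :=
    {w | D.gp x (D.incl b) w ≤ ENNReal.ofReal (dist b x)} with hSdef
  have hS : IsClosed S := isClosed_le
    ((D.continuous_gp x).comp (continuous_const.prodMk continuous_id)) continuous_const
  have hsub : Set.range D.incl ⊆ S := by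
    rintro _ ⟨z, rfl⟩
    show D.gp x (D.incl b) (D.incl z) ≤ ENNReal.ofReal (dist b x)
    rw [D.gp_eq]
    apply ENNReal.ofReal_le_ofReal
    have h := dist_triangle z b x
    rw [dist_comm z b] at h
    linarith
  have huniv : S = Set.univ := by
    have hdense : Dense S := D.dense_incl.mono hsub
    have := hdense.closure_eq
    rwa [hS.closure_eq] at this
  have : q ∈ S := by rw [huniv]; trivial
  exact this

private lemma gpd_visual_nonneg (ξ η : D.Boundary) : 0 ≤ D.visual x ξ η := by
  unfold GromovProductData.visual
  split
  · exact le_refl 0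
  · exact (Real.exp_pos _).le

private lemma gpd_visual_le_one (ξ η : D.Boundary) : D.visual x ξ η ≤ 1 := by
  unfold GromovProductData.visual
  split
  · norm_num
  · exact Real.exp_le_one_iff.mpr (neg_nonpos.mpr ENNReal.toReal_nonneg)

private lemma gpd_visual_symm (ξ η : D.Boundary) : D.visual x ξ η = D.visual x η ξ := by
  unfold GromovProductData.visual
  rw [gpd_gp_comm D x (D.bIncl ξ) (D.bIncl η)]

private lemma gpd_visual_self (ξ : D.Boundary) : D.visual x ξ ξ = 0 := by
  unfold GromovProductData.visual
  rw [if_pos ((D.gp_top_iff x ξ ξ).mpr rfl)]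

private lemma gpd_visual_pos {ξ η : D.Boundary} (h : ξ ≠ η) : 0 < D.visual x ξ η := by
  unfold GromovProductData.visual
  rw [if_neg (fun hc => h ((D.gp_top_iff x ξ η).mp hc))]
  exact Real.exp_pos _

private lemma gpd_visual_le_exp {ξ η : D.Boundary} {c : ℝ}
    (h : ENNReal.ofReal c ≤ D.gp x (D.bIncl ξ) (D.bIncl η)) :
    D.visual x ξ η ≤ Real.exp (-c) := by
  unfold GromovProductData.visual
  split_ifs with hcase
  · exact (Real.exp_pos _).le
  · exact Real.exp_le_exp.mpr (neg_le_neg ((ENNReal.ofReal_le_iff_le_toReal hcase).mp h))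

private lemma gpd_exp_le_visual {ξ η : D.Boundary} {c : ℝ} (hc : 0 ≤ c)
    (h : D.gp x (D.bIncl ξ) (D.bIncl η) ≤ ENNReal.ofReal c) :
    Real.exp (-c) ≤ D.visual x ξ η := by
  have hne : D.gp x (D.bIncl ξ) (D.bIncl η) ≠ ⊤ :=
    ne_top_of_le_ne_top ENNReal.ofReal_ne_top h
  unfold GromovProductData.visual
  rw [if_neg hne]
  exact Real.exp_le_exp.mpr (neg_le_neg (ENNReal.toReal_le_of_le_ofReal hc h))

end GPDLemmas
section GPDRays

variable {X : Type u} [MetricSpace X] (D : GromovProductData X) (x : X)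

private lemma gpd_clusterPt_boundary {ι : Type*} {F : Filter ι} [F.NeBot] (g : ι → X)
    (hg : Tendsto (fun i => dist (g i) x) F atTop) {q : D.Compactification}
    (hq : ClusterPt q (Filter.map (fun i => D.incl (g i)) F)) :
    ∃ ξ : D.Boundary, q = D.bIncl ξ := by
  have hnotin : q ∉ Set.range D.incl := by
    rintro ⟨z, rfl⟩
    have hb : Metric.ball z 1 ∈ 𝓝 z := Metric.ball_mem_nhds z one_pos
    rw [D.isEmbedding_incl.toIsInducing.nhds_eq_comap z] at hb
    obtain ⟨V, hV, hVsub⟩ := Filter.mem_comap.mp hb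
    have h2 : (Filter.map (fun i => D.incl (g i)) F ⊓ 𝓟 V).NeBot := by
      have hle : 𝓝 (D.incl z) ⊓ Filter.map (fun i => D.incl (g i)) F
          ≤ Filter.map (fun i => D.incl (g i)) F ⊓ 𝓟 V :=
        le_inf inf_le_right (le_trans inf_le_left (le_principal_iff.mpr hV))
      exact Filter.NeBot.mono hq hle
    have hfreqm : ∃ᶠ w in Filter.map (fun i => D.incl (g i)) F, w ∈ V :=
      Filter.frequently_iff_neBot.mpr h2
    have hfreq : ∃ᶠ i in F, D.incl (g i) ∈ V := Filter.frequently_map.mp hfreqm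
    have hev : ∀ᶠ i in F, ¬ D.incl (g i) ∈ V := by
      have hev2 : ∀ᶠ i in F, dist (g i) x ≥ dist z x + 1 :=
        hg.eventually (eventually_ge_atTop _)
      refine hev2.mono fun i hi hmem => ?_
      have hball : g i ∈ Metric.ball z 1 := hVsub hmem
      rw [Metric.mem_ball] at hball
      have htr := dist_triangle (g i) z x
      linarith
    obtain ⟨i, h1', h2'⟩ := (hfreq.and_eventually hev).exists
    exact h2' h1'
  have hmem : q ∈ Set.range D.bIncl := by rw [D.range_bIncl]; exact hnotin
  obtain ⟨ξ, hξ⟩ := hmem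
  exact ⟨ξ, hξ.symm⟩

private lemma gpd_exists_line (D : GromovProductData X) (z z' : X) :
    ∃ L : ℝ → X, (∀ s t, dist (L s) (L t) = |s - t|) ∧ L 0 = z ∧ L (dist z z') = z' := by
  obtain ⟨γ, hγ⟩ := D.geodesic z z'
  obtain ⟨L, hL1, hL2⟩ := D.geodesicallyComplete z z' γ hγ
  refine ⟨L, hL1, ?_, ?_⟩
  · rw [hL2 0 ⟨le_refl 0, dist_nonneg⟩, hγ.1]
  · rw [hL2 (dist z z') ⟨dist_nonneg, le_refl _⟩, hγ.2.1]

private lemma gpd_exists_ray (z : X) {R : ℝ} (hR0 : 0 ≤ R) (hRz : R ≤ dist z x) :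
    ∃ (p : X) (ξ : D.Boundary), dist p x = R ∧
      D.gp x (D.incl p) (D.bIncl ξ) = ENNReal.ofReal R ∧
      D.gp x (D.incl z) (D.bIncl ξ) = ENNReal.ofReal (dist z x) := by
  haveI := D.compactC
  obtain ⟨L, hL, hL0, hLz⟩ := gpd_exists_line D x z
  have hdL : ∀ t : ℝ, dist (L t) x = |t| := by
    intro t
    conv_lhs => rw [← hL0]
    rw [hL t 0, sub_zero]
  set F := Filter.map (fun t : ℝ => D.incl (L t)) atTop with hFdef
  haveI : F.NeBot := Filter.map_neBot
  obtain ⟨q, hq⟩ := exists_clusterPt_of_compactSpace F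
  have hg : Tendsto (fun t : ℝ => dist (L t) x) atTop atTop :=
    tendsto_atTop_mono (fun t => by rw [hdL]; exact le_abs_self t) tendsto_id
  obtain ⟨ξ, rfl⟩ := gpd_clusterPt_boundary D x L hg hq
  have hdxz : dist x z = dist z x := dist_comm x z
  refine ⟨L R, ξ, by rw [hdL, abs_of_nonneg hR0], ?_, ?_⟩
  · have hclosed : IsClosed {w : D.Compactification |
        D.gp x (D.incl (L R)) w = ENNReal.ofReal R} :=
      isClosed_eq ((D.continuous_gp x).comp (continuous_const.prodMk continuous_id))
        continuous_const
    apply clusterPt_mem_of_closed hq hclosed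
    rw [hFdef, Filter.mem_map]
    have hev : ∀ᶠ t : ℝ in atTop, R ≤ t := eventually_ge_atTop R
    filter_upwards [hev] with t ht
    show D.gp x (D.incl (L R)) (D.incl (L t)) = ENNReal.ofReal R
    have ht0 : 0 ≤ t := le_trans hR0 ht
    rw [D.gp_eq]
    have e1 : dist (L R) x = R := by rw [hdL, abs_of_nonneg hR0]
    have e2 : dist (L t) x = t := by rw [hdL, abs_of_nonneg ht0]
    have e3 : dist (L R) (L t) = t - R := by
      rw [hL, abs_of_nonpos (by linarith)]; ring
    rw [e1, e2, e3]
    congr 1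
    ring
  · have hclosed : IsClosed {w : D.Compactification |
        D.gp x (D.incl z) w = ENNReal.ofReal (dist z x)} :=
      isClosed_eq ((D.continuous_gp x).comp (continuous_const.prodMk continuous_id))
        continuous_const
    apply clusterPt_mem_of_closed hq hclosed
    rw [hFdef, Filter.mem_map]
    have hev : ∀ᶠ t : ℝ in atTop, dist z x ≤ t := eventually_ge_atTop _
    filter_upwards [hev] with t ht
    show D.gp x (D.incl z) (D.incl (L t)) = ENNReal.ofReal (dist z x)
    have ht0 : 0 ≤ t := le_trans dist_nonneg ht
    rw [D.gp_eq]
    have e2 : dist (L t) x = t := by rw [hdL, abs_of_nonneg ht0]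
    have e3 : dist z (L t) = t - dist z x := by
      conv_lhs => rw [← hLz]
      rw [hL, hdxz, abs_of_nonpos (by linarith)]; ring
    rw [e2, e3]
    congr 1
    ring

private lemma gpd_boundary_nonempty (x0 : X) : Nonempty D.Boundary := by
  obtain ⟨p, ξ, -⟩ := gpd_exists_ray D x0 x0 (le_refl 0) (by simp)
  exact ⟨ξ⟩

private lemma gpd_exists_anchor (ξ : D.Boundary) {R : ℝ} (hR : 0 ≤ R) :
    ∃ (p : X) (ξ' : D.Boundary), dist p x = R ∧
      D.gp x (D.incl p) (D.bIncl ξ') = ENNReal.ofReal R ∧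
      ENNReal.ofReal R ≤ D.gp x (D.bIncl ξ') (D.bIncl ξ) := by
  obtain ⟨z, hz⟩ : ∃ z : X, ENNReal.ofReal R ≤ D.gp x (D.incl z) (D.bIncl ξ) := by
    have hcont : Continuous fun w : D.Compactification => D.gp x w (D.bIncl ξ) :=
      (D.continuous_gp x).comp (continuous_id.prodMk continuous_const)
    have hopen : IsOpen {w : D.Compactification | ENNReal.ofReal R < D.gp x w (D.bIncl ξ)} :=
      isOpen_lt continuous_const hcont
    have hne : {w : D.Compactification | ENNReal.ofReal R < D.gp x w (D.bIncl ξ)}.Nonempty := by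
      refine ⟨D.bIncl ξ, ?_⟩
      show ENNReal.ofReal R < D.gp x (D.bIncl ξ) (D.bIncl ξ)
      rw [(D.gp_top_iff x ξ ξ).mpr rfl]
      exact ENNReal.ofReal_lt_top
    obtain ⟨w, hw1, hw2⟩ := D.dense_incl.exists_mem_open hopen hne
    obtain ⟨z, rfl⟩ := hw1
    exact ⟨z, le_of_lt hw2⟩
  have hRz : R ≤ dist z x := by
    have h2 := le_trans hz (gpd_gp_le_dist D x z (D.bIncl ξ))
    exact (ENNReal.ofReal_le_ofReal_iff dist_nonneg).mp h2
  obtain ⟨p, ξ', h1, h2, h3⟩ := gpd_exists_ray D x z hR hRz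
  refine ⟨p, ξ', h1, h2, ?_⟩
  have hT := gpd_gp_add_le D x z (D.bIncl ξ) (D.bIncl ξ')
  rw [h3] at hT
  have hchain : ENNReal.ofReal R + ENNReal.ofReal (dist z x)
      ≤ ENNReal.ofReal (dist z x) + D.gp x (D.bIncl ξ) (D.bIncl ξ') := by
    calc ENNReal.ofReal R + ENNReal.ofReal (dist z x)
        ≤ D.gp x (D.incl z) (D.bIncl ξ) + ENNReal.ofReal (dist z x) :=
          add_le_add_left hz _
      _ ≤ ENNReal.ofReal (dist z x) + D.gp x (D.bIncl ξ) (D.bIncl ξ') := hT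
  rw [add_comm (ENNReal.ofReal R)] at hchain
  have := (ENNReal.add_le_add_iff_left ENNReal.ofReal_ne_top).mp hchain
  rwa [gpd_gp_comm] at this

end GPDRays
section GPDGlue

variable {X : Type u} [MetricSpace X] (D : GromovProductData X) (x : X)

/-- Upper bound: the visual distance between ray points is at most `exp(-(p|p'))`. -/
private lemma gpd_glue_upper (p p' : X) (ξ ξ' : D.Boundary)
    (hp : D.gp x (D.incl p) (D.bIncl ξ) = ENNReal.ofReal (dist p x))
    (hp' : D.gp x (D.incl p') (D.bIncl ξ') = ENNReal.ofReal (dist p' x)) :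
    D.visual x ξ ξ' ≤ Real.exp (-((dist p x + dist p' x - dist p p') / 2)) := by
  set u : ℝ := (dist p x + dist p' x - dist p p') / 2 with hu
  have h1 : ENNReal.ofReal u ≤ D.gp x (D.incl p) (D.bIncl ξ') := by
    have hT := gpd_gp_add_le D x p' (D.incl p) (D.bIncl ξ')
    rw [hp', D.gp_eq] at hT
    have he : (dist p' x + dist p x - dist p' p) / 2 = u := by
      rw [hu, dist_comm p' p]; ring
    rw [he, add_comm (ENNReal.ofReal u)] at hT
    exact (ENNReal.add_le_add_iff_left ENNReal.ofReal_ne_top).mp hT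
  have h2 : ENNReal.ofReal u ≤ D.gp x (D.bIncl ξ) (D.bIncl ξ') := by
    have hT := gpd_gp_add_le D x p (D.bIncl ξ) (D.bIncl ξ')
    rw [hp] at hT
    have hchain : ENNReal.ofReal (dist p x) + ENNReal.ofReal u
        ≤ ENNReal.ofReal (dist p x) + D.gp x (D.bIncl ξ) (D.bIncl ξ') :=
      le_trans (add_le_add_right h1 _) hT
    exact (ENNReal.add_le_add_iff_left ENNReal.ofReal_ne_top).mp hchain
  exact gpd_visual_le_exp D x h2

/-- Lower bound via geodesic completeness and equicontinuity. -/
private lemma gpd_glue_lower {δ ε₁ : ℝ}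
    (hmod : ∀ ξ η, D.visual x ξ η < δ → ∀ ζ, |D.visual x ξ ζ - D.visual x η ζ| < ε₁)
    (p p' : X) (ξ ξ' : D.Boundary)
    (hp : D.gp x (D.incl p) (D.bIncl ξ) = ENNReal.ofReal (dist p x))
    (hp' : D.gp x (D.incl p') (D.bIncl ξ') = ENNReal.ofReal (dist p' x))
    (hgap : Real.exp ((dist p x + dist p' x - dist p p') / 2 - dist p x) < δ)
    (hgap' : Real.exp ((dist p x + dist p' x - dist p p') / 2 - dist p' x) < δ) :
    Real.exp (-((dist p x + dist p' x - dist p p') / 2)) - 2 * ε₁ ≤ D.visual x ξ ξ' := by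
  haveI := D.compactC
  have hu0 : 0 ≤ (dist p x + dist p' x - dist p p') / 2 := grp_nonneg x p p'
  set s : ℝ := dist p x with hs
  set s' : ℝ := dist p' x with hs'
  set Dd : ℝ := dist p p' with hDd
  set u : ℝ := (s + s' - Dd) / 2 with hu
  obtain ⟨L, hL, hL0, hLD⟩ := gpd_exists_line D p p'
  -- basic distance computations along the line
  have hd1 : ∀ t : ℝ, 0 ≤ t → dist (L (-t)) p = t := by
    intro t ht
    rw [← hL0, hL, sub_zero, abs_neg, abs_of_nonneg ht]
  have hd2 : ∀ t : ℝ, 0 ≤ t → dist (L (Dd + t)) p' = t := by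
    intro t ht
    rw [← hLD, hL]
    have : Dd + t - dist p p' = t := by rw [← hDd]; ring
    rw [this, abs_of_nonneg ht]
  have hd3 : ∀ t t' : ℝ, 0 ≤ t → 0 ≤ t' → dist (L (-t)) (L (Dd + t')) = t + Dd + t' := by
    intro t t' ht ht'
    have hDd0 : 0 ≤ Dd := dist_nonneg
    rw [hL, abs_of_nonpos (by linarith)]
    ring
  have hup1 : ∀ t : ℝ, 0 ≤ t → dist (L (-t)) x ≤ t + s := by
    intro t ht
    calc dist (L (-t)) x ≤ dist (L (-t)) p + dist p x := dist_triangle _ _ _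
      _ = t + s := by rw [hd1 t ht]
  have hup2 : ∀ t : ℝ, 0 ≤ t → dist (L (Dd + t)) x ≤ t + s' := by
    intro t ht
    calc dist (L (Dd + t)) x ≤ dist (L (Dd + t)) p' + dist p' x := dist_triangle _ _ _
      _ = t + s' := by rw [hd2 t ht]
  have hlo1 : ∀ t : ℝ, 0 ≤ t → t + Dd - s' ≤ dist (L (-t)) x := by
    intro t ht
    have h1 := dist_triangle (L (-t)) x p'
    have h2 : dist (L (-t)) p' = t + Dd := by
      have hDd0 : 0 ≤ Dd := dist_nonneg
      rw [← hLD, hL, abs_of_nonpos (by linarith)]; ring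
    have h3 : dist x p' = s' := dist_comm x p'
    linarith
  have hlo2 : ∀ t : ℝ, 0 ≤ t → t + Dd - s ≤ dist (L (Dd + t)) x := by
    intro t ht
    have h1 := dist_triangle (L (Dd + t)) x p
    have h2 : dist (L (Dd + t)) p = Dd + t := by
      have hDd0 : 0 ≤ Dd := dist_nonneg
      rw [← hL0, hL, sub_zero, abs_of_nonneg (by linarith)]
    have h3 : dist x p = s := dist_comm x p
    linarith
  -- the filter of pairs far out on the two ends of the line
  set F := Filter.map (fun tt : ℝ × ℝ => (D.incl (L (-tt.1)), D.incl (L (Dd + tt.2))))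
    (atTop ×ˢ atTop) with hFdef
  haveI : F.NeBot := Filter.map_neBot
  obtain ⟨w, hw⟩ := exists_clusterPt_of_compactSpace F
  have hpos : ∀ᶠ tt : ℝ × ℝ in atTop ×ˢ atTop, 0 ≤ tt.1 ∧ 0 ≤ tt.2 :=
    (tendsto_fst.eventually (eventually_ge_atTop 0)).and
      (tendsto_snd.eventually (eventually_ge_atTop 0))
  -- membership facts for the cluster point
  have hm1 : D.gp x w.1 w.2 ≤ ENNReal.ofReal u := by
    have hclosed : IsClosed {v : D.Compactification × D.Compactification |
        D.gp x v.1 v.2 ≤ ENNReal.ofReal u} := isClosed_le (D.continuous_gp x) continuous_const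
    refine clusterPt_mem_of_closed hw hclosed ?_
    rw [hFdef, Filter.mem_map]
    filter_upwards [hpos] with tt htt
    obtain ⟨ht1, ht2⟩ := htt
    show D.gp x (D.incl (L (-tt.1))) (D.incl (L (Dd + tt.2))) ≤ ENNReal.ofReal u
    rw [D.gp_eq]
    apply ENNReal.ofReal_le_ofReal
    have hA := hup1 tt.1 ht1
    have hB := hup2 tt.2 ht2
    rw [hd3 tt.1 tt.2 ht1 ht2]
    rw [hu]
    linarith
  have hm2 : ENNReal.ofReal (s - u) ≤ D.gp x (D.incl p) w.1 := by
    have hclosed : IsClosed {v : D.Compactification × D.Compactification |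
        ENNReal.ofReal (s - u) ≤ D.gp x (D.incl p) v.1} :=
      isClosed_le continuous_const
        ((D.continuous_gp x).comp (continuous_const.prodMk continuous_fst))
    refine clusterPt_mem_of_closed hw hclosed ?_
    rw [hFdef, Filter.mem_map]
    filter_upwards [hpos] with tt htt
    obtain ⟨ht1, ht2⟩ := htt
    show ENNReal.ofReal (s - u) ≤ D.gp x (D.incl p) (D.incl (L (-tt.1)))
    rw [D.gp_eq]
    apply ENNReal.ofReal_le_ofReal
    have hA := hlo1 tt.1 ht1
    have hB : dist p (L (-tt.1)) = tt.1 := by rw [dist_comm]; exact hd1 tt.1 ht1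
    rw [hB, ← hs]
    rw [hu]
    linarith
  have hm3 : ENNReal.ofReal (s' - u) ≤ D.gp x (D.incl p') w.2 := by
    have hclosed : IsClosed {v : D.Compactification × D.Compactification |
        ENNReal.ofReal (s' - u) ≤ D.gp x (D.incl p') v.2} :=
      isClosed_le continuous_const
        ((D.continuous_gp x).comp (continuous_const.prodMk continuous_snd))
    refine clusterPt_mem_of_closed hw hclosed ?_
    rw [hFdef, Filter.mem_map]
    filter_upwards [hpos] with tt htt
    obtain ⟨ht1, ht2⟩ := htt
    show ENNReal.ofReal (s' - u) ≤ D.gp x (D.incl p') (D.incl (L (Dd + tt.2)))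
    rw [D.gp_eq]
    apply ENNReal.ofReal_le_ofReal
    have hA := hlo2 tt.2 ht2
    have hB : dist p' (L (Dd + tt.2)) = tt.2 := by rw [dist_comm]; exact hd2 tt.2 ht2
    rw [hB, ← hs']
    rw [hu]
    linarith
  -- both coordinates of the cluster point are boundary points
  obtain ⟨α, ha⟩ : ∃ α : D.Boundary, w.1 = D.bIncl α := by
    have hts : Tendsto Prod.fst F
        (Filter.map (fun tt : ℝ × ℝ => D.incl (L (-tt.1))) (atTop ×ˢ atTop)) := by
      rw [hFdef, Filter.tendsto_map'_iff]
      exact Filter.tendsto_map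
    have hcl : ClusterPt w.1
        (Filter.map (fun tt : ℝ × ℝ => D.incl (L (-tt.1))) (atTop ×ˢ atTop)) :=
      hw.map continuous_fst.continuousAt hts
    apply gpd_clusterPt_boundary D x (fun tt : ℝ × ℝ => L (-tt.1)) ?_ hcl
    apply tendsto_atTop_mono' (atTop ×ˢ atTop)
      (f₁ := fun tt : ℝ × ℝ => tt.1 + (Dd - s'))
    · filter_upwards [hpos] with tt htt
      have := hlo1 tt.1 htt.1
      show tt.1 + (Dd - s') ≤ dist (L (-tt.1)) x
      linarith
    · exact tendsto_atTop_add_const_right _ _ tendsto_fst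
  obtain ⟨β, hb⟩ : ∃ β : D.Boundary, w.2 = D.bIncl β := by
    have hts : Tendsto Prod.snd F
        (Filter.map (fun tt : ℝ × ℝ => D.incl (L (Dd + tt.2))) (atTop ×ˢ atTop)) := by
      rw [hFdef, Filter.tendsto_map'_iff]
      exact Filter.tendsto_map
    have hcl : ClusterPt w.2
        (Filter.map (fun tt : ℝ × ℝ => D.incl (L (Dd + tt.2))) (atTop ×ˢ atTop)) :=
      hw.map continuous_snd.continuousAt hts
    apply gpd_clusterPt_boundary D x (fun tt : ℝ × ℝ => L (Dd + tt.2)) ?_ hcl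
    apply tendsto_atTop_mono' (atTop ×ˢ atTop)
      (f₁ := fun tt : ℝ × ℝ => tt.2 + (Dd - s))
    · filter_upwards [hpos] with tt htt
      have := hlo2 tt.2 htt.2
      show tt.2 + (Dd - s) ≤ dist (L (Dd + tt.2)) x
      linarith
    · exact tendsto_atTop_add_const_right _ _ tendsto_snd
  rw [ha, hb] at hm1
  rw [ha] at hm2
  rw [hb] at hm3
  -- visual ξ α and visual ξ' β are small
  have h4 : ENNReal.ofReal (s - u) ≤ D.gp x (D.bIncl ξ) (D.bIncl α) := by
    have hT := gpd_gp_add_le D x p (D.bIncl ξ) (D.bIncl α)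
    rw [hp, ← hs] at hT
    have hchain : ENNReal.ofReal s + ENNReal.ofReal (s - u)
        ≤ ENNReal.ofReal s + D.gp x (D.bIncl ξ) (D.bIncl α) :=
      le_trans (add_le_add_right hm2 _) hT
    exact (ENNReal.add_le_add_iff_left ENNReal.ofReal_ne_top).mp hchain
  have h4' : ENNReal.ofReal (s' - u) ≤ D.gp x (D.bIncl ξ') (D.bIncl β) := by
    have hT := gpd_gp_add_le D x p' (D.bIncl ξ') (D.bIncl β)
    rw [hp', ← hs'] at hT
    have hchain : ENNReal.ofReal s' + ENNReal.ofReal (s' - u)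
        ≤ ENNReal.ofReal s' + D.gp x (D.bIncl ξ') (D.bIncl β) :=
      le_trans (add_le_add_right hm3 _) hT
    exact (ENNReal.add_le_add_iff_left ENNReal.ofReal_ne_top).mp hchain
  have h5 : D.visual x ξ α < δ := by
    refine lt_of_le_of_lt (gpd_visual_le_exp D x h4) ?_
    have he : -(s - u) = u - s := by ring
    rw [he]
    exact hgap
  have h6 : D.visual x ξ' β < δ := by
    refine lt_of_le_of_lt (gpd_visual_le_exp D x h4') ?_
    have he : -(s' - u) = u - s' := by ring
    rw [he]
    exact hgap'
  have h7 : Real.exp (-u) ≤ D.visual x α β := gpd_exp_le_visual D x hu0 hm1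
  have h8 := hmod ξ α h5 ξ'
  have h9 := hmod ξ' β h6 α
  have e1 : D.visual x α ξ' = D.visual x ξ' α := gpd_visual_symm D x α ξ'
  have e2 : D.visual x β α = D.visual x α β := gpd_visual_symm D x β α
  rw [abs_lt] at h8 h9
  have goal_eq : -((dist p x + dist p' x - dist p p') / 2) = -u := by rw [hu, hs, hs', hDd]
  rw [goal_eq]
  linarith [h8.1, h8.2, h9.1, h9.2]

end GPDGlue
section GPDModulus

variable {X : Type u} [MetricSpace X] (D : GromovProductData X) (x : X)

private lemma gpd_isOpen_range_incl : IsOpen (Set.range D.incl) := by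
  haveI := D.compactC
  haveI := D.t2C
  haveI : ProperSpace X := ⟨D.proper⟩
  rw [isOpen_iff_mem_nhds]
  rintro _ ⟨z, rfl⟩
  obtain ⟨K, hKc, hKn⟩ := exists_compact_mem_nhds z
  rw [D.isEmbedding_incl.toIsInducing.nhds_eq_comap z] at hKn
  obtain ⟨V, hV, hVsub⟩ := Filter.mem_comap.mp hKn
  obtain ⟨V', hV'sub, hV'o, hzV'⟩ := mem_nhds_iff.mp hV
  have h3 : IsClosed (D.incl '' K) := (hKc.image D.isEmbedding_incl.continuous).isClosed
  have hsub2 : V' ⊆ D.incl '' K := by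
    intro v hv
    have h1 : v ∈ closure (V' ∩ Set.range D.incl) := by
      rw [_root_.mem_closure_iff]
      intro O hO hvO
      obtain ⟨w, hw1, hw2, hw3⟩ := D.dense_incl.exists_mem_open (hO.inter hV'o) ⟨v, hvO, hv⟩
      exact ⟨w, hw2, hw3, hw1⟩
    have h2 : V' ∩ Set.range D.incl ⊆ D.incl '' K := by
      rintro _ ⟨hvV', ⟨w, rfl⟩⟩
      exact ⟨w, hVsub (hV'sub hvV'), rfl⟩
    exact closure_minimal h2 h3 h1
  exact Filter.mem_of_superset (hV'o.mem_nhds hzV')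
    (hsub2.trans (Set.image_subset_range _ _))

private lemma gpd_compactSpace_boundary : CompactSpace D.Boundary := by
  haveI := D.compactC
  haveI := D.t2C
  have hBc : IsCompact (Set.range D.bIncl) := by
    have hcl : IsClosed (Set.range D.bIncl) := by
      rw [D.range_bIncl]
      exact (gpd_isOpen_range_incl D).isClosed_compl
    exact hcl.isCompact
  rw [← isCompact_univ_iff, D.isEmbedding_bIncl.isCompact_iff]
  rwa [Set.image_univ]

private lemma gpd_continuous_visual :
    Continuous fun w : D.Boundary × D.Boundary => D.visual x w.1 w.2 := by
  have hgpB : Continuous fun w : D.Boundary × D.Boundary =>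
      D.gp x (D.bIncl w.1) (D.bIncl w.2) :=
    (D.continuous_gp x).comp ((D.isEmbedding_bIncl.continuous.comp continuous_fst).prodMk
      (D.isEmbedding_bIncl.continuous.comp continuous_snd))
  exact continuous_expneg.comp hgpB

private lemma gpd_exists_modulus (ε : ℝ) (hε : 0 < ε) :
    ∃ δ : ℝ, 0 < δ ∧ ∀ ξ η, D.visual x ξ η < δ →
      ∀ ζ, |D.visual x ξ ζ - D.visual x η ζ| < ε := by
  haveI := gpd_compactSpace_boundary D
  have hVc := gpd_continuous_visual D x
  set S : Set (D.Boundary × D.Boundary × D.Boundary) :=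
    {w | ε ≤ |D.visual x w.1 w.2.2 - D.visual x w.2.1 w.2.2|} with hSdef
  have hc1 : Continuous fun w : D.Boundary × D.Boundary × D.Boundary =>
      |D.visual x w.1 w.2.2 - D.visual x w.2.1 w.2.2| := by
    apply Continuous.abs
    apply Continuous.sub
    · exact hVc.comp (continuous_fst.prodMk (continuous_snd.comp continuous_snd))
    · exact hVc.comp ((continuous_fst.comp continuous_snd).prodMk
        (continuous_snd.comp continuous_snd))
  have hScl : IsClosed S := isClosed_le continuous_const hc1
  rcases Set.eq_empty_or_nonempty S with hSe | hSne
  · refine ⟨1, one_pos, fun ξ η _ ζ => ?_⟩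
    by_contra hcon
    push_neg at hcon
    have hmem : (ξ, η, ζ) ∈ S := hcon
    rw [hSe] at hmem
    exact hmem
  · have hf : ContinuousOn (fun w : D.Boundary × D.Boundary × D.Boundary =>
        D.visual x w.1 w.2.1) S :=
      (hVc.comp (continuous_fst.prodMk (continuous_fst.comp continuous_snd))).continuousOn
    obtain ⟨w₀, hw₀S, hw₀min⟩ := hScl.isCompact.exists_isMinOn hSne hf
    set δ := D.visual x w₀.1 w₀.2.1 with hδ
    have hδpos : 0 < δ := by
      by_cases he : w₀.1 = w₀.2.1
      · exfalso
        have hmem : ε ≤ |D.visual x w₀.1 w₀.2.2 - D.visual x w₀.2.1 w₀.2.2| := hw₀S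
        rw [he, sub_self, abs_zero] at hmem
        linarith
      · exact gpd_visual_pos D x he
    refine ⟨δ, hδpos, fun ξ η hlt ζ => ?_⟩
    by_contra hcon
    push_neg at hcon
    have hmem : (ξ, η, ζ) ∈ S := hcon
    have := hw₀min hmem
    exact absurd hlt (not_lt.mpr this)

end GPDModulus
section GPDTwoSided

variable {X : Type u} [MetricSpace X] (D : GromovProductData X) (x : X)

private lemma gpd_glue_two_sided {δ ε₁ T s₀ : ℝ} (hε₁pos : 0 < ε₁)
    (hexpT : Real.exp (-T) = ε₁)
    (hmod : ∀ ξ η, D.visual x ξ η < δ → ∀ ζ, |D.visual x ξ ζ - D.visual x η ζ| < ε₁)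
    (hkey : ∀ c s : ℝ, c ≤ T → s₀ ≤ s → Real.exp (c - s) < δ)
    (p p' : X) (ξ ξ' : D.Boundary)
    (hp : D.gp x (D.incl p) (D.bIncl ξ) = ENNReal.ofReal (dist p x))
    (hp' : D.gp x (D.incl p') (D.bIncl ξ') = ENNReal.ofReal (dist p' x))
    (hs : s₀ ≤ dist p x) (hs' : s₀ ≤ dist p' x) :
    |D.visual x ξ ξ' - Real.exp (-((dist p x + dist p' x - dist p p') / 2))| ≤ 2 * ε₁ := by
  have hup := gpd_glue_upper D x p p' ξ ξ' hp hp'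
  have hvn := gpd_visual_nonneg D x ξ ξ'
  have hexppos := Real.exp_pos (-((dist p x + dist p' x - dist p p') / 2))
  by_cases hcase : (dist p x + dist p' x - dist p p') / 2 ≤ T
  · have hlo := gpd_glue_lower D x hmod p p' ξ ξ' hp hp'
      (hkey _ _ hcase hs) (hkey _ _ hcase hs')
    rw [abs_le]
    constructor <;> linarith
  · push_neg at hcase
    have h1 : Real.exp (-((dist p x + dist p' x - dist p p') / 2)) ≤ Real.exp (-T) :=
      Real.exp_le_exp.mpr (by linarith)
    rw [hexpT] at h1
    rw [abs_le]
    constructor <;> linarith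

end GPDTwoSided

section MainStep

set_option maxHeartbeats 1000000 in
private lemma main_step
    {X : ℕ → Type u} [∀ n, MetricSpace (X n)] (D : ∀ n, GromovProductData (X n))
    (x : ∀ n, X n)
    {Y : Type u} [MetricSpace Y] (DY : GromovProductData Y) (y : Y)
    (hGH : PointedGHConverges X x Y y)
    (hEq : EquicontinuousFamily (fun n => (D n).visual (x n)))
    (ε : ℝ) (hε : 0 < ε) :
    ∃ N : ℕ, ∀ n, N ≤ n → ∃ f : (D n).Boundary → DY.Boundary,
      IsEpsIsometry ((D n).visual (x n)) (DY.visual y) ε f := by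
  set ε₁ := min (ε / 20) (1 / 4) with hε₁def
  have hε₁pos : 0 < ε₁ := lt_min (by linarith) (by norm_num)
  have hε₁a : ε₁ ≤ ε / 20 := min_le_left _ _
  have hε₁b : ε₁ ≤ 1 / 4 := min_le_right _ _
  obtain ⟨δf, hδfpos, hδf⟩ := hEq ε₁ hε₁pos
  obtain ⟨δY, hδYpos, hδY⟩ := gpd_exists_modulus DY y ε₁ hε₁pos
  set δ := min (min δf δY) ε₁ with hδdef
  have hδpos : 0 < δ := lt_min (lt_min hδfpos hδYpos) hε₁pos
  have hδf' : ∀ n ξ η, (D n).visual (x n) ξ η < δ → ∀ ζ,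
      |(D n).visual (x n) ξ ζ - (D n).visual (x n) η ζ| < ε₁ := fun n ξ η h ζ =>
    hδf n ξ η (lt_of_lt_of_le h (le_trans (min_le_left _ _) (min_le_left _ _))) ζ
  have hδY' : ∀ ξ η, DY.visual y ξ η < δ → ∀ ζ,
      |DY.visual y ξ ζ - DY.visual y η ζ| < ε₁ := fun ξ η h ζ =>
    hδY ξ η (lt_of_lt_of_le h (le_trans (min_le_left _ _) (min_le_right _ _))) ζ
  have hδε₁ : δ ≤ ε₁ := min_le_right _ _
  set T := Real.log ε₁⁻¹ with hTdef
  set s₀ := T + Real.log δ⁻¹ + 1 with hs₀def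
  set R := s₀ + 1 with hRdef
  have h1ε : ε₁ < 1 := lt_of_le_of_lt hε₁b (by norm_num)
  have hinvε : 1 < ε₁⁻¹ := by
    rw [← one_div, lt_div_iff₀ hε₁pos]; linarith
  have hTpos : 0 < T := Real.log_pos hinvε
  have h1δ : δ < 1 := lt_of_le_of_lt hδε₁ h1ε
  have hinvδ : 1 < δ⁻¹ := by
    rw [← one_div, lt_div_iff₀ hδpos]; linarith
  have hlogδpos : 0 < Real.log δ⁻¹ := Real.log_pos hinvδ
  have hs₀pos : 0 < s₀ := by rw [hs₀def]; linarith
  have hR0 : 0 ≤ R := by linarith [hRdef.le, hRdef.ge]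
  have hexpT : Real.exp (-T) = ε₁ := by
    rw [hTdef, Real.exp_neg, Real.exp_log (by positivity), inv_inv]
  have hexpδ : Real.exp (-Real.log δ⁻¹) = δ := by
    rw [Real.exp_neg, Real.exp_log (by positivity), inv_inv]
  have hexp1 : (1 : ℝ) < Real.exp 1 := by
    have := Real.add_one_le_exp (1 : ℝ); linarith
  have key1 : ∀ c s : ℝ, c ≤ T → s₀ ≤ s → Real.exp (c - s) < δ := by
    intro c s hc hs
    have hs' : T + Real.log δ⁻¹ + 1 ≤ s := by rw [← hs₀def]; exact hs
    have h1 : c - s ≤ -Real.log δ⁻¹ - 1 := by linarith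
    have h2 : Real.exp (c - s) ≤ Real.exp (-Real.log δ⁻¹ - 1) := Real.exp_le_exp.mpr h1
    have h3 : Real.exp (-Real.log δ⁻¹ - 1) = δ / Real.exp 1 := by
      rw [Real.exp_sub, hexpδ]
    have h4 : δ / Real.exp 1 < δ := div_lt_self hδpos hexp1
    linarith
  have hexpRδ : Real.exp (-R) < δ := by
    have h := key1 0 R (le_of_lt hTpos) (by rw [hRdef]; linarith)
    rw [zero_sub] at h
    exact h
  have hexpRε : Real.exp (-R) < ε₁ := lt_of_lt_of_le hexpRδ hδε₁
  have hehalf : Real.exp ((1 : ℝ) / 2) < 2 := by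
    have hsq : Real.exp ((1 : ℝ) / 2) * Real.exp ((1 : ℝ) / 2) = Real.exp 1 := by
      rw [← Real.exp_add]; norm_num
    nlinarith [Real.exp_pos ((1 : ℝ) / 2), Real.exp_one_lt_d9]
  have hRpos1 : (0 : ℝ) < R + 1 := by linarith
  obtain ⟨N, hN⟩ := hGH (R + 1) hRpos1 ε₁ hε₁pos
  refine ⟨N, fun n hn => ?_⟩
  obtain ⟨φ, hφbase, hφdist, hφnet⟩ := hN n hn
  -- anchors in X n
  have hanchor : ∀ ξ : (D n).Boundary, ∃ pd : X n × (D n).Boundary,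
      dist pd.1 (x n) = R ∧
      (D n).gp (x n) ((D n).incl pd.1) ((D n).bIncl pd.2) = ENNReal.ofReal R ∧
      ENNReal.ofReal R ≤ (D n).gp (x n) ((D n).bIncl pd.2) ((D n).bIncl ξ) := by
    intro ξ
    obtain ⟨p, ξ', h1, h2, h3⟩ := gpd_exists_anchor (D n) (x n) ξ hR0
    exact ⟨(p, ξ'), h1, h2, h3⟩
  choose A hA1 hA2 hA3 using hanchor
  have hA2' : ∀ ξ, (D n).gp (x n) ((D n).incl (A ξ).1) ((D n).bIncl (A ξ).2)
      = ENNReal.ofReal (dist (A ξ).1 (x n)) := fun ξ => by rw [hA1 ξ]; exact hA2 ξ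
  have hAmem : ∀ ξ, (A ξ).1 ∈ Metric.closedBall (x n) (R + 1) := fun ξ => by
    rw [Metric.mem_closedBall, hA1 ξ]; linarith
  set Φ : (D n).Boundary → Y := fun ξ => (φ ⟨(A ξ).1, hAmem ξ⟩ : Y) with hΦdef
  have hbase : ∀ a : Metric.closedBall (x n) (R + 1),
      |dist (φ a : Y) y - dist (a : X n) (x n)| < ε₁ := by
    intro a
    have h := hφdist a ⟨x n, Metric.mem_closedBall_self hRpos1.le⟩
    rwa [hφbase] at h
  have hΦrad : ∀ ξ, |dist (Φ ξ) y - R| < ε₁ := by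
    intro ξ
    have h := hbase ⟨(A ξ).1, hAmem ξ⟩
    rw [hΦdef]
    have e : dist ((⟨(A ξ).1, hAmem ξ⟩ : Metric.closedBall (x n) (R + 1)) : X n) (x n) = R :=
      hA1 ξ
    rwa [e] at h
  have hΦradlo : ∀ ξ, s₀ ≤ dist (Φ ξ) y := by
    intro ξ
    have h := hΦrad ξ
    rw [abs_lt] at h
    linarith [h.1, hε₁b, hRdef.le, hRdef.ge]
  -- Y-side ray points
  have hYray : ∀ ξ : (D n).Boundary, ∃ η : DY.Boundary,
      DY.gp y (DY.incl (Φ ξ)) (DY.bIncl η) = ENNReal.ofReal (dist (Φ ξ) y) := by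
    intro ξ
    obtain ⟨p', η, -, -, h3⟩ := gpd_exists_ray DY y (Φ ξ) dist_nonneg (le_refl _)
    exact ⟨η, h3⟩
  choose f hf using hYray
  -- the swap estimate: the anchor boundary point is δ-close to the original
  have hswapX : ∀ ξ : (D n).Boundary, (D n).visual (x n) (A ξ).2 ξ < δ := by
    intro ξ
    exact lt_of_le_of_lt (gpd_visual_le_exp (D n) (x n) (hA3 ξ)) hexpRδ
  refine ⟨f, ?_, ?_⟩
  · -- distortion
    intro ξ η
    have hu0 : 0 ≤ (dist (A ξ).1 (x n) + dist (A η).1 (x n) - dist (A ξ).1 (A η).1) / 2 :=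
      grp_nonneg _ _ _
    have hv0 : 0 ≤ (dist (Φ ξ) y + dist (Φ η) y - dist (Φ ξ) (Φ η)) / 2 :=
      grp_nonneg _ _ _
    have hdd : |dist (Φ ξ) (Φ η) - dist (A ξ).1 (A η).1| < ε₁ :=
      hφdist ⟨(A ξ).1, hAmem ξ⟩ ⟨(A η).1, hAmem η⟩
    have huv : |(dist (A ξ).1 (x n) + dist (A η).1 (x n) - dist (A ξ).1 (A η).1) / 2
        - (dist (Φ ξ) y + dist (Φ η) y - dist (Φ ξ) (Φ η)) / 2| ≤ 3 / 2 * ε₁ := by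
      have h1 := hΦrad ξ
      have h2 := hΦrad η
      rw [abs_lt] at h1 h2 hdd
      rw [abs_le, hA1 ξ, hA1 η]
      constructor <;> linarith [h1.1, h1.2, h2.1, h2.2, hdd.1, hdd.2]
    -- X-side two-sided glue
    have hXg : |(D n).visual (x n) (A ξ).2 (A η).2
        - Real.exp (-((dist (A ξ).1 (x n) + dist (A η).1 (x n) - dist (A ξ).1 (A η).1) / 2))|
        ≤ 2 * ε₁ :=
      gpd_glue_two_sided (D n) (x n) hε₁pos hexpT (hδf' n) key1 (A ξ).1 (A η).1
        (A ξ).2 (A η).2 (hA2' ξ) (hA2' η) (by rw [hA1 ξ]; linarith) (by rw [hA1 η]; linarith)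
    -- Y-side two-sided glue
    have hYg : |DY.visual y (f ξ) (f η)
        - Real.exp (-((dist (Φ ξ) y + dist (Φ η) y - dist (Φ ξ) (Φ η)) / 2))| ≤ 2 * ε₁ :=
      gpd_glue_two_sided DY y hε₁pos hexpT hδY' key1 (Φ ξ) (Φ η) (f ξ) (f η)
        (hf ξ) (hf η) (hΦradlo ξ) (hΦradlo η)
    -- exponential comparison
    have hee : |Real.exp (-((dist (A ξ).1 (x n) + dist (A η).1 (x n) - dist (A ξ).1 (A η).1) / 2))
        - Real.exp (-((dist (Φ ξ) y + dist (Φ η) y - dist (Φ ξ) (Φ η)) / 2))| ≤ 3 / 2 * ε₁ :=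
      le_trans (abs_exp_neg_sub hu0 hv0) huv
    -- swaps
    have hsw1 := hδf' n (A ξ).2 ξ (hswapX ξ) η
    have hsw2 := hδf' n (A η).2 η (hswapX η) (A ξ).2
    have e1 : (D n).visual (x n) (A ξ).2 η = (D n).visual (x n) η (A ξ).2 :=
      gpd_visual_symm _ _ _ _
    have e3 : (D n).visual (x n) (A ξ).2 (A η).2 = (D n).visual (x n) (A η).2 (A ξ).2 :=
      gpd_visual_symm _ _ _ _
    set a1 := (D n).visual (x n) ξ η with ha1
    set a2 := (D n).visual (x n) (A ξ).2 η with ha2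
    set a3 := (D n).visual (x n) (A ξ).2 (A η).2 with ha3
    set b1 := DY.visual y (f ξ) (f η) with hb1
    set E1 := Real.exp (-((dist (A ξ).1 (x n) + dist (A η).1 (x n)
      - dist (A ξ).1 (A η).1) / 2)) with hE1
    set E2 := Real.exp (-((dist (Φ ξ) y + dist (Φ η) y - dist (Φ ξ) (Φ η)) / 2)) with hE2
    have t4 : |a3 - a2| ≤ ε₁ := by
      rw [e3, e1]
      exact le_of_lt hsw2
    have t5 : |a2 - a1| ≤ ε₁ := le_of_lt hsw1
    have u1 : |a3 - a1| ≤ 2 * ε₁ :=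
      le_trans (abs_sub_le a3 a2 a1) (by linarith)
    have u2 : |E1 - a1| ≤ 4 * ε₁ := by
      have h := abs_sub_le E1 a3 a1
      have hXg' : |E1 - a3| ≤ 2 * ε₁ := by rwa [abs_sub_comm] at hXg
      linarith
    have u3 : |E2 - a1| ≤ 11 / 2 * ε₁ := by
      have h := abs_sub_le E2 E1 a1
      have hee' : |E2 - E1| ≤ 3 / 2 * ε₁ := by rwa [abs_sub_comm] at hee
      linarith
    have u4 : |b1 - a1| ≤ 15 / 2 * ε₁ := by
      have h := abs_sub_le b1 E2 a1
      linarith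
    have := abs_nonneg (b1 - a1)
    calc |b1 - a1| ≤ 15 / 2 * ε₁ := u4
      _ < ε := by linarith [hε₁a, hε]
  · -- net property
    intro ζ
    obtain ⟨q₀, ζt, hq₀1, hq₀2, hq₀3⟩ := gpd_exists_anchor DY y ζ hR0
    have hq₀mem : q₀ ∈ Metric.closedBall y (R + 1) := by
      rw [Metric.mem_closedBall, hq₀1]; linarith
    obtain ⟨a, haq⟩ := hφnet ⟨q₀, hq₀mem⟩
    have hrada : |dist (φ a : Y) y - dist (a : X n) (x n)| < ε₁ := hbase a
    have hφalo : R - ε₁ ≤ dist (φ a : Y) y := by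
      have h1 := dist_triangle q₀ (φ a : Y) y
      have h2 : dist q₀ (φ a : Y) = dist (φ a : Y) q₀ := dist_comm _ _
      have h3 : dist q₀ y = R := hq₀1
      linarith
    have haxlo : R - 2 * ε₁ ≤ dist (a : X n) (x n) := by
      rw [abs_lt] at hrada
      linarith [hrada.2]
    obtain ⟨pa, ξ, hpa1, hpa2, hξa⟩ :=
      gpd_exists_ray (D n) (x n) (a : X n) dist_nonneg (le_refl _)
    refine ⟨ξ, ?_⟩
    -- Step 1 : exp(-(p|a)) is small in X n
    have hsaxs₀ : s₀ ≤ dist (a : X n) (x n) := by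
      linarith [haxlo, hε₁b, hRdef.le, hRdef.ge]
    have h1 : Real.exp (-((dist (A ξ).1 (x n) + dist (a : X n) (x n)
        - dist (A ξ).1 (a : X n)) / 2)) ≤ 3 * ε₁ := by
      have hXg := gpd_glue_two_sided (D n) (x n) hε₁pos hexpT (hδf' n) key1 (A ξ).1 (a : X n)
        (A ξ).2 ξ (hA2' ξ) hξa (by rw [hA1 ξ]; linarith) hsaxs₀
      have hsmall : (D n).visual (x n) (A ξ).2 ξ ≤ Real.exp (-R) :=
        gpd_visual_le_exp (D n) (x n) (hA3 ξ)
      have hvn := gpd_visual_nonneg (D n) (x n) (A ξ).2 ξ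
      rw [abs_le] at hXg
      linarith [hXg.2, hexpRε]
    -- Step 2 : transfer to Y
    have h2' : |(dist (A ξ).1 (x n) + dist (a : X n) (x n) - dist (A ξ).1 (a : X n)) / 2
        - (dist (Φ ξ) y + dist (φ a : Y) y - dist (Φ ξ) (φ a : Y)) / 2| ≤ 3 / 2 * ε₁ := by
      have hd1 := hΦrad ξ
      have hd3 : |dist (Φ ξ) (φ a : Y) - dist (A ξ).1 (a : X n)| < ε₁ :=
        hφdist ⟨(A ξ).1, hAmem ξ⟩ a
      rw [abs_lt] at hd1 hd3 hrada
      rw [abs_le, hA1 ξ]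
      constructor <;> linarith [hd1.1, hd1.2, hd3.1, hd3.2, hrada.1, hrada.2]
    have hu'0 : 0 ≤ (dist (A ξ).1 (x n) + dist (a : X n) (x n)
        - dist (A ξ).1 (a : X n)) / 2 := grp_nonneg _ _ _
    have hv'0 : 0 ≤ (dist (Φ ξ) y + dist (φ a : Y) y - dist (Φ ξ) (φ a : Y)) / 2 :=
      grp_nonneg _ _ _
    have h2 : Real.exp (-((dist (Φ ξ) y + dist (φ a : Y) y - dist (Φ ξ) (φ a : Y)) / 2))
        ≤ 6 * ε₁ := by
      have hmono : Real.exp (-((dist (Φ ξ) y + dist (φ a : Y) y - dist (Φ ξ) (φ a : Y)) / 2))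
          ≤ Real.exp (-((dist (A ξ).1 (x n) + dist (a : X n) (x n)
            - dist (A ξ).1 (a : X n)) / 2) + 1 / 2) := by
        apply Real.exp_le_exp.mpr
        rw [abs_le] at h2'
        linarith [h2'.1, hε₁b]
      have hsplit : Real.exp (-((dist (A ξ).1 (x n) + dist (a : X n) (x n)
            - dist (A ξ).1 (a : X n)) / 2) + 1 / 2)
          = Real.exp (-((dist (A ξ).1 (x n) + dist (a : X n) (x n)
            - dist (A ξ).1 (a : X n)) / 2)) * Real.exp ((1 : ℝ) / 2) := by
        rw [← Real.exp_add]
      rw [hsplit] at hmono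
      have hpos := Real.exp_pos (-((dist (A ξ).1 (x n) + dist (a : X n) (x n)
        - dist (A ξ).1 (a : X n)) / 2))
      nlinarith [hehalf, h1, hε₁pos]
    -- Step 3 : replace φ a by q₀
    have h3' : |(dist (Φ ξ) y + dist q₀ y - dist (Φ ξ) q₀) / 2
        - (dist (Φ ξ) y + dist (φ a : Y) y - dist (Φ ξ) (φ a : Y)) / 2| ≤ ε₁ :=
      le_trans (grp_lip y (Φ ξ) q₀ (φ a : Y)) (le_of_lt (by rwa [dist_comm] at haq))
    have h3 : Real.exp (-((dist (Φ ξ) y + dist q₀ y - dist (Φ ξ) q₀) / 2)) ≤ 12 * ε₁ := by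
      have hmono : Real.exp (-((dist (Φ ξ) y + dist q₀ y - dist (Φ ξ) q₀) / 2))
          ≤ Real.exp (-((dist (Φ ξ) y + dist (φ a : Y) y - dist (Φ ξ) (φ a : Y)) / 2)
            + 1 / 2) := by
        apply Real.exp_le_exp.mpr
        rw [abs_le] at h3'
        linarith [h3'.1, hε₁b]
      have hsplit : Real.exp (-((dist (Φ ξ) y + dist (φ a : Y) y
            - dist (Φ ξ) (φ a : Y)) / 2) + 1 / 2)
          = Real.exp (-((dist (Φ ξ) y + dist (φ a : Y) y - dist (Φ ξ) (φ a : Y)) / 2))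
            * Real.exp ((1 : ℝ) / 2) := by
        rw [← Real.exp_add]
      rw [hsplit] at hmono
      have hpos := Real.exp_pos (-((dist (Φ ξ) y + dist (φ a : Y) y
        - dist (Φ ξ) (φ a : Y)) / 2))
      nlinarith [hehalf, h2, hε₁pos]
    -- Step 4 : glue upper bound in Y
    have hq₀2' : DY.gp y (DY.incl q₀) (DY.bIncl ζt) = ENNReal.ofReal (dist q₀ y) := by
      rw [hq₀1]; exact hq₀2
    have h4 : DY.visual y (f ξ) ζt ≤ 12 * ε₁ :=
      le_trans (gpd_glue_upper DY y (Φ ξ) q₀ (f ξ) ζt (hf ξ) hq₀2') h3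
    -- Step 5 : swap ζt to ζ
    have h5 : DY.visual y ζt ζ < δ :=
      lt_of_le_of_lt (gpd_visual_le_exp DY y hq₀3) hexpRδ
    have h6 := hδY' ζt ζ h5 (f ξ)
    have e1 : DY.visual y ζt (f ξ) = DY.visual y (f ξ) ζt := gpd_visual_symm _ _ _ _
    have e2 : DY.visual y ζ (f ξ) = DY.visual y (f ξ) ζ := gpd_visual_symm _ _ _ _
    rw [abs_lt] at h6
    have hvn := gpd_visual_nonneg DY y (f ξ) ζ
    have hfinal : DY.visual y (f ξ) ζ ≤ 13 * ε₁ := by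
      have w1 := h6.1
      rw [e1, e2] at w1
      linarith
    linarith [hε₁a, hε]

end MainStep
section Assembly

private lemma trivial_isometry
    {X : ℕ → Type u} [∀ n, MetricSpace (X n)] (D : ∀ n, GromovProductData (X n))
    (x : ∀ n, X n)
    {Y : Type u} [MetricSpace Y] (DY : GromovProductData Y) (y : Y) (n : ℕ) :
    ∃ f : (D n).Boundary → DY.Boundary,
      IsEpsIsometry ((D n).visual (x n)) (DY.visual y) 2 f := by
  obtain ⟨w₀⟩ := gpd_boundary_nonempty DY y
  obtain ⟨ξ₀⟩ := gpd_boundary_nonempty (D n) (x n)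
  refine ⟨fun _ => w₀, fun ξ η => ?_, fun ζ => ⟨ξ₀, ?_⟩⟩
  · rw [gpd_visual_self DY y w₀, zero_sub, abs_neg,
      abs_of_nonneg (gpd_visual_nonneg (D n) (x n) ξ η)]
    have h2 := gpd_visual_le_one (D n) (x n) ξ η
    linarith
  · have h1 := gpd_visual_le_one DY y w₀ ζ
    linarith

end Assembly
/-- If Gromov product spaces `(X n, x n)` converge to a Gromov product space
`(Y, y)` in the pointed Gromov–Hausdorff sense and the boundaries
`(∂_P X n, ρ_{x n})` form an equicontinuous family of antipodal spaces, then
`(∂_P X n, ρ_{x n})` AI-converges to `(∂_P Y, ρ_y)`. -/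
theorem boundaries_AI_converge_of_GH_converges
    {X : ℕ → Type u} [∀ n, MetricSpace (X n)] (D : ∀ n, GromovProductData (X n))
    (x : ∀ n, X n)
    {Y : Type u} [MetricSpace Y] (DY : GromovProductData Y) (y : Y)
    (hGH : PointedGHConverges X x Y y)
    (hEq : EquicontinuousFamily (fun n => (D n).visual (x n))) :
    AIConverges (fun n => (D n).visual (x n)) (DY.visual y) := by
  have main : ∀ k : ℕ, ∃ N : ℕ, ∀ n, N ≤ n → ∃ f : (D n).Boundary → DY.Boundary,
      IsEpsIsometry ((D n).visual (x n)) (DY.visual y) (1 / (k + 1)) f := fun k =>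
    main_step D x DY y hGH hEq (1 / (k + 1)) (by positivity)
  choose Nf hNf using main
  -- a monotone-enough threshold function
  set M : ℕ → ℕ := fun k => max ((Finset.range (k + 1)).sup Nf) k with hM
  have hMk : ∀ k, k ≤ M k := fun k => le_max_right _ _
  have hMNf : ∀ k, Nf k ≤ M k := fun k =>
    le_trans (Finset.le_sup (Finset.self_mem_range_succ k)) (le_max_left _ _)
  set K : ℕ → ℕ := fun n => Nat.findGreatest (fun k => M k ≤ n) n with hK
  set εs : ℕ → ℝ := fun n => if M 0 ≤ n then 2 / (K n + 1) else 2 with hεs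
  have hεspos : ∀ n, 0 < εs n := by
    intro n
    rw [hεs]
    dsimp only
    split
    · positivity
    · norm_num
  refine ⟨εs, hεspos, ?_, ?_⟩
  · -- tendsto 0
    rw [Metric.tendsto_atTop]
    intro e he
    obtain ⟨k, hk⟩ := exists_nat_gt (2 / e)
    refine ⟨max (M k) (M 0), fun n hn => ?_⟩
    have hn1 : M k ≤ n := le_trans (le_max_left _ _) hn
    have hn0 : M 0 ≤ n := le_trans (le_max_right _ _) hn
    have hkn : k ≤ n := le_trans (hMk k) hn1
    have hKk : k ≤ K n := Nat.le_findGreatest (P := fun k => M k ≤ n) hkn hn1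
    have hval : εs n = 2 / (K n + 1) := by rw [hεs]; dsimp only; rw [if_pos hn0]
    rw [Real.dist_eq, hval, sub_zero, abs_of_pos (by positivity)]
    have h2e : 0 < 2 / e := by positivity
    have hkpos : (0 : ℝ) < k + 1 := by positivity
    have hKpos : (0 : ℝ) < (K n : ℝ) + 1 := by positivity
    have hmono : 2 / ((K n : ℝ) + 1) ≤ 2 / ((k : ℝ) + 1) := by
      apply div_le_div_of_nonneg_left (by norm_num) hkpos
      exact_mod_cast Nat.succ_le_succ hKk
    have hlt : 2 / ((k : ℝ) + 1) < e := by
      rw [div_lt_iff₀ hkpos]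
      have : 2 / e < (k : ℝ) := hk
      rw [div_lt_iff₀ he] at this
      nlinarith
    linarith
  · -- the maps
    intro n
    by_cases hn0 : M 0 ≤ n
    · have hval : εs n = 2 / (K n + 1) := by rw [hεs]; dsimp only; rw [if_pos hn0]
      have hspec : M (K n) ≤ n := Nat.findGreatest_spec (P := fun k => M k ≤ n) (Nat.zero_le n) hn0
      obtain ⟨f, hf1, hf2⟩ := hNf (K n) n (le_trans (hMNf (K n)) hspec)
      refine ⟨f, fun ξ η => ?_, fun ζ => ?_⟩
      · refine lt_of_lt_of_le (hf1 ξ η) ?_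
        rw [hval]
        have hKpos : (0 : ℝ) < (K n : ℝ) + 1 := by positivity
        rw [div_le_div_iff₀ hKpos hKpos]
        linarith
      · obtain ⟨ξ, hξ⟩ := hf2 ζ
        refine ⟨ξ, lt_of_lt_of_le hξ ?_⟩
        rw [hval]
        have hKpos : (0 : ℝ) < (K n : ℝ) + 1 := by positivity
        rw [div_le_div_iff₀ hKpos hKpos]
        linarith
    · have hval : εs n = 2 := by rw [hεs]; dsimp only; rw [if_neg hn0]
      rw [hval]
      exact trivial_isometry D x DY y n
end

section
/- Let (X_n, x_n), n ≥ 1, and (X, x) be proper, geodesically complete CAT(−1) spaces. If (X_n, x_n) → (X, x) in the pointed Gromov–Hausdorff sense, then the visual boundaries (∂X_n, ρ_{x_n}) converge to (∂X, ρ_x) in the Gromov–Hausdorff sense as compact metric spaces. -/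
open Filter Topology Metric
open scoped ENNReal

universe u v

/-- A CAT(−1) space: distances between points on two geodesic segments issuing from a common
vertex of a geodesic triangle are bounded by the corresponding distances in a comparison
triangle (one with the same side lengths) in the hyperbolic plane (the upper half-plane with
its hyperbolic metric, of curvature −1). -/
def IsCATMinusOne (X : Type*) [MetricSpace X] : Prop :=
  ∀ (x y z : X) (γ₁ γ₂ : ℝ → X), IsGeodesicSegment γ₁ x y → IsGeodesicSegment γ₂ x z →
    ∀ (x' y' z' : UpperHalfPlane) (γ₁' γ₂' : ℝ → UpperHalfPlane),
      dist x' y' = dist x y → dist x' z' = dist x z → dist y' z' = dist y z →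
      IsGeodesicSegment γ₁' x' y' → IsGeodesicSegment γ₂' x' z' →
      ∀ s ∈ Set.Icc (0:ℝ) (dist x y), ∀ t ∈ Set.Icc (0:ℝ) (dist x z),
        dist (γ₁ s) (γ₂ t) ≤ dist (γ₁' s) (γ₂' t)

/-- A geodesic ray: an arclength-parametrized geodesic defined on `[0, ∞)`. -/
def GeodesicRay (X : Type u) [MetricSpace X] : Type u :=
  {γ : ℝ → X // ∀ s t : ℝ, 0 ≤ s → 0 ≤ t → dist (γ s) (γ t) = |s - t|}

/-- Two geodesic rays are asymptotic if they remain at bounded distance from each other. -/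
def AsymptoticRays {X : Type u} [MetricSpace X] (γ₁ γ₂ : GeodesicRay X) : Prop :=
  ∃ C : ℝ, ∀ t : ℝ, 0 ≤ t → dist (γ₁.1 t) (γ₂.1 t) ≤ C

/-- The Gromov boundary: equivalence classes of asymptotic geodesic rays. -/
def GromovBoundary (X : Type u) [MetricSpace X] : Type u :=
  Quot (AsymptoticRays (X := X))

/-- `ρ` is the visual metric on the Gromov boundary based at `x`:
`ρ(ξ, η) = exp (−(ξ|η)_x)`, characterized by
`exp (−(γ₁ t | γ₂ t)_x) → ρ([γ₁], [γ₂])` as `t → ∞` for any geodesic rays `γ₁, γ₂`. -/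
def IsVisualMetric {X : Type u} [MetricSpace X] (x : X)
    (ρ : GromovBoundary X → GromovBoundary X → ℝ) : Prop :=
  ∀ γ₁ γ₂ : GeodesicRay X,
    Tendsto
      (fun t : ℝ =>
        Real.exp (-((dist (γ₁.1 t) x + dist (γ₂.1 t) x - dist (γ₁.1 t) (γ₂.1 t)) / 2)))
      atTop (𝓝 (ρ (Quot.mk _ γ₁) (Quot.mk _ γ₂)))

namespace VBC
open Real

set_option maxHeartbeats 1000000

noncomputable def Ipt (a : ℝ) : UpperHalfPlane := ⟨⟨0, Real.exp a⟩, by positivity⟩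

lemma Wden_pos (r : ℝ) (u : ℝ) (hu : 0 < u) : 0 < (1-r^2)^2 + (2*r)^2 * u^2 := by
  rcases eq_or_ne r 0 with h | h
  · simp [h]
  · have : 0 < (2*r)^2 * u^2 := by positivity
    positivity

noncomputable def Wpt (r s : ℝ) : UpperHalfPlane :=
  ⟨⟨(2*r*(1-r^2)*(1 - Real.exp s ^2))/((1-r^2)^2 + (2*r)^2 * Real.exp s^2),
    (Real.exp s * (1+r^2)^2)/((1-r^2)^2 + (2*r)^2 * Real.exp s^2)⟩, by
      have := Wden_pos r (Real.exp s) (Real.exp_pos s)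
      positivity⟩

@[simp] lemma Ipt_re (a : ℝ) : (Ipt a).re = 0 := rfl
@[simp] lemma Ipt_im (a : ℝ) : (Ipt a).im = Real.exp a := rfl
@[simp] lemma Wpt_re (r s : ℝ) :
    (Wpt r s).re = (2*r*(1-r^2)*(1 - Real.exp s ^2))/((1-r^2)^2 + (2*r)^2 * Real.exp s^2) := rfl
@[simp] lemma Wpt_im (r s : ℝ) :
    (Wpt r s).im = (Real.exp s * (1+r^2)^2)/((1-r^2)^2 + (2*r)^2 * Real.exp s^2) := rfl

lemma cosh_dist_Ipt_Wpt (r a b : ℝ) :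
    Real.cosh (dist (Ipt a) (Wpt r b)) =
      Real.cosh (a-b) + 2 * (2*r/(1+r^2))^2 * Real.sinh a * Real.sinh b := by
  have h1 := Wden_pos r (Real.exp b) (Real.exp_pos b)
  have h2 : (0:ℝ) < 1 + r^2 := by positivity
  have ha := Real.exp_pos a
  have hb := Real.exp_pos b
  rw [UpperHalfPlane.cosh_dist']
  simp only [Real.cosh_eq, Real.sinh_eq, Real.exp_sub, Real.exp_neg, Ipt_re, Ipt_im, Wpt_re,
    Wpt_im]
  set D := (1-r^2)^2 + (2*r)^2 * Real.exp b^2 with hD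
  field_simp
  rw [hD]
  ring

lemma cosh_dist_Wpt_Wpt (r a b : ℝ) :
    Real.cosh (dist (Wpt r a) (Wpt r b)) = Real.cosh (a-b) := by
  have h1 := Wden_pos r (Real.exp a) (Real.exp_pos a)
  have h2 := Wden_pos r (Real.exp b) (Real.exp_pos b)
  have ha := Real.exp_pos a
  have hb := Real.exp_pos b
  rw [UpperHalfPlane.cosh_dist']
  simp only [Real.cosh_eq, Real.exp_sub, Real.exp_neg, Wpt_re, Wpt_im]
  set D1 := (1-r^2)^2 + (2*r)^2 * Real.exp a^2 with hD1
  set D2 := (1-r^2)^2 + (2*r)^2 * Real.exp b^2 with hD2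
  field_simp
  rw [hD1, hD2]
  ring

lemma dist_eq_of_cosh_eq {d e : ℝ} (hd : 0 ≤ d) (he : 0 ≤ e)
    (h : Real.cosh d = Real.cosh e) : d = e := by
  have h1 : |d| ≤ |e| := Real.cosh_le_cosh.1 h.le
  have h2 : |e| ≤ |d| := Real.cosh_le_cosh.1 h.ge
  rw [abs_of_nonneg hd, abs_of_nonneg he] at h1 h2
  linarith

lemma dist_Wpt_Wpt (r a b : ℝ) : dist (Wpt r a) (Wpt r b) = |a - b| :=
  dist_eq_of_cosh_eq dist_nonneg (abs_nonneg _)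
    (by rw [cosh_dist_Wpt_Wpt, Real.cosh_abs])

lemma dist_Ipt_Ipt (a b : ℝ) : dist (Ipt a) (Ipt b) = |a - b| := by
  rw [UpperHalfPlane.dist_of_re_eq (by simp)]
  simp only [Ipt_im, Real.log_exp, Real.dist_eq]

@[simp] lemma Wpt_coe_re (r s : ℝ) :
    ((Wpt r s) : ℂ).re = (2*r*(1-r^2)*(1 - Real.exp s ^2))/((1-r^2)^2 + (2*r)^2 * Real.exp s^2) :=
  rfl
@[simp] lemma Wpt_coe_im (r s : ℝ) :
    ((Wpt r s) : ℂ).im = (Real.exp s * (1+r^2)^2)/((1-r^2)^2 + (2*r)^2 * Real.exp s^2) := rfl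
@[simp] lemma Ipt_coe_re (a : ℝ) : ((Ipt a) : ℂ).re = 0 := rfl
@[simp] lemma Ipt_coe_im (a : ℝ) : ((Ipt a) : ℂ).im = Real.exp a := rfl

lemma Wpt_zero (r : ℝ) : Wpt r 0 = Ipt 0 := by
  have h2 : (0:ℝ) < (1+r^2)^2 := by positivity
  apply UpperHalfPlane.ext_re_im
  · show (2*r*(1-r^2)*(1 - Real.exp 0 ^2))/((1-r^2)^2 + (2*r)^2 * Real.exp 0^2) = (0:ℝ)
    rw [Real.exp_zero]
    simp
  · show (Real.exp 0 * (1+r^2)^2)/((1-r^2)^2 + (2*r)^2 * Real.exp 0^2) = Real.exp 0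
    rw [Real.exp_zero]
    rw [show ((1:ℝ)-r^2)^2 + (2*r)^2 * 1^2 = (1+r^2)^2 by ring]
    field_simp

/-- surjectivity of `r ↦ 2 (2r/(1+r²))²` from `[0,1]` onto `[0,2]` -/
lemma exists_param {k : ℝ} (h0 : 0 ≤ k) (h2 : k ≤ 2) :
    ∃ r : ℝ, 2 * (2*r/(1+r^2))^2 = k := by
  have hc : ContinuousOn (fun r : ℝ => 2 * (2*r/(1+r^2))^2) (Set.Icc 0 1) := by
    apply ContinuousOn.mul continuousOn_const
    apply ContinuousOn.pow
    exact ContinuousOn.div (by fun_prop) (by fun_prop)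
      (fun x _ => by positivity)
  have h01 : (0:ℝ) ≤ 1 := zero_le_one
  have := intermediate_value_Icc h01 hc
  have hk : k ∈ Set.Icc ((fun r : ℝ => 2 * (2*r/(1+r^2))^2) 0)
      ((fun r : ℝ => 2 * (2*r/(1+r^2))^2) 1) := by
    constructor <;> norm_num [h0, h2]
  obtain ⟨r, _, hr⟩ := this hk
  exact ⟨r, hr⟩

/-- CAT(−1) comparison for two geodesic segments emanating from a common point. -/
lemma segment_comparison {X : Type*} [MetricSpace X] (hcat : IsCATMinusOne X)
    (x p q : X) (σ τ : ℝ → X) (hσ : IsGeodesicSegment σ x p) (hτ : IsGeodesicSegment τ x q)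
    (hp : 0 < dist x p) (hq : 0 < dist x q)
    {s t : ℝ} (hs : s ∈ Set.Icc 0 (dist x p)) (ht : t ∈ Set.Icc 0 (dist x q)) :
    Real.cosh (dist (σ s) (τ t)) ≤ Real.cosh (s - t) +
      ((Real.cosh (dist p q) - Real.cosh (dist x p - dist x q)) /
        (Real.sinh (dist x p) * Real.sinh (dist x q))) * (Real.sinh s * Real.sinh t) := by
  have hsinh1 : 0 < Real.sinh (dist x p) := Real.sinh_pos_iff.2 hp
  have hsinh2 : 0 < Real.sinh (dist x q) := Real.sinh_pos_iff.2 hq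
  have hdl : |dist x p - dist x q| ≤ dist p q := by
    have h1 := dist_triangle x q p
    have h2 := dist_triangle x p q
    have h3 : dist q p = dist p q := dist_comm q p
    rw [abs_le]; constructor <;> linarith
  have hdu : dist p q ≤ dist x p + dist x q := by
    have h1 := dist_triangle p x q
    have h2 : dist p x = dist x p := dist_comm p x
    linarith
  have hd0 : (0:ℝ) ≤ dist p q := dist_nonneg
  have hcoshsub : Real.cosh (dist x p - dist x q) ≤ Real.cosh (dist p q) := by
    rw [← Real.cosh_abs (dist p q)]
    apply Real.cosh_le_cosh.2
    rw [abs_abs, abs_of_nonneg hd0]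
    exact hdl
  have hk0 : 0 ≤ (Real.cosh (dist p q) - Real.cosh (dist x p - dist x q)) /
      (Real.sinh (dist x p) * Real.sinh (dist x q)) :=
    div_nonneg (by linarith) (by positivity)
  have hk2 : (Real.cosh (dist p q) - Real.cosh (dist x p - dist x q)) /
      (Real.sinh (dist x p) * Real.sinh (dist x q)) ≤ 2 := by
    rw [div_le_iff₀ (by positivity)]
    have hc : Real.cosh (dist p q) ≤ Real.cosh (dist x p + dist x q) := by
      rw [← Real.cosh_abs (dist p q)]
      apply Real.cosh_le_cosh.2
      rw [abs_abs, abs_of_nonneg hd0, abs_of_nonneg (by positivity)]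
      exact hdu
    have hadd : Real.cosh (dist x p + dist x q) = Real.cosh (dist x p - dist x q)
        + 2 * (Real.sinh (dist x p) * Real.sinh (dist x q)) := by
      rw [Real.cosh_add, Real.cosh_sub]; ring
    linarith
  obtain ⟨r, hr⟩ := exists_param hk0 hk2
  -- the comparison triangle in the hyperbolic plane
  have hxy' : dist (Ipt 0) (Ipt (dist x p)) = dist x p := by
    rw [dist_Ipt_Ipt, abs_of_nonpos (by linarith), neg_sub, sub_zero]
  have hxz' : dist (Ipt 0) (Wpt r (dist x q)) = dist x q := by
    rw [← Wpt_zero r, dist_Wpt_Wpt, abs_of_nonpos (by linarith), neg_sub, sub_zero]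
  have hyz' : dist (Ipt (dist x p)) (Wpt r (dist x q)) = dist p q := by
    apply dist_eq_of_cosh_eq dist_nonneg hd0
    rw [cosh_dist_Ipt_Wpt, hr]
    field_simp
    ring
  have hgeod1 : IsGeodesicSegment Ipt (Ipt 0) (Ipt (dist x p)) := by
    refine ⟨rfl, by rw [hxy'], fun a _ b _ => dist_Ipt_Ipt a b⟩
  have hgeod2 : IsGeodesicSegment (Wpt r) (Ipt 0) (Wpt r (dist x q)) := by
    refine ⟨Wpt_zero r, by rw [hxz'], fun a _ b _ => dist_Wpt_Wpt r a b⟩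
  have hcomp := hcat x p q σ τ hσ hτ (Ipt 0) (Ipt (dist x p)) (Wpt r (dist x q)) Ipt (Wpt r)
    hxy' hxz' hyz' hgeod1 hgeod2 s hs t ht
  calc Real.cosh (dist (σ s) (τ t)) ≤ Real.cosh (dist (Ipt s) (Wpt r t)) := by
        apply Real.cosh_le_cosh.2
        rw [abs_of_nonneg dist_nonneg, abs_of_nonneg dist_nonneg]
        exact hcomp
    _ = Real.cosh (s - t) + 2 * (2*r/(1+r^2))^2 * Real.sinh s * Real.sinh t := cosh_dist_Ipt_Wpt r s t
    _ ≤ _ := by rw [hr]; ring_nf; rfl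


/-! ### Rays -/

variable {X : Type u} [MetricSpace X]

lemma exists_line_through (hgeo : IsGeodesicSpace X) (hgc : IsGeodesicallyComplete X) (x p : X) :
    ∃ γ : ℝ → X, (∀ s t : ℝ, dist (γ s) (γ t) = |s - t|) ∧ γ 0 = x ∧ γ (dist x p) = p := by
  obtain ⟨σ, hσ⟩ := hgeo x p
  obtain ⟨γ', hiso, hagree⟩ := hgc x p σ hσ
  refine ⟨γ', hiso, ?_, ?_⟩
  · rw [hagree 0 ⟨le_refl 0, dist_nonneg⟩, hσ.1]
  · rw [hagree (dist x p) ⟨dist_nonneg, le_refl _⟩, hσ.2.1]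

lemma dist_of_based {σ : GeodesicRay X} {x : X} (h : σ.1 0 = x) {t : ℝ} (ht : 0 ≤ t) :
    dist (σ.1 t) x = t := by
  rw [← h, σ.2 t 0 ht le_rfl, sub_zero, abs_of_nonneg ht]

/-- the visual "metric" vanishes on the diagonal -/
lemma visual_self (x : X) (ρ : GromovBoundary X → GromovBoundary X → ℝ)
    (hρ : IsVisualMetric x ρ) (γ : GeodesicRay X) :
    ρ (Quot.mk _ γ) (Quot.mk _ γ) = 0 := by
  have h := hρ γ γ
  have h2 : Tendsto
      (fun t : ℝ =>
        Real.exp (-((dist (γ.1 t) x + dist (γ.1 t) x - dist (γ.1 t) (γ.1 t)) / 2)))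
      atTop (𝓝 0) := by
    apply squeeze_zero' (g := fun t => Real.exp (dist (γ.1 0) x - t))
    · exact Filter.Eventually.of_forall fun t => (Real.exp_pos _).le
    · filter_upwards [Filter.eventually_ge_atTop (0:ℝ)] with t ht
      rw [dist_self]
      apply Real.exp_le_exp.2
      have htri : dist (γ.1 t) (γ.1 0) ≤ dist (γ.1 t) x + dist x (γ.1 0) := dist_triangle _ _ _
      have hto : dist (γ.1 t) (γ.1 0) = t := by
        rw [γ.2 t 0 ht le_rfl, sub_zero, abs_of_nonneg ht]
      have : dist x (γ.1 0) = dist (γ.1 0) x := dist_comm _ _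
      linarith
    · have h3 : Tendsto (fun t : ℝ => dist (γ.1 0) x - t) atTop atBot :=
        tendsto_atBot_add_const_left _ _ tendsto_neg_atTop_atBot
      exact Real.tendsto_exp_atBot.comp h3
  exact tendsto_nhds_unique h h2

/-- the visual "metric" takes values in `[0,1]` -/
lemma visual_bounds (x : X) (ρ : GromovBoundary X → GromovBoundary X → ℝ)
    (hρ : IsVisualMetric x ρ) (ξ η : GromovBoundary X) :
    0 ≤ ρ ξ η ∧ ρ ξ η ≤ 1 := by
  induction ξ using Quot.ind with | _ γ₁ => ?_
  induction η using Quot.ind with | _ γ₂ => ?_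
  have h := hρ γ₁ γ₂
  constructor
  · exact ge_of_tendsto h (Filter.Eventually.of_forall fun t => (Real.exp_pos _).le)
  · apply le_of_tendsto h
    apply Filter.Eventually.of_forall
    intro t
    rw [show (1:ℝ) = Real.exp 0 by rw [Real.exp_zero]]
    apply Real.exp_le_exp.2
    have h1 := dist_triangle (γ₁.1 t) x (γ₂.1 t)
    have h2 : dist x (γ₂.1 t) = dist (γ₂.1 t) x := dist_comm _ _
    nlinarith [dist_nonneg (x := γ₁.1 t) (y := γ₂.1 t)]

lemma based_seg {σ : GeodesicRay X} {x : X} (h : σ.1 0 = x) {t : ℝ} (ht : 0 < t) :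
    IsGeodesicSegment σ.1 x (σ.1 t) := by
  have hd : dist x (σ.1 t) = t := by rw [dist_comm]; exact dist_of_based h ht.le
  refine ⟨h, by rw [hd], ?_⟩
  intro a ha b hb
  rw [hd] at ha hb
  exact σ.2 a b ha.1 hb.1

/-- Key quantitative estimate for the visual metric along based rays in a CAT(−1) space. -/
lemma visual_est (hcat : IsCATMinusOne X) (x : X)
    (ρ : GromovBoundary X → GromovBoundary X → ℝ) (hρ : IsVisualMetric x ρ)
    (σ₁ σ₂ : GeodesicRay X) (h1 : σ₁.1 0 = x) (h2 : σ₂.1 0 = x)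
    {T : ℝ} (hT : 0 < T) :
    Real.exp ((dist (σ₁.1 T) (σ₂.1 T) - 2*T)/2) * (1 - Real.exp (-(dist (σ₁.1 T) (σ₂.1 T))))
        ≤ ρ (Quot.mk _ σ₁) (Quot.mk _ σ₂) ∧
      ρ (Quot.mk _ σ₁) (Quot.mk _ σ₂) ≤ Real.exp ((dist (σ₁.1 T) (σ₂.1 T) - 2*T)/2) := by
  have hd0 : (0:ℝ) ≤ dist (σ₁.1 T) (σ₂.1 T) := dist_nonneg
  -- the function `q`
  have htq : Tendsto (fun t : ℝ => Real.exp ((dist (σ₁.1 t) (σ₂.1 t) - 2*t)/2)) atTop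
      (𝓝 (ρ (Quot.mk _ σ₁) (Quot.mk _ σ₂))) := by
    apply Tendsto.congr' _ (hρ σ₁ σ₂)
    filter_upwards [Filter.eventually_ge_atTop (0:ℝ)] with t ht
    rw [dist_of_based h1 ht, dist_of_based h2 ht]
    congr 1
    ring
  have hρv0 : 0 ≤ ρ (Quot.mk _ σ₁) (Quot.mk _ σ₂) :=
    ge_of_tendsto htq (Filter.Eventually.of_forall fun t => (Real.exp_pos _).le)
  -- upper bound: `q` is non-increasing
  have hupper : ρ (Quot.mk _ σ₁) (Quot.mk _ σ₂)
      ≤ Real.exp ((dist (σ₁.1 T) (σ₂.1 T) - 2*T)/2) := by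
    apply le_of_tendsto htq
    filter_upwards [Filter.eventually_ge_atTop T] with t ht
    apply Real.exp_le_exp.2
    have d1 : dist (σ₁.1 t) (σ₁.1 T) = t - T := by
      rw [σ₁.2 t T (hT.le.trans ht) hT.le, abs_of_nonneg (by linarith)]
    have d2 : dist (σ₂.1 T) (σ₂.1 t) = t - T := by
      rw [σ₂.2 T t hT.le (hT.le.trans ht), abs_of_nonpos (by linarith), neg_sub]
    have htri := dist_triangle4 (σ₁.1 t) (σ₁.1 T) (σ₂.1 T) (σ₂.1 t)
    rw [d1, d2] at htri
    linarith
  -- monotonicity of the comparison quantity φ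
  have hφ : ∀ t : ℝ, T ≤ t →
      (Real.cosh (dist (σ₁.1 T) (σ₂.1 T)) - 1) * (Real.sinh t * Real.sinh t)
        ≤ (Real.cosh (dist (σ₁.1 t) (σ₂.1 t)) - 1) * (Real.sinh T * Real.sinh T) := by
    intro t ht
    have htpos : 0 < t := hT.trans_le ht
    have e1 : dist x (σ₁.1 t) = t := by rw [dist_comm]; exact dist_of_based h1 htpos.le
    have e2 : dist x (σ₂.1 t) = t := by rw [dist_comm]; exact dist_of_based h2 htpos.le
    have hmem1 : T ∈ Set.Icc (0:ℝ) (dist x (σ₁.1 t)) := by rw [e1]; exact ⟨hT.le, ht⟩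
    have hmem2 : T ∈ Set.Icc (0:ℝ) (dist x (σ₂.1 t)) := by rw [e2]; exact ⟨hT.le, ht⟩
    have hcomp := segment_comparison hcat x (σ₁.1 t) (σ₂.1 t) σ₁.1 σ₂.1
      (based_seg h1 htpos) (based_seg h2 htpos) (by rw [e1]; exact htpos)
      (by rw [e2]; exact htpos) hmem1 hmem2
    rw [e1, e2, sub_self, Real.cosh_zero, sub_self, Real.cosh_zero] at hcomp
    have hsinht : 0 < Real.sinh t := Real.sinh_pos_iff.2 htpos
    have h' : Real.cosh (dist (σ₁.1 T) (σ₂.1 T)) - 1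
        ≤ (Real.cosh (dist (σ₁.1 t) (σ₂.1 t)) - 1) * (Real.sinh T * Real.sinh T)
          / (Real.sinh t * Real.sinh t) := by
      have halt : (Real.cosh (dist (σ₁.1 t) (σ₂.1 t)) - 1) /
          (Real.sinh t * Real.sinh t) * (Real.sinh T * Real.sinh T)
          = (Real.cosh (dist (σ₁.1 t) (σ₂.1 t)) - 1) * (Real.sinh T * Real.sinh T)
          / (Real.sinh t * Real.sinh t) := by ring
      rw [← halt]
      linarith
    exact (le_div_iff₀ (by positivity)).1 h' 
  -- lower bound
  have hlower : Real.exp ((dist (σ₁.1 T) (σ₂.1 T) - 2*T)/2)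
      * (1 - Real.exp (-(dist (σ₁.1 T) (σ₂.1 T)))) ≤ ρ (Quot.mk _ σ₁) (Quot.mk _ σ₂) := by
    have hsinhT : 0 < Real.sinh T := Real.sinh_pos_iff.2 hT
    set C : ℝ := (Real.cosh (dist (σ₁.1 T) (σ₂.1 T)) - 1) / (Real.sinh T * Real.sinh T) with hC
    have hC0 : 0 ≤ C := by
      apply div_nonneg _ (by positivity)
      have := Real.one_le_cosh (dist (σ₁.1 T) (σ₂.1 T))
      linarith
    -- limit of the minorant
    have hmin : Tendsto (fun t : ℝ => 2 * C * ((1 - Real.exp (-(2*t)))/2)^2) atTop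
        (𝓝 (2 * C * ((1 - 0)/2)^2)) := by
      apply Tendsto.mul tendsto_const_nhds
      apply Tendsto.pow
      apply Tendsto.div_const
      apply Tendsto.const_sub
      exact Real.tendsto_exp_atBot.comp
        (tendsto_neg_atTop_atBot.comp (tendsto_id.const_mul_atTop two_pos))
    have hsq : Tendsto (fun t : ℝ => Real.exp ((dist (σ₁.1 t) (σ₂.1 t) - 2*t)/2) ^ 2) atTop
        (𝓝 (ρ (Quot.mk _ σ₁) (Quot.mk _ σ₂) ^ 2)) := htq.pow 2
    -- pointwise inequality
    have hpt : ∀ t : ℝ, T ≤ t →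
        2 * C * ((1 - Real.exp (-(2*t)))/2)^2
          ≤ Real.exp ((dist (σ₁.1 t) (σ₂.1 t) - 2*t)/2) ^ 2 := by
      intro t ht
      have htpos : 0 < t := hT.trans_le ht
      have hdt0 : (0:ℝ) ≤ dist (σ₁.1 t) (σ₂.1 t) := dist_nonneg
      have hsq2 : Real.exp ((dist (σ₁.1 t) (σ₂.1 t) - 2*t)/2) ^ 2
          = Real.exp (dist (σ₁.1 t) (σ₂.1 t)) * Real.exp (-(2*t)) := by
        rw [sq, ← Real.exp_add, ← Real.exp_add]
        congr 1
        ring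
      have hcosh : 2 * Real.cosh (dist (σ₁.1 t) (σ₂.1 t)) - 2
          ≤ Real.exp (dist (σ₁.1 t) (σ₂.1 t)) := by
        rw [Real.cosh_eq]
        have : Real.exp (-(dist (σ₁.1 t) (σ₂.1 t))) ≤ 1 := Real.exp_le_one_iff.2 (by linarith)
        linarith
      have hφt := hφ t ht
      have hsinht : 0 < Real.sinh t := Real.sinh_pos_iff.2 htpos
      have h0 : Real.exp t * Real.exp (-t) = 1 := by rw [← Real.exp_add]; simp
      have hsinh_sq : Real.sinh t * Real.exp (-t) = (1 - Real.exp (-(2*t)))/2 := by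
        rw [Real.sinh_eq, show -(2*t) = -t + -t by ring, Real.exp_add]
        linear_combination (1/2 : ℝ) * h0
      -- φ(T) ≤ φ(t) means cosh d_t − 1 ≥ C sinh t²
      have hkey : C * (Real.sinh t * Real.sinh t) ≤ Real.cosh (dist (σ₁.1 t) (σ₂.1 t)) - 1 := by
        rw [hC, div_mul_eq_mul_div, div_le_iff₀ (by positivity)]
        nlinarith [hφt]
      calc 2 * C * ((1 - Real.exp (-(2*t)))/2)^2
          = 2 * C * (Real.sinh t * Real.exp (-t))^2 := by rw [hsinh_sq]
        _ = (2 * (C * (Real.sinh t * Real.sinh t))) * (Real.exp (-t) * Real.exp (-t)) := by ring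
        _ ≤ (2 * (Real.cosh (dist (σ₁.1 t) (σ₂.1 t)) - 1)) * (Real.exp (-t) * Real.exp (-t)) := by
            apply mul_le_mul_of_nonneg_right _ (by positivity)
            linarith
        _ = (2 * Real.cosh (dist (σ₁.1 t) (σ₂.1 t)) - 2) * Real.exp (-(2*t)) := by
            rw [show -(2*t) = -t + -t by ring, Real.exp_add]
            ring
        _ ≤ Real.exp (dist (σ₁.1 t) (σ₂.1 t)) * Real.exp (-(2*t)) := by
            apply mul_le_mul_of_nonneg_right hcosh (Real.exp_pos _).le
        _ = Real.exp ((dist (σ₁.1 t) (σ₂.1 t) - 2*t)/2) ^ 2 := hsq2.symm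
    have hliminf : 2 * C * ((1 - 0)/2)^2 ≤ ρ (Quot.mk _ σ₁) (Quot.mk _ σ₂) ^ 2 := by
      apply le_of_tendsto_of_tendsto hmin hsq
      filter_upwards [Filter.eventually_ge_atTop T] with t ht
      exact hpt t ht
    -- abbreviations
    set d := dist (σ₁.1 T) (σ₂.1 T) with hdd
    set qT := Real.exp ((d - 2*T)/2) with hqT
    have h0d : Real.exp d * Real.exp (-d) = 1 := by rw [← Real.exp_add]; simp
    have h0T : Real.exp T * Real.exp (-T) = 1 := by rw [← Real.exp_add]; simp
    have hid1 : Real.cosh d - 1 = Real.exp d * (1 - Real.exp (-d))^2 / 2 := by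
      rw [Real.cosh_eq]
      linear_combination ((2 - Real.exp (-d))/2) * h0d
    have hid2 : Real.sinh T * Real.sinh T
        = Real.exp T * Real.exp T * (1 - Real.exp (-(2*T)))^2/4 := by
      rw [Real.sinh_eq, show -(2*T) = -T + -T by ring, Real.exp_add]
      linear_combination ((Real.exp (-T) * (2*Real.exp T - Real.exp (-T)
        - Real.exp T * Real.exp (-T) * Real.exp (-T))) / 4) * h0T
    have hqT2 : qT^2 * (Real.exp T * Real.exp T) = Real.exp d := by
      have hmul : ∀ a b : ℝ, Real.exp a * Real.exp b = Real.exp (a+b) :=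
        fun a b => (Real.exp_add a b).symm
      rw [hqT, sq, hmul, hmul, hmul]
      congr 1
      ring
    have hg1 : (1 - Real.exp (-(2*T)))^2 ≤ 1 := by
      have hp1 : Real.exp (-(2*T)) < 1 := by
        rw [Real.exp_lt_one_iff]
        linarith
      have hp2 : 0 < Real.exp (-(2*T)) := Real.exp_pos _
      nlinarith
    have hclaim : (qT * (1 - Real.exp (-d)))^2 ≤ C/2 := by
      rw [hC, div_div, le_div_iff₀ (by positivity)]
      rw [hid1, hid2, ← hqT2]
      have hK : (0:ℝ) ≤ qT^2 * (Real.exp T * Real.exp T) * (1 - Real.exp (-d))^2 := by positivity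
      have hkey : qT^2 * (Real.exp T * Real.exp T) * (1 - Real.exp (-d))^2
            * (1 - Real.exp (-(2*T)))^2
          ≤ qT^2 * (Real.exp T * Real.exp T) * (1 - Real.exp (-d))^2 * 1 :=
        mul_le_mul_of_nonneg_left hg1 hK
      nlinarith [hkey]
    have hsq_ineq : (qT * (1 - Real.exp (-d)))^2
        ≤ ρ (Quot.mk _ σ₁) (Quot.mk _ σ₂) ^ 2 := by
      have : 2 * C * ((1 - 0 : ℝ)/2)^2 = C/2 := by ring
      rw [this] at hliminf
      linarith
    have hxnn : 0 ≤ qT * (1 - Real.exp (-d)) := by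
      apply mul_nonneg (Real.exp_pos _).le
      have : Real.exp (-d) ≤ 1 := Real.exp_le_one_iff.2 (by linarith)
      linarith
    have := Real.sqrt_le_sqrt hsq_ineq
    rwa [Real.sqrt_sq hxnn, Real.sqrt_sq hρv0] at this
  exact ⟨hlower, hupper⟩


/-- |ρ(ξ,η) − exp((d_T − 2T)/2)| ≤ exp(−T) for based rays. -/
lemma visual_est_abs (hcat : IsCATMinusOne X) (x : X)
    (ρ : GromovBoundary X → GromovBoundary X → ℝ) (hρ : IsVisualMetric x ρ)
    (σ₁ σ₂ : GeodesicRay X) (h1 : σ₁.1 0 = x) (h2 : σ₂.1 0 = x)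
    {T : ℝ} (hT : 0 < T) :
    |ρ (Quot.mk _ σ₁) (Quot.mk _ σ₂) - Real.exp ((dist (σ₁.1 T) (σ₂.1 T) - 2*T)/2)|
      ≤ Real.exp (-T) := by
  obtain ⟨hlow, hup⟩ := visual_est hcat x ρ hρ σ₁ σ₂ h1 h2 hT
  have hd0 : (0:ℝ) ≤ dist (σ₁.1 T) (σ₂.1 T) := dist_nonneg
  rw [abs_le]
  constructor
  · have key : Real.exp ((dist (σ₁.1 T) (σ₂.1 T) - 2*T)/2)
        * Real.exp (-(dist (σ₁.1 T) (σ₂.1 T))) ≤ Real.exp (-T) := by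
      rw [← Real.exp_add]
      apply Real.exp_le_exp.2
      linarith
    nlinarith [hlow]
  · linarith [Real.exp_pos (-T)]

/-- Based rays in the same boundary class agree (CAT(−1) uniqueness). -/
lemma based_rays_eq (hcat : IsCATMinusOne X) (x : X)
    (ρ : GromovBoundary X → GromovBoundary X → ℝ) (hρ : IsVisualMetric x ρ)
    (σ₁ σ₂ : GeodesicRay X) (h1 : σ₁.1 0 = x) (h2 : σ₂.1 0 = x)
    (hcl : Quot.mk AsymptoticRays σ₁ = Quot.mk AsymptoticRays σ₂)
    {T : ℝ} (hT : 0 < T) : σ₁.1 T = σ₂.1 T := by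
  obtain ⟨hlow, _⟩ := visual_est hcat x ρ hρ σ₁ σ₂ h1 h2 hT
  rw [hcl, visual_self x ρ hρ σ₂] at hlow
  have hqpos : 0 < Real.exp ((dist (σ₁.1 T) (σ₂.1 T) - 2*T)/2) := Real.exp_pos _
  have h5 : 1 - Real.exp (-(dist (σ₁.1 T) (σ₂.1 T))) ≤ 0 := by nlinarith
  have h6 : (1:ℝ) ≤ Real.exp (-(dist (σ₁.1 T) (σ₂.1 T))) := by linarith
  have h7 : (0:ℝ) ≤ -(dist (σ₁.1 T) (σ₂.1 T)) := by
    by_contra hcon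
    push_neg at hcon
    have := Real.exp_lt_one_iff.2 hcon
    linarith
  have : dist (σ₁.1 T) (σ₂.1 T) = 0 := le_antisymm (by linarith) dist_nonneg
  exact dist_eq_zero.1 this

/-- `AsymptoticRays` is an equivalence relation. -/
lemma asymptotic_equivalence : Equivalence (AsymptoticRays (X := X)) := by
  constructor
  · intro γ
    exact ⟨0, fun t ht => by simp⟩
  · rintro γ₁ γ₂ ⟨C, hC⟩
    exact ⟨C, fun t ht => by rw [dist_comm]; exact hC t ht⟩
  · rintro γ₁ γ₂ γ₃ ⟨C, hC⟩ ⟨C', hC'⟩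
    exact ⟨C + C', fun t ht =>
      (dist_triangle _ (γ₂.1 t) _).trans (add_le_add (hC t ht) (hC' t ht))⟩

lemma asymptotic_of_mk_eq {γ₁ γ₂ : GeodesicRay X}
    (h : Quot.mk AsymptoticRays γ₁ = Quot.mk AsymptoticRays γ₂) : AsymptoticRays γ₁ γ₂ :=
  (asymptotic_equivalence.eqvGen_iff).1 (Quot.eq.1 h)

/-- Existence of a based representative ray for every boundary point. -/
lemma exists_based_rep [ProperSpace X] (hgeo : IsGeodesicSpace X)
    (hgc : IsGeodesicallyComplete X) (hcat : IsCATMinusOne X) (x : X) (γ : GeodesicRay X) :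
    ∃ σ : GeodesicRay X, σ.1 0 = x ∧ Quot.mk AsymptoticRays σ = Quot.mk AsymptoticRays γ := by
  -- lines through `γ k` based at `x`
  have hS : ∀ k : ℕ, ∃ g : ℝ → X, (∀ s t : ℝ, dist (g s) (g t) = |s - t|) ∧ g 0 = x ∧
      g (dist x (γ.1 k)) = γ.1 k := fun k => exists_line_through hgeo hgc x (γ.1 k)
  choose S hS1 hS2 hS3 using hS
  -- an ultrafilter extending `atTop`
  letI U : Ultrafilter ℕ := Ultrafilter.of Filter.atTop
  have hU : (U : Filter ℕ) ≤ Filter.atTop := Ultrafilter.of_le _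
  -- pointwise ultralimit
  have hlim : ∀ t : ℝ, ∃ z : X, Filter.Tendsto (fun k => S k t) (U : Filter ℕ) (𝓝 z) := by
    intro t
    have hmem : ∀ k, S k t ∈ Metric.closedBall x |t| := by
      intro k
      rw [Metric.mem_closedBall, ← hS2 k, hS1 k t 0, sub_zero]
    obtain ⟨z, _, hz⟩ := (isCompact_closedBall x |t|).ultrafilter_le_nhds
      (U.map (fun k => S k t)) (by
        rw [Ultrafilter.coe_map]
        exact Filter.le_principal_iff.2 (Filter.mem_map.2 (Filter.univ_mem' hmem)))
    exact ⟨z, hz⟩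
  choose σ hσ using hlim
  have hiso : ∀ s t : ℝ, dist (σ s) (σ t) = |s - t| := by
    intro s t
    have h1 : Filter.Tendsto (fun k => dist (S k s) (S k t)) (U : Filter ℕ)
        (𝓝 (dist (σ s) (σ t))) := (hσ s).dist (hσ t)
    have h2 : (fun k => dist (S k s) (S k t)) = fun _ => |s - t| := by
      funext k
      exact hS1 k s t
    rw [h2] at h1
    exact tendsto_nhds_unique h1 tendsto_const_nhds
  have hbase : σ 0 = x := by
    have h1 : Filter.Tendsto (fun k => S k 0) (U : Filter ℕ) (𝓝 (σ 0)) := hσ 0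
    have h2 : (fun k => S k 0) = fun _ => x := funext fun k => hS2 k
    rw [h2] at h1
    exact tendsto_nhds_unique h1 tendsto_const_nhds
  -- the asymptotic bound
  have hasym : ∀ t : ℝ, 0 ≤ t → dist (σ t) (γ.1 t)
      ≤ dist (γ.1 0) x + Real.log 4 := by
    intro t ht
    have hb0 : (0:ℝ) ≤ dist (γ.1 0) x := dist_nonneg
    have hev : ∀ k : ℕ, t + dist (γ.1 0) x + 1 ≤ (k:ℝ) →
        dist (S k t) (γ.1 t) ≤ dist (γ.1 0) x + Real.log 4 := by
      intro k hk
      set b := dist (γ.1 0) x with hbdef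
      set L := dist x (γ.1 k) with hLdef
      have hkr : (0:ℝ) ≤ (k:ℝ) := le_trans (by linarith) hk
      have hdk : dist (γ.1 k) (γ.1 0) = (k:ℝ) := by
        rw [γ.2 k 0 hkr le_rfl, sub_zero, abs_of_nonneg hkr]
      have c1 : dist (γ.1 k) x = L := by rw [hLdef, dist_comm]
      have c2 : dist x (γ.1 0) = b := by rw [hbdef, dist_comm]
      have c3 : dist (γ.1 0) (γ.1 k) = (k:ℝ) := by rw [dist_comm, hdk]
      have hL1 : (k:ℝ) - b ≤ L := by
        have t1 := dist_triangle (γ.1 k) x (γ.1 0)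
        rw [hdk, c1, c2] at t1
        linarith
      have hL2 : L ≤ (k:ℝ) + b := by
        have t2 := dist_triangle x (γ.1 0) (γ.1 k)
        rw [c2, c3, ← hLdef] at t2
        linarith
      have htk : t ≤ (k:ℝ) := by linarith
      have htL : t ≤ L := by linarith
      have hkpos : (0:ℝ) < k := by linarith
      have hLpos : (0:ℝ) < L := by linarith
      -- two geodesic segments based at γ k
      have hsegA : IsGeodesicSegment (fun s => γ.1 ((k:ℝ) - s)) (γ.1 k) (γ.1 0) := by
        refine ⟨?_, ?_, ?_⟩
        · show γ.1 ((k:ℝ) - 0) = γ.1 (k:ℝ)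
          rw [sub_zero]
        · show γ.1 ((k:ℝ) - dist (γ.1 k) (γ.1 0)) = γ.1 0
          rw [hdk, sub_self]
        · intro a ha b hb
          rw [hdk] at ha hb
          show dist (γ.1 ((k:ℝ) - a)) (γ.1 ((k:ℝ) - b)) = |a - b|
          rw [γ.2 _ _ (by linarith [ha.2]) (by linarith [hb.2])]
          rw [show (k:ℝ) - a - ((k:ℝ) - b) = b - a by ring, abs_sub_comm]
      have hsegB : IsGeodesicSegment (fun s => S k (L - s)) (γ.1 k) x := by
        have hdxk : dist (γ.1 k) x = L := by rw [hLdef, dist_comm]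
        refine ⟨?_, ?_, ?_⟩
        · show S k (L - 0) = γ.1 (k:ℝ)
          rw [sub_zero, hLdef]
          exact hS3 k
        · show S k (L - dist (γ.1 k) x) = x
          rw [hdxk, sub_self]
          exact hS2 k
        · intro a _ b _
          show dist (S k (L - a)) (S k (L - b)) = |a - b|
          rw [hS1 k]
          rw [show L - a - (L - b) = b - a by ring, abs_sub_comm]
      have hdist1 : dist (γ.1 k) (γ.1 0) = (k:ℝ) := hdk
      have hdist2 : dist (γ.1 k) x = L := by rw [hLdef, dist_comm]
      have hmem1 : (k:ℝ) - t ∈ Set.Icc (0:ℝ) (dist (γ.1 k) (γ.1 0)) := by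
        rw [hdist1]; exact ⟨by linarith, by linarith⟩
      have hmem2 : L - t ∈ Set.Icc (0:ℝ) (dist (γ.1 k) x) := by
        rw [hdist2]; exact ⟨by linarith, by linarith⟩
      have hcomp := segment_comparison hcat (γ.1 k) (γ.1 0) x
        (fun s => γ.1 ((k:ℝ) - s)) (fun s => S k (L - s)) hsegA hsegB
        (by rw [hdist1]; exact hkpos) (by rw [hdist2]; exact hLpos) hmem1 hmem2
      simp only [sub_sub_cancel] at hcomp
      rw [hdist1, hdist2] at hcomp
      -- bound the comparison value
      have hcosh_kl : Real.cosh ((k:ℝ) - L) ≤ Real.cosh b := by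
        rw [← Real.cosh_abs b]
        apply Real.cosh_le_cosh.2
        rw [abs_abs]
        rw [abs_le]
        constructor
        · have : -(|b|) ≤ -b := by simp [neg_le_neg_iff, le_abs_self]
          have hb' : b ≤ |b| := le_abs_self b
          have : (k:ℝ) - L ≥ -b := by linarith
          linarith [neg_abs_le b]
        · have hb' : b ≤ |b| := le_abs_self b
          linarith
      have hsinh_mono1 : Real.sinh ((k:ℝ) - t) ≤ Real.sinh (k:ℝ) :=
        Real.sinh_le_sinh.2 (by linarith)
      have hsinh_mono2 : Real.sinh (L - t) ≤ Real.sinh L :=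
        Real.sinh_le_sinh.2 (by linarith)
      have hsinh_nn1 : 0 ≤ Real.sinh ((k:ℝ) - t) := Real.sinh_nonneg_iff.2 (by linarith)
      have hsinh_nn2 : 0 ≤ Real.sinh (L - t) := Real.sinh_nonneg_iff.2 (by linarith)
      have hsinh_posk : 0 < Real.sinh (k:ℝ) := Real.sinh_pos_iff.2 hkpos
      have hsinh_posL : 0 < Real.sinh L := Real.sinh_pos_iff.2 hLpos
      have hcosh1 : 1 ≤ Real.cosh b := Real.one_le_cosh b
      have hbound : Real.cosh (dist (γ.1 t) (S k t)) ≤ 2 * Real.cosh b := by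
        rcases le_or_gt ((Real.cosh (dist (γ.1 0) x) - Real.cosh ((k:ℝ) - L)) /
            (Real.sinh (k:ℝ) * Real.sinh L)) 0 with hneg | hpos
        · have hterm : (Real.cosh (dist (γ.1 0) x) - Real.cosh ((k:ℝ) - L)) /
              (Real.sinh (k:ℝ) * Real.sinh L) * (Real.sinh ((k:ℝ) - t) * Real.sinh (L - t))
              ≤ 0 := mul_nonpos_of_nonpos_of_nonneg hneg (by positivity)
          calc Real.cosh (dist (γ.1 t) (S k t)) ≤ _ := hcomp
            _ ≤ Real.cosh ((k:ℝ) - t - (L - t)) := by linarith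
            _ = Real.cosh ((k:ℝ) - L) := by ring_nf
            _ ≤ Real.cosh b := hcosh_kl
            _ ≤ 2 * Real.cosh b := by linarith
        · have hprod : Real.sinh ((k:ℝ) - t) * Real.sinh (L - t)
              ≤ Real.sinh (k:ℝ) * Real.sinh L := by
            apply mul_le_mul hsinh_mono1 hsinh_mono2 hsinh_nn2 hsinh_posk.le
          have hterm : (Real.cosh (dist (γ.1 0) x) - Real.cosh ((k:ℝ) - L)) /
              (Real.sinh (k:ℝ) * Real.sinh L) * (Real.sinh ((k:ℝ) - t) * Real.sinh (L - t))
              ≤ (Real.cosh (dist (γ.1 0) x) - Real.cosh ((k:ℝ) - L)) := by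
            rw [div_mul_eq_mul_div, div_le_iff₀ (by positivity)]
            have hnum : 0 ≤ Real.cosh (dist (γ.1 0) x) - Real.cosh ((k:ℝ) - L) := by
              have := (div_pos_iff.1 hpos)
              rcases this with ⟨h1, _⟩ | ⟨_, h2⟩
              · linarith
              · nlinarith [mul_pos hsinh_posk hsinh_posL]
            calc (Real.cosh (dist (γ.1 0) x) - Real.cosh ((k:ℝ) - L))
                  * (Real.sinh ((k:ℝ) - t) * Real.sinh (L - t))
                ≤ (Real.cosh (dist (γ.1 0) x) - Real.cosh ((k:ℝ) - L))
                  * (Real.sinh (k:ℝ) * Real.sinh L) := by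
                  exact mul_le_mul_of_nonneg_left hprod hnum
              _ = _ := by ring
          have hcomp2 : Real.cosh (dist (γ.1 t) (S k t))
              ≤ Real.cosh ((k:ℝ) - L) + (Real.cosh (dist (γ.1 0) x)
                - Real.cosh ((k:ℝ) - L)) := by
            have heq : Real.cosh ((k:ℝ) - t - (L - t)) = Real.cosh ((k:ℝ) - L) := by ring_nf
            linarith [hcomp, heq ▸ hcomp]
          have : Real.cosh (dist (γ.1 t) (S k t)) ≤ Real.cosh (dist (γ.1 0) x) := by linarith
          rw [hbdef]
          linarith
      -- convert the cosh bound to a distance bound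
      have hexp : Real.exp (dist (γ.1 t) (S k t)) ≤ 4 * Real.exp b := by
        have h1 : Real.exp (dist (γ.1 t) (S k t)) ≤ 2 * Real.cosh (dist (γ.1 t) (S k t)) := by
          rw [Real.cosh_eq]
          have := (Real.exp_pos (-(dist (γ.1 t) (S k t)))).le
          linarith
        have h2 : Real.cosh b ≤ Real.exp b := by
          rw [Real.cosh_eq]
          have : Real.exp (-b) ≤ Real.exp b := Real.exp_le_exp.2 (by linarith)
          linarith
        linarith
      have hlog : dist (γ.1 t) (S k t) ≤ b + Real.log 4 := by
        have h4 : (0:ℝ) < 4 := by norm_num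
        have := Real.exp_le_exp.1 (hexp.trans_eq (by
          rw [← Real.exp_log h4, ← Real.exp_add]))
        linarith
      rw [dist_comm]
      exact hlog
    -- pass to the ultralimit
    have h1 : Filter.Tendsto (fun k => dist (S k t) (γ.1 t)) (U : Filter ℕ)
        (𝓝 (dist (σ t) (γ.1 t))) := (hσ t).dist tendsto_const_nhds
    apply le_of_tendsto h1
    apply hU
    filter_upwards [Filter.eventually_ge_atTop (⌈t + dist (γ.1 0) x + 1⌉₊)] with k hk
    exact hev k (le_trans (Nat.le_ceil _) (by exact_mod_cast hk))
  refine ⟨⟨σ, fun s t _ _ => hiso s t⟩, hbase, Quot.sound ⟨dist (γ.1 0) x + Real.log 4, hasym⟩⟩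


/-- distance perturbation -/
lemma dist_sub_dist_le' {a b a' b' : X} : |dist a b - dist a' b'| ≤ dist a a' + dist b b' := by
  have := dist_dist_dist_le a b a' b'
  rwa [Real.dist_eq] at this

/-- Lipschitz bound for `exp` on the nonpositive half-line. -/
lemma exp_diff_le {u v : ℝ} (hu : u ≤ 0) (hv : v ≤ 0) :
    |Real.exp u - Real.exp v| ≤ |u - v| := by
  have key : ∀ w z : ℝ, w ≤ 0 → z ≤ 0 → z ≤ w → Real.exp w - Real.exp z ≤ w - z := by
    intro w z hw hz hzw
    have hsplit : Real.exp z = Real.exp w * Real.exp (z - w) := by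
      rw [← Real.exp_add]
      congr 1
      ring
    have h1 : z - w + 1 ≤ Real.exp (z - w) := Real.add_one_le_exp _
    have h2 : 0 < Real.exp w := Real.exp_pos w
    have h3 : Real.exp w ≤ 1 := Real.exp_le_one_iff.2 hw
    nlinarith
  rcases le_total v u with h | h
  · rw [abs_of_nonneg (by nlinarith [Real.exp_le_exp.2 h]), abs_of_nonneg (by linarith)]
    exact key u v hu hv h
  · rw [abs_of_nonpos (by nlinarith [Real.exp_le_exp.2 h]), abs_of_nonpos (by linarith)]
    have := key v u hv hu h
    linarith


/-- Main step: for every `ε > 0`, eventually there are `ε`-isometries between boundaries. -/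
lemma eps_isometry_exists
    {X : ℕ → Type u} [∀ n, MetricSpace (X n)] [∀ n, ProperSpace (X n)]
    (hgeo : ∀ n, IsGeodesicSpace (X n)) (hgc : ∀ n, IsGeodesicallyComplete (X n))
    (hcat : ∀ n, IsCATMinusOne (X n)) (x : ∀ n, X n)
    {Y : Type u} [MetricSpace Y] [ProperSpace Y]
    (hgeoY : IsGeodesicSpace Y) (hgcY : IsGeodesicallyComplete Y) (hcatY : IsCATMinusOne Y)
    (y : Y) (hGH : PointedGHConverges X x Y y)
    (ρ : ∀ n, GromovBoundary (X n) → GromovBoundary (X n) → ℝ)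
    (hρ : ∀ n, IsVisualMetric (x n) (ρ n))
    (ρ₀ : GromovBoundary Y → GromovBoundary Y → ℝ) (hρ₀ : IsVisualMetric y ρ₀)
    {ε : ℝ} (hε : 0 < ε) :
    ∃ N : ℕ, ∀ n, N ≤ n → ∃ f : GromovBoundary (X n) → GromovBoundary Y,
      IsEpsIsometry (ρ n) ρ₀ ε f := by
  classical
  set T : ℝ := max 1 (Real.log (4/ε)) with hTdef
  have hT1 : (1:ℝ) ≤ T := le_max_left _ _
  have hTpos : (0:ℝ) < T := by linarith
  have hexpT : Real.exp (-T) ≤ ε/4 := by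
    have h1 : Real.log (4/ε) ≤ T := le_max_right _ _
    have h2 : Real.exp (-T) ≤ Real.exp (-(Real.log (4/ε))) := Real.exp_le_exp.2 (by linarith)
    have h3 : Real.exp (-(Real.log (4/ε))) = ε/4 := by
      rw [Real.exp_neg, Real.exp_log (by positivity), inv_div]
    linarith
  set δ : ℝ := min (1/100) (ε/200) with hδdef
  have hδpos : 0 < δ := lt_min (by norm_num) (by positivity)
  have hδ1 : δ ≤ 1/100 := min_le_left _ _
  have hδ2 : δ ≤ ε/200 := min_le_right _ _
  set R : ℝ := T + 1 with hRdef
  have hRpos : (0:ℝ) < R := by linarith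
  obtain ⟨N, hN⟩ := hGH R hRpos δ hδpos
  refine ⟨N, fun n hn => ?_⟩
  obtain ⟨F, hFbase, hFdist, hFnet⟩ := hN n hn
  -- based representatives in `X n`
  have hRepE : ∀ ξ : GromovBoundary (X n), ∃ σ : GeodesicRay (X n),
      σ.1 0 = x n ∧ Quot.mk AsymptoticRays σ = ξ := by
    intro ξ
    induction ξ using Quot.ind with
    | _ γ => exact exists_based_rep (hgeo n) (hgc n) (hcat n) (x n) γ
  choose Rep hRep0 hRepmk using hRepE
  -- based rays through points of `Y`
  have hRayE : ∀ p : Y, ∃ τ : GeodesicRay Y, τ.1 0 = y ∧ τ.1 (dist y p) = p := by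
    intro p
    obtain ⟨g, hg, h0, hp⟩ := exists_line_through hgeoY hgcY y p
    exact ⟨⟨g, fun s t _ _ => hg s t⟩, h0, hp⟩
  choose RayY hRayY0 hRayYpt using hRayE
  have hmemT : ∀ ξ : GromovBoundary (X n), (Rep ξ).1 T ∈ Metric.closedBall (x n) R := by
    intro ξ
    rw [Metric.mem_closedBall, dist_of_based (hRep0 ξ) hTpos.le]
    linarith
  -- the boundary map
  set pt : GromovBoundary (X n) → Y := fun ξ => (F ⟨(Rep ξ).1 T, hmemT ξ⟩ : Y) with hptdef
  set f : GromovBoundary (X n) → GromovBoundary Y :=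
    fun ξ => Quot.mk AsymptoticRays (RayY (pt ξ)) with hfdef
  -- useful facts
  have hbase' : (F ⟨x n, Metric.mem_closedBall_self hRpos.le⟩ : Y) = y := hFbase
  have K1 : ∀ ξ, |dist (pt ξ) y - T| < δ := by
    intro ξ
    have h := hFdist ⟨(Rep ξ).1 T, hmemT ξ⟩ ⟨x n, Metric.mem_closedBall_self hRpos.le⟩
    rw [hbase'] at h
    rwa [dist_of_based (hRep0 ξ) hTpos.le] at h
  have K2 : ∀ ξ, dist ((RayY (pt ξ)).1 T) (pt ξ) < δ := by
    intro ξ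
    have h1 : dist ((RayY (pt ξ)).1 T) ((RayY (pt ξ)).1 (dist y (pt ξ)))
        = |T - dist y (pt ξ)| := (RayY (pt ξ)).2 T (dist y (pt ξ)) hTpos.le dist_nonneg
    rw [hRayYpt (pt ξ)] at h1
    rw [h1, abs_sub_comm, dist_comm y (pt ξ)]
    exact K1 ξ
  have hT2X : ∀ ξ η, dist ((Rep ξ).1 T) ((Rep η).1 T) ≤ 2*T := by
    intro ξ η
    have h1 := dist_triangle ((Rep ξ).1 T) (x n) ((Rep η).1 T)
    have h2 : dist ((Rep ξ).1 T) (x n) = T := dist_of_based (hRep0 ξ) hTpos.le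
    have h3 : dist (x n) ((Rep η).1 T) = T := by
      rw [dist_comm]; exact dist_of_based (hRep0 η) hTpos.le
    linarith
  have hT2Y : ∀ p q : Y, dist ((RayY p).1 T) ((RayY q).1 T) ≤ 2*T := by
    intro p q
    have h1 := dist_triangle ((RayY p).1 T) y ((RayY q).1 T)
    have h2 : dist ((RayY p).1 T) y = T := dist_of_based (hRayY0 p) hTpos.le
    have h3 : dist y ((RayY q).1 T) = T := by
      rw [dist_comm]; exact dist_of_based (hRayY0 q) hTpos.le
    linarith
  refine ⟨f, ?_, ?_⟩
  · -- distortion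
    intro ξ η
    have estX := visual_est_abs (hcat n) (x n) (ρ n) (hρ n) (Rep ξ) (Rep η)
      (hRep0 ξ) (hRep0 η) hTpos
    rw [hRepmk ξ, hRepmk η] at estX
    have estY := visual_est_abs hcatY y ρ₀ hρ₀ (RayY (pt ξ)) (RayY (pt η))
      (hRayY0 (pt ξ)) (hRayY0 (pt η)) hTpos
    have dmid : |dist ((Rep ξ).1 T) ((Rep η).1 T) - dist (pt ξ) (pt η)| < δ := by
      have h := hFdist ⟨(Rep ξ).1 T, hmemT ξ⟩ ⟨(Rep η).1 T, hmemT η⟩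
      rw [abs_sub_comm] at h
      exact h
    have dtau : |dist ((RayY (pt ξ)).1 T) ((RayY (pt η)).1 T) - dist (pt ξ) (pt η)| ≤ 2*δ := by
      calc |dist ((RayY (pt ξ)).1 T) ((RayY (pt η)).1 T) - dist (pt ξ) (pt η)|
          ≤ dist ((RayY (pt ξ)).1 T) (pt ξ) + dist ((RayY (pt η)).1 T) (pt η) :=
            dist_sub_dist_le'
        _ ≤ 2*δ := by linarith [K2 ξ, K2 η]
    have hdd : |dist ((RayY (pt ξ)).1 T) ((RayY (pt η)).1 T)
        - dist ((Rep ξ).1 T) ((Rep η).1 T)| ≤ 3*δ := by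
      have := abs_sub (dist ((RayY (pt ξ)).1 T) ((RayY (pt η)).1 T) - dist (pt ξ) (pt η))
      calc |dist ((RayY (pt ξ)).1 T) ((RayY (pt η)).1 T)
            - dist ((Rep ξ).1 T) ((Rep η).1 T)|
          = |(dist ((RayY (pt ξ)).1 T) ((RayY (pt η)).1 T) - dist (pt ξ) (pt η))
            + (dist (pt ξ) (pt η) - dist ((Rep ξ).1 T) ((Rep η).1 T))| := by ring_nf
        _ ≤ |dist ((RayY (pt ξ)).1 T) ((RayY (pt η)).1 T) - dist (pt ξ) (pt η)|
            + |dist (pt ξ) (pt η) - dist ((Rep ξ).1 T) ((Rep η).1 T)| := abs_add_le _ _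
        _ ≤ 3*δ := by
            rw [abs_sub_comm (dist (pt ξ) (pt η))]
            linarith
    have explip : |Real.exp ((dist ((RayY (pt ξ)).1 T) ((RayY (pt η)).1 T) - 2*T)/2)
        - Real.exp ((dist ((Rep ξ).1 T) ((Rep η).1 T) - 2*T)/2)| ≤ 3*δ/2 := by
      have h := exp_diff_le (u := (dist ((RayY (pt ξ)).1 T) ((RayY (pt η)).1 T) - 2*T)/2)
        (v := (dist ((Rep ξ).1 T) ((Rep η).1 T) - 2*T)/2)
        (by linarith [hT2Y (pt ξ) (pt η)]) (by linarith [hT2X ξ η])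
      calc |Real.exp ((dist ((RayY (pt ξ)).1 T) ((RayY (pt η)).1 T) - 2*T)/2)
            - Real.exp ((dist ((Rep ξ).1 T) ((Rep η).1 T) - 2*T)/2)|
          ≤ |(dist ((RayY (pt ξ)).1 T) ((RayY (pt η)).1 T) - 2*T)/2
            - (dist ((Rep ξ).1 T) ((Rep η).1 T) - 2*T)/2| := h
        _ = |dist ((RayY (pt ξ)).1 T) ((RayY (pt η)).1 T)
            - dist ((Rep ξ).1 T) ((Rep η).1 T)|/2 := by
            rw [div_sub_div_same, sub_sub_sub_cancel_right, abs_div, abs_two]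
        _ ≤ 3*δ/2 := by linarith
    have final : |ρ₀ (f ξ) (f η) - ρ n ξ η| ≤ ε/2 + 3*δ/2 := by
      have h1 : ρ₀ (f ξ) (f η) = ρ₀ (Quot.mk AsymptoticRays (RayY (pt ξ)))
          (Quot.mk AsymptoticRays (RayY (pt η))) := rfl
      rw [h1]
      have A1 := (abs_le.1 estY).1
      have A2 := (abs_le.1 estY).2
      have B1 := (abs_le.1 estX).1
      have B2 := (abs_le.1 estX).2
      have C1 := (abs_le.1 explip).1
      have C2 := (abs_le.1 explip).2
      rw [abs_le]
      constructor <;> linarith [hexpT]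
    calc |ρ₀ (f ξ) (f η) - ρ n ξ η| ≤ ε/2 + 3*δ/2 := final
      _ < ε := by
          have : 3*δ/2 ≤ 3*(ε/200)/2 := by linarith
          linarith
  · -- the image is an ε-net
    intro ζ
    have hRepYE : ∃ υ : GeodesicRay Y, υ.1 0 = y ∧ Quot.mk AsymptoticRays υ = ζ := by
      induction ζ using Quot.ind with
      | _ γ => exact exists_based_rep hgeoY hgcY hcatY y γ
    obtain ⟨υ, hυ0, hυmk⟩ := hRepYE
    have hmemz : υ.1 T ∈ Metric.closedBall y R := by
      rw [Metric.mem_closedBall, dist_of_based hυ0 hTpos.le]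
      linarith
    obtain ⟨a, ha⟩ := hFnet ⟨υ.1 T, hmemz⟩
    obtain ⟨g, hg, hg0, hgpt⟩ := exists_line_through (hgeo n) (hgc n) (x n) (a : X n)
    set σa : GeodesicRay (X n) := ⟨g, fun s t _ _ => hg s t⟩ with hσadef
    set ξ : GromovBoundary (X n) := Quot.mk AsymptoticRays σa with hξdef
    refine ⟨ξ, ?_⟩
    have heq : (Rep ξ).1 T = σa.1 T :=
      based_rays_eq (hcat n) (x n) (ρ n) (hρ n) (Rep ξ) σa (hRep0 ξ) hg0
        (by rw [hRepmk ξ]) hTpos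
    set ℓa : ℝ := dist (x n) (a : X n) with hℓadef
    have hFay : |dist (F a : Y) y - T| < δ := by
      have h1 : |dist (F a : Y) y - dist (υ.1 T) y| ≤ dist (F a : Y) (υ.1 T) := by
        have := dist_sub_dist_le' (a := (F a : Y)) (b := y) (a' := υ.1 T) (b' := y)
        simpa using this
      have h2 : dist (υ.1 T) y = T := dist_of_based hυ0 hTpos.le
      rw [h2] at h1
      have h3 : dist (F a : Y) (υ.1 T) < δ := ha
      calc |dist (F a : Y) y - T| ≤ dist (F a : Y) (υ.1 T) := h1
        _ < δ := h3
    have hℓaT : |ℓa - T| < 2*δ := by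
      have h1 := hFdist a ⟨x n, Metric.mem_closedBall_self hRpos.le⟩
      rw [hbase'] at h1
      have h2 : dist (a : X n) (x n) = ℓa := by rw [hℓadef, dist_comm]
      rw [h2] at h1
      calc |ℓa - T| = |(ℓa - dist (F a : Y) y) + (dist (F a : Y) y - T)| := by ring_nf
        _ ≤ |ℓa - dist (F a : Y) y| + |dist (F a : Y) y - T| := abs_add_le _ _
        _ < 2*δ := by
            rw [abs_sub_comm] at h1
            linarith
    have hσaT : dist (σa.1 T) (a : X n) < 2*δ := by
      have h1 : dist (σa.1 T) (σa.1 ℓa) = |T - ℓa| := hg T ℓa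
      have h2 : σa.1 ℓa = (a : X n) := hgpt
      rw [h2] at h1
      rw [h1, abs_sub_comm]
      exact hℓaT
    have hptFa : dist (pt ξ) (F a : Y) < 3*δ := by
      have h1 := hFdist ⟨(Rep ξ).1 T, hmemT ξ⟩ a
      have h2 : dist ((Rep ξ).1 T) ((a : X n)) < 2*δ := by rw [heq]; exact hσaT
      have h3 := (abs_lt.1 h1).2
      linarith
    have dτυ : dist ((RayY (pt ξ)).1 T) (υ.1 T) < 5*δ := by
      calc dist ((RayY (pt ξ)).1 T) (υ.1 T)
          ≤ dist ((RayY (pt ξ)).1 T) (pt ξ) + dist (pt ξ) (F a : Y) + dist (F a : Y) (υ.1 T) :=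
            dist_triangle4 _ _ _ _
        _ < δ + 3*δ + δ := add_lt_add (add_lt_add (K2 ξ) hptFa) ha
        _ = 5*δ := by ring
    have est := visual_est_abs hcatY y ρ₀ hρ₀ (RayY (pt ξ)) υ (hRayY0 (pt ξ)) hυ0 hTpos
    rw [hυmk] at est
    have hq : Real.exp ((dist ((RayY (pt ξ)).1 T) (υ.1 T) - 2*T)/2) ≤ 2 * Real.exp (-T) := by
      have h1 : (dist ((RayY (pt ξ)).1 T) (υ.1 T) - 2*T)/2 ≤ 5*δ/2 + -T := by linarith [dτυ]
      calc Real.exp ((dist ((RayY (pt ξ)).1 T) (υ.1 T) - 2*T)/2)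
          ≤ Real.exp (5*δ/2 + -T) := Real.exp_le_exp.2 h1
        _ = Real.exp (5*δ/2) * Real.exp (-T) := Real.exp_add _ _
        _ ≤ 2 * Real.exp (-T) := by
            apply mul_le_mul_of_nonneg_right _ (Real.exp_pos _).le
            have h2 : 5*δ/2 ≤ Real.log 2 := by
              have := Real.log_two_gt_d9
              linarith
            calc Real.exp (5*δ/2) ≤ Real.exp (Real.log 2) := Real.exp_le_exp.2 h2
              _ = 2 := Real.exp_log two_pos
    have hρ₀f : ρ₀ (f ξ) ζ ≤ 3 * Real.exp (-T) := by
      have h1 : ρ₀ (f ξ) ζ = ρ₀ (Quot.mk AsymptoticRays (RayY (pt ξ))) ζ := rfl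
      rw [h1]
      have h2 := (abs_le.1 est).2
      linarith [hq]
    calc ρ₀ (f ξ) ζ ≤ 3 * Real.exp (-T) := hρ₀f
      _ ≤ 3 * (ε/4) := by linarith [hexpT]
      _ < ε := by linarith


/-- The trivial 2-isometry, valid for every `n`. -/
lemma trivial_isometry
    {Xn : Type u} [MetricSpace Xn]
    (hgeo : IsGeodesicSpace Xn) (hgc : IsGeodesicallyComplete Xn) (xn : Xn)
    {Y : Type u} [MetricSpace Y]
    (hgeoY : IsGeodesicSpace Y) (hgcY : IsGeodesicallyComplete Y) (y : Y)
    (ρn : GromovBoundary Xn → GromovBoundary Xn → ℝ) (hρn : IsVisualMetric xn ρn)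
    (ρ₀ : GromovBoundary Y → GromovBoundary Y → ℝ) (hρ₀ : IsVisualMetric y ρ₀) :
    ∃ f : GromovBoundary Xn → GromovBoundary Y, IsEpsIsometry ρn ρ₀ 2 f := by
  obtain ⟨gY, hgY, hgY0, -⟩ := exists_line_through hgeoY hgcY y y
  obtain ⟨gX, hgX, hgX0, -⟩ := exists_line_through hgeo hgc xn xn
  set τ : GeodesicRay Y := ⟨gY, fun s t _ _ => hgY s t⟩ with hτdef
  refine ⟨fun _ => Quot.mk _ τ, ?_, ?_⟩
  · intro ξ η
    have h0 : ρ₀ (Quot.mk _ τ) (Quot.mk _ τ) = 0 := visual_self y ρ₀ hρ₀ τ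
    have hb := visual_bounds xn ρn hρn ξ η
    rw [h0, zero_sub, abs_neg, abs_of_nonneg hb.1]
    linarith [hb.2]
  · intro ζ
    refine ⟨Quot.mk _ (⟨gX, fun s t _ _ => hgX s t⟩ : GeodesicRay Xn), ?_⟩
    have hb := visual_bounds y ρ₀ hρ₀ (Quot.mk _ τ) ζ
    linarith [hb.2]

end VBC

theorem visual_boundaries_converge_of_CAT_minus_one_GH_converges'
    {X : ℕ → Type u} [∀ n, MetricSpace (X n)] [∀ n, ProperSpace (X n)]
    (hgeo : ∀ n, IsGeodesicSpace (X n)) (hgc : ∀ n, IsGeodesicallyComplete (X n))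
    (hcat : ∀ n, IsCATMinusOne (X n)) (x : ∀ n, X n)
    {Y : Type u} [MetricSpace Y] [ProperSpace Y]
    (hgeoY : IsGeodesicSpace Y) (hgcY : IsGeodesicallyComplete Y) (hcatY : IsCATMinusOne Y)
    (y : Y)
    (hGH : PointedGHConverges X x Y y)
    (ρ : ∀ n, GromovBoundary (X n) → GromovBoundary (X n) → ℝ)
    (hρ : ∀ n, IsVisualMetric (x n) (ρ n))
    (ρ₀ : GromovBoundary Y → GromovBoundary Y → ℝ) (hρ₀ : IsVisualMetric y ρ₀) :
    AIConverges ρ ρ₀ := by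
  classical
  have main : ∀ k : ℕ, ∃ N : ℕ, ∀ n, N ≤ n → ∃ f : GromovBoundary (X n) → GromovBoundary Y,
      IsEpsIsometry (ρ n) ρ₀ (1/((k:ℝ)+1)) f := fun k =>
    VBC.eps_isometry_exists hgeo hgc hcat x hgeoY hgcY hcatY y hGH ρ hρ ρ₀ hρ₀ (by positivity)
  choose N hN using main
  have base : ∀ n, ∃ f : GromovBoundary (X n) → GromovBoundary Y,
      IsEpsIsometry (ρ n) ρ₀ 2 f := fun n =>
    VBC.trivial_isometry (hgeo n) (hgc n) (x n) hgeoY hgcY y (ρ n) (hρ n) ρ₀ hρ₀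
  set K : ℕ → ℕ := fun n => Nat.findGreatest (fun k => N k ≤ n) n with hKdef
  refine ⟨fun n => if N 0 ≤ n then 1/((K n : ℝ)+1) else 2, ?_, ?_, ?_⟩
  · intro n
    beta_reduce
    split <;> positivity
  · rw [Metric.tendsto_atTop]
    intro e he
    obtain ⟨k, hk⟩ := exists_nat_one_div_lt he
    refine ⟨max (max (N k) k) (N 0), fun n hn => ?_⟩
    have h1 : N k ≤ n := le_trans ((le_max_left _ _).trans (le_max_left _ _)) hn
    have h2 : k ≤ n := le_trans ((le_max_right _ _).trans (le_max_left _ _)) hn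
    have h3 : N 0 ≤ n := le_trans (le_max_right _ _) hn
    have hKk : k ≤ K n := Nat.le_findGreatest h2 h1
    rw [Real.dist_eq, sub_zero, if_pos h3, abs_of_pos (by positivity)]
    have hc : ((k:ℝ)+1) ≤ ((K n : ℝ)+1) := by
      have : (k:ℝ) ≤ (K n : ℝ) := by exact_mod_cast hKk
      linarith
    calc 1/((K n : ℝ)+1) ≤ 1/((k:ℝ)+1) := by
          apply one_div_le_one_div_of_le (by positivity) hc
      _ < e := hk
  · intro n
    beta_reduce
    by_cases h : N 0 ≤ n
    · rw [if_pos h]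
      have hspec : N (K n) ≤ n := Nat.findGreatest_spec (P := fun k => N k ≤ n) (m := 0) (Nat.zero_le n) h
      exact hN (K n) n hspec
    · rw [if_neg h]
      exact base n


/-- If proper, geodesically complete CAT(−1) spaces `(X n, x n)` converge to
a proper, geodesically complete CAT(−1) space `(Y, y)` in the pointed Gromov–Hausdorff sense,
then the visual boundaries `(∂ X n, ρ_{x n})` converge to `(∂ Y, ρ_y)` in the Gromov–Hausdorff
sense as compact metric spaces (formulated, equivalently for metric spaces, as
almost-isometric convergence). -/
theorem visual_boundaries_converge_of_CAT_minus_one_GH_converges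
    {X : ℕ → Type u} [∀ n, MetricSpace (X n)] [∀ n, ProperSpace (X n)]
    (hgeo : ∀ n, IsGeodesicSpace (X n)) (hgc : ∀ n, IsGeodesicallyComplete (X n))
    (hcat : ∀ n, IsCATMinusOne (X n)) (x : ∀ n, X n)
    {Y : Type u} [MetricSpace Y] [ProperSpace Y]
    (hgeoY : IsGeodesicSpace Y) (hgcY : IsGeodesicallyComplete Y) (hcatY : IsCATMinusOne Y)
    (y : Y)
    (hGH : PointedGHConverges X x Y y)
    (ρ : ∀ n, GromovBoundary (X n) → GromovBoundary (X n) → ℝ)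
    (hρ : ∀ n, IsVisualMetric (x n) (ρ n))
    (ρ₀ : GromovBoundary Y → GromovBoundary Y → ℝ) (hρ₀ : IsVisualMetric y ρ₀) :
    AIConverges ρ ρ₀ := by
  exact visual_boundaries_converge_of_CAT_minus_one_GH_converges'
    hgeo hgc hcat x hgeoY hgcY hcatY y hGH ρ hρ ρ₀ hρ₀
end

section
/- Let (Z1, ρ1) and (Z2, ρ2) be compact semi-metric spaces. Then d_AI((Z1,ρ1),(Z2,ρ2)) = 0 if and only if there exists a surjective isometry f : (Z1,ρ1) → (Z2,ρ2), i.e. a surjective map f : Z1 → Z2 with ρ2(f(ξ),f(η)) = ρ1(ξ,η) for all ξ,η ∈ Z1. -/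
open Filter Topology Metric
open scoped ENNReal

universe u v

/-- The almost-isometry (AI) distance between two semi-metric spaces: the infimum of all `ε > 0`
for which there are `ε`-isometries in both directions (`∞` if there are none). -/
noncomputable def dAI {Z₁ : Type*} {Z₂ : Type*} (ρ₁ : Z₁ → Z₁ → ℝ) (ρ₂ : Z₂ → Z₂ → ℝ) : ℝ≥0∞ :=
  ⨅ (ε : ℝ) (_ : 0 < ε) (_ : ∃ f : Z₁ → Z₂, IsEpsIsometry ρ₁ ρ₂ ε f)
    (_ : ∃ g : Z₂ → Z₁, IsEpsIsometry ρ₂ ρ₁ ε g), ENNReal.ofReal ε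

set_option linter.unusedSectionVars false

section Aux

open Filter Topology

variable {Z₁ : Type u} [TopologicalSpace Z₁] [CompactSpace Z₁]
  [TopologicalSpace.MetrizableSpace Z₁] [Nonempty Z₁]
  {Z₂ : Type v} [TopologicalSpace Z₂] [CompactSpace Z₂]
  [TopologicalSpace.MetrizableSpace Z₂] [Nonempty Z₂]

theorem aux_forward (ρ₁ : Z₁ → Z₁ → ℝ) (hρ₁ : IsSemiMetric ρ₁)
    (ρ₂ : Z₂ → Z₂ → ℝ) (hρ₂ : IsSemiMetric ρ₂)
    (F : ℕ → Z₁ → Z₂) (hF : ∀ n : ℕ, IsEpsIsometry ρ₁ ρ₂ (1 / ((n : ℝ) + 1)) (F n)) :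
    ∃ f : Z₁ → Z₂, Function.Surjective f ∧ ∀ ξ η : Z₁, ρ₂ (f ξ) (f η) = ρ₁ ξ η := by
  set U : Ultrafilter ℕ := Ultrafilter.of atTop with hUdef
  have hU : (U : Filter ℕ) ≤ atTop := Ultrafilter.of_le _
  have hinv : Tendsto (fun n : ℕ => 1 / ((n : ℝ) + 1)) (U : Filter ℕ) (𝓝 0) :=
    (tendsto_one_div_add_atTop_nhds_zero_nat).mono_left hU
  set f : Z₁ → Z₂ := fun ξ => (U.map fun n => F n ξ).lim with hfdef
  have hconv : ∀ ξ, Tendsto (fun n => F n ξ) (U : Filter ℕ) (𝓝 (f ξ)) := fun ξ =>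
    (U.map fun n => F n ξ).le_nhds_lim
  -- preservation
  have hpres : ∀ ξ η : Z₁, ρ₂ (f ξ) (f η) = ρ₁ ξ η := by
    intro ξ η
    have hA : Tendsto (fun n => ρ₂ (F n ξ) (F n η)) (U : Filter ℕ) (𝓝 (ρ₂ (f ξ) (f η))) :=
      (hρ₂.1.tendsto (f ξ, f η)).comp ((hconv ξ).prodMk_nhds (hconv η))
    have hB : Tendsto (fun n => ρ₂ (F n ξ) (F n η)) (U : Filter ℕ) (𝓝 (ρ₁ ξ η)) := by
      have h0 : Tendsto (fun n => ρ₂ (F n ξ) (F n η) - ρ₁ ξ η) (U : Filter ℕ) (𝓝 0) := by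
        apply squeeze_zero_norm (fun n => ((hF n).1 ξ η).le) hinv
      have := h0.add_const (ρ₁ ξ η)
      simpa using this
    exact tendsto_nhds_unique hA hB
  refine ⟨f, ?_, hpres⟩
  -- surjectivity
  intro ζ
  have hnet : ∀ n : ℕ, ∃ ξ : Z₁, ρ₂ (F n ξ) ζ < 1 / (n + 1) := fun n => (hF n).2 ζ
  choose ξs hξs using hnet
  set ξ : Z₁ := (U.map ξs).lim with hxidef
  have hξconv : Tendsto ξs (U : Filter ℕ) (𝓝 ξ) := (U.map ξs).le_nhds_lim
  set w : Z₂ := (U.map fun n => F n (ξs n)).lim with hwdef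
  have hwconv : Tendsto (fun n => F n (ξs n)) (U : Filter ℕ) (𝓝 w) :=
    (U.map fun n => F n (ξs n)).le_nhds_lim
  -- w = ζ
  have hwζ : w = ζ := by
    have hA : Tendsto (fun n => ρ₂ (F n (ξs n)) ζ) (U : Filter ℕ) (𝓝 (ρ₂ w ζ)) :=
      (hρ₂.1.tendsto (w, ζ)).comp (hwconv.prodMk_nhds tendsto_const_nhds)
    have hB : Tendsto (fun n => ρ₂ (F n (ξs n)) ζ) (U : Filter ℕ) (𝓝 0) := by
      apply squeeze_zero (fun n => hρ₂.2.2.1 _ _) (fun n => (hξs n).le) hinv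
    exact ((hρ₂.2.2.2 w ζ).mp (tendsto_nhds_unique hA hB))
  -- f ξ = w
  have hfw : f ξ = w := by
    have hA : Tendsto (fun n => ρ₂ (F n ξ) (F n (ξs n))) (U : Filter ℕ) (𝓝 (ρ₂ (f ξ) w)) :=
      (hρ₂.1.tendsto (f ξ, w)).comp ((hconv ξ).prodMk_nhds hwconv)
    have hbound : Tendsto (fun n => ρ₁ ξ (ξs n) + 1 / ((n : ℝ) + 1)) (U : Filter ℕ) (𝓝 0) := by
      have h1 : Tendsto (fun n => ρ₁ ξ (ξs n)) (U : Filter ℕ) (𝓝 (ρ₁ ξ ξ)) :=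
        (hρ₁.1.tendsto (ξ, ξ)).comp (tendsto_const_nhds.prodMk_nhds hξconv)
      rw [(hρ₁.2.2.2 ξ ξ).mpr rfl] at h1
      simpa using h1.add hinv
    have hB : Tendsto (fun n => ρ₂ (F n ξ) (F n (ξs n))) (U : Filter ℕ) (𝓝 0) := by
      apply squeeze_zero (fun n => hρ₂.2.2.1 _ _) ?_ hbound
      intro n
      have := (hF n).1 ξ (ξs n)
      rw [abs_sub_lt_iff] at this
      linarith [this.1]
    exact (hρ₂.2.2.2 (f ξ) w).mp (tendsto_nhds_unique hA hB)
  exact ⟨ξ, hfw.trans hwζ⟩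

end Aux

/-- Two (nonempty) compact semi-metric spaces are at AI-distance zero if and
only if they are isometric, i.e. there is a surjective map preserving the semi-metrics. -/
theorem dAI_eq_zero_iff_isometric
    {Z₁ : Type u} [TopologicalSpace Z₁] [CompactSpace Z₁] [TopologicalSpace.MetrizableSpace Z₁]
    [Nonempty Z₁]
    {Z₂ : Type v} [TopologicalSpace Z₂] [CompactSpace Z₂] [TopologicalSpace.MetrizableSpace Z₂]
    [Nonempty Z₂]
    (ρ₁ : Z₁ → Z₁ → ℝ) (hρ₁ : IsSemiMetric ρ₁)
    (ρ₂ : Z₂ → Z₂ → ℝ) (hρ₂ : IsSemiMetric ρ₂) :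
    dAI ρ₁ ρ₂ = 0 ↔
      ∃ f : Z₁ → Z₂, Function.Surjective f ∧ ∀ ξ η : Z₁, ρ₂ (f ξ) (f η) = ρ₁ ξ η := by
  
  constructor
  · intro h0
    have hF : ∀ n : ℕ, ∃ f : Z₁ → Z₂, IsEpsIsometry ρ₁ ρ₂ (1 / (n + 1) : ℝ) f := by
      intro n
      have hn : (0 : ℝ) < 1 / (n + 1) := by positivity
      have hlt : dAI ρ₁ ρ₂ < ENNReal.ofReal (1 / (n + 1)) := by
        rw [h0]; exact ENNReal.ofReal_pos.mpr hn
      rw [dAI] at hlt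
      obtain ⟨ε, hlt⟩ := iInf_lt_iff.mp hlt
      obtain ⟨hε, hlt⟩ := iInf_lt_iff.mp hlt
      obtain ⟨⟨f, hf⟩, hlt⟩ := iInf_lt_iff.mp hlt
      obtain ⟨-, hlt⟩ := iInf_lt_iff.mp hlt
      have hεlt : ε < 1 / (n + 1) := by
        rwa [ENNReal.ofReal_lt_ofReal_iff hn] at hlt
      exact ⟨f, fun ξ η => (hf.1 ξ η).trans hεlt,
        fun ζ => (hf.2 ζ).imp fun ξ h => h.trans hεlt⟩
    choose F hF using hF
    exact aux_forward ρ₁ hρ₁ ρ₂ hρ₂ F hF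
  · rintro ⟨f, hsurj, hpres⟩
    have key : ∀ ε : ℝ, 0 < ε → dAI ρ₁ ρ₂ ≤ ENNReal.ofReal ε := by
      intro ε hε
      have hf : IsEpsIsometry ρ₁ ρ₂ ε f := by
        constructor
        · intro ξ η; rw [hpres]; simpa using hε
        · intro ζ
          obtain ⟨ξ, rfl⟩ := hsurj ζ
          exact ⟨ξ, by rw [(hρ₂.2.2.2 _ _).mpr rfl]; exact hε⟩
      set g : Z₂ → Z₁ := Function.surjInv hsurj with hg
      have hginv : ∀ ζ, f (g ζ) = ζ := fun ζ => Function.surjInv_eq hsurj ζ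
      have hgpres : ∀ ζ ζ' : Z₂, ρ₁ (g ζ) (g ζ') = ρ₂ ζ ζ' := by
        intro ζ ζ'
        rw [← hpres (g ζ) (g ζ'), hginv, hginv]
      have hgI : IsEpsIsometry ρ₂ ρ₁ ε g := by
        constructor
        · intro ζ ζ'; rw [hgpres]; simpa using hε
        · intro ξ
          refine ⟨f ξ, ?_⟩
          have : ρ₁ (g (f ξ)) ξ = 0 := by
            rw [← hpres, hginv, (hρ₂.2.2.2 _ _).mpr rfl]
          rw [this]; exact hε
      exact iInf_le_of_le ε (iInf_le_of_le hε (iInf_le_of_le ⟨f, hf⟩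
        (iInf_le_of_le ⟨g, hgI⟩ le_rfl)))
    have h2 : ∀ n : ℕ, dAI ρ₁ ρ₂ ≤ ENNReal.ofReal (1 / (n + 1)) := fun n =>
      key _ (by positivity)
    have h3 : Tendsto (fun n : ℕ => ENNReal.ofReal (1 / (n + 1))) atTop (𝓝 0) := by
      rw [show (0 : ℝ≥0∞) = ENNReal.ofReal 0 by simp]
      exact ENNReal.tendsto_ofReal tendsto_one_div_add_atTop_nhds_zero_nat
    exact le_antisymm (ge_of_tendsto' h3 h2) zero_le
end

section
/- Let (Z_n, ρ_n), n ≥ 1, and (Z, ρ_0) be compact semi-metric spaces, and suppose there exist ε_n-isometries f_n : (Z_n,ρ_n) → (Z,ρ_0) with ε_n → 0+. Then for every δ > 0 there exists N such that for all n ≥ N there exists a δ-isometry g_n : (Z,ρ_0) → (Z_n,ρ_n); in particular d_AI((Z_n,ρ_n),(Z,ρ_0)) → 0. -/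
open Filter Topology Metric
open scoped ENNReal

universe u v

/-- If there are `ε n`-isometries `f n : (Z n, ρ n) → (W, ρ₀)` between compact
semi-metric spaces with `ε n → 0+`, then for every `δ > 0` there are `δ`-isometries
`(W, ρ₀) → (Z n, ρ n)` for all sufficiently large `n`; in particular
`d_AI((Z n, ρ n), (W, ρ₀)) → 0`. -/
theorem exists_almost_inverse_isometries
    {Z : ℕ → Type u} [∀ n, TopologicalSpace (Z n)] [∀ n, CompactSpace (Z n)]
    [∀ n, TopologicalSpace.MetrizableSpace (Z n)]
    (ρ : ∀ n, Z n → Z n → ℝ) (hρ : ∀ n, IsSemiMetric (ρ n))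
    {W : Type v} [TopologicalSpace W] [CompactSpace W] [TopologicalSpace.MetrizableSpace W]
    (ρ₀ : W → W → ℝ) (hρ₀ : IsSemiMetric ρ₀)
    (ε : ℕ → ℝ) (hε : ∀ n, 0 < ε n) (hε0 : Tendsto ε atTop (𝓝 0))
    (hf : ∀ n, ∃ f : Z n → W, IsEpsIsometry (ρ n) ρ₀ (ε n) f) :
    (∀ δ : ℝ, 0 < δ → ∃ N : ℕ, ∀ n, N ≤ n →
      ∃ g : W → Z n, IsEpsIsometry ρ₀ (ρ n) δ g) ∧
    Tendsto (fun n => dAI (ρ n) ρ₀) atTop (𝓝 0) := by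
  -- Key uniform continuity lemma for the semi-metric on the compact space `W`.
  have key : ∀ δ : ℝ, 0 < δ → ∃ η > (0:ℝ), ∀ a a' b b' : W,
      ρ₀ a a' < η → ρ₀ b b' < η → |ρ₀ a b - ρ₀ a' b'| < δ := by
    intro δ hδ
    obtain ⟨hc, hsym, hnn, heq⟩ := hρ₀
    have hcoord : ∀ (p q : W × W × W × W → W), Continuous p → Continuous q →
        Continuous fun x => ρ₀ (p x) (q x) := fun p q hp hq =>
      hc.comp (hp.prodMk hq)
    set F : W × W × W × W → ℝ := fun x => |ρ₀ x.1 x.2.2.1 - ρ₀ x.2.1 x.2.2.2| with hF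
    set G : W × W × W × W → ℝ := fun x => max (ρ₀ x.1 x.2.1) (ρ₀ x.2.2.1 x.2.2.2) with hG
    have hFc : Continuous F := by
      apply Continuous.abs
      exact (hcoord _ _ continuous_fst continuous_snd.snd.fst).sub
        (hcoord _ _ continuous_snd.fst continuous_snd.snd.snd)
    have hGc : Continuous G := by
      exact (hcoord _ _ continuous_fst continuous_snd.fst).max
        (hcoord _ _ continuous_snd.snd.fst continuous_snd.snd.snd)
    set S : Set (W × W × W × W) := {x | δ ≤ F x} with hS
    have hScl : IsClosed S := isClosed_le continuous_const hFc
    have hScompact : IsCompact S := hScl.isCompact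
    rcases S.eq_empty_or_nonempty with hSe | hSne
    · refine ⟨1, one_pos, fun a a' b b' _ _ => ?_⟩
      by_contra h
      push_neg at h
      have : (a, a', b, b') ∈ S := h
      simp [hSe] at this
    · obtain ⟨x₀, hx₀S, hmin⟩ := hScompact.exists_isMinOn hSne hGc.continuousOn
      have hGpos : 0 < G x₀ := by
        by_contra hle
        push_neg at hle
        have h1 : ρ₀ x₀.1 x₀.2.1 = 0 :=
          le_antisymm (le_trans (le_max_left _ _) hle) (hnn _ _)
        have h2 : ρ₀ x₀.2.2.1 x₀.2.2.2 = 0 :=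
          le_antisymm (le_trans (le_max_right _ _) hle) (hnn _ _)
        have e1 : x₀.1 = x₀.2.1 := (heq _ _).mp h1
        have e2 : x₀.2.2.1 = x₀.2.2.2 := (heq _ _).mp h2
        have : δ ≤ F x₀ := hx₀S
        rw [hF] at this
        simp only [e1, e2, sub_self, abs_zero] at this
        linarith
      refine ⟨G x₀, hGpos, fun a a' b b' h1 h2 => ?_⟩
      by_contra h
      push_neg at h
      have hxS : (a, a', b, b') ∈ S := h
      have := isMinOn_iff.mp hmin _ hxS
      have hGlt : G (a, a', b, b') < G x₀ := max_lt h1 h2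
      linarith
  have main : ∀ δ : ℝ, 0 < δ → ∃ N : ℕ, ∀ n, N ≤ n →
      ∃ g : W → Z n, IsEpsIsometry ρ₀ (ρ n) δ g := by
    intro δ hδ
    obtain ⟨η, hη, hkey⟩ := key (δ/2) (by linarith)
    have hev : ∀ᶠ n in atTop, ε n < min η (δ/2) :=
      hε0.eventually_lt_const (lt_min hη (by linarith))
    obtain ⟨N, hN⟩ := eventually_atTop.mp hev
    refine ⟨N, fun n hn => ?_⟩
    have hεn : ε n < min η (δ/2) := hN n hn
    have hεη : ε n < η := lt_of_lt_of_le hεn (min_le_left _ _)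
    have hεδ : ε n < δ/2 := lt_of_lt_of_le hεn (min_le_right _ _)
    obtain ⟨f, hf1, hf2⟩ := hf n
    set g : W → Z n := fun ζ => (hf2 ζ).choose with hg
    have hgρ : ∀ ζ, ρ₀ (f (g ζ)) ζ < ε n := fun ζ => (hf2 ζ).choose_spec
    refine ⟨g, fun ζ ξ => ?_, fun ξ => ?_⟩
    · have t1 : |ρ₀ (f (g ζ)) (f (g ξ)) - ρ n (g ζ) (g ξ)| < ε n := hf1 _ _
      have t2 : |ρ₀ (f (g ζ)) (f (g ξ)) - ρ₀ ζ ξ| < δ/2 :=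
        hkey _ _ _ _ (lt_trans (hgρ ζ) hεη) (lt_trans (hgρ ξ) hεη)
      have t1' : |ρ n (g ζ) (g ξ) - ρ₀ (f (g ζ)) (f (g ξ))| < ε n := by
        rw [abs_sub_comm]; exact t1
      have := abs_sub_le (ρ n (g ζ) (g ξ)) (ρ₀ (f (g ζ)) (f (g ξ))) (ρ₀ ζ ξ)
      linarith
    · refine ⟨f ξ, ?_⟩
      have t1 : |ρ₀ (f (g (f ξ))) (f ξ) - ρ n (g (f ξ)) ξ| < ε n := hf1 _ _
      have t2 : ρ₀ (f (g (f ξ))) (f ξ) < ε n := hgρ (f ξ)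
      have := abs_lt.mp t1
      linarith
  refine ⟨main, ?_⟩
  rw [ENNReal.tendsto_nhds_zero]
  intro η hη
  set η' : ℝ≥0∞ := min η 1 with hη'
  have hη'top : η' ≠ ⊤ := ((min_le_right _ _).trans_lt ENNReal.one_lt_top).ne
  have hη'pos : 0 < η' := lt_min hη zero_lt_one
  set δ : ℝ := η'.toReal with hδdef
  have hδpos : 0 < δ := ENNReal.toReal_pos hη'pos.ne' hη'top
  obtain ⟨N, hN⟩ := main δ hδpos
  filter_upwards [eventually_ge_atTop N, hε0.eventually_lt_const hδpos] with n h1 h2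
  obtain ⟨g, hgδ⟩ := hN n h1
  obtain ⟨f, hf1, hf2⟩ := hf n
  have hfδ : IsEpsIsometry (ρ n) ρ₀ δ f :=
    ⟨fun a b => lt_trans (hf1 a b) h2, fun ζ => by
      obtain ⟨ξ, hξ⟩ := hf2 ζ; exact ⟨ξ, lt_trans hξ h2⟩⟩
  calc dAI (ρ n) ρ₀ ≤ ENNReal.ofReal δ := by
        refine iInf_le_of_le δ ?_
        refine iInf_le_of_le hδpos ?_
        refine iInf_le_of_le ⟨f, hfδ⟩ ?_
        exact iInf_le_of_le ⟨g, hgδ⟩ le_rfl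
    _ = η' := ENNReal.ofReal_toReal hη'top
    _ ≤ η := min_le_left _ _
end

section
/- Let (Z_n, ρ_n), n ≥ 1, be an equicontinuous sequence of compact semi-metric spaces and let (Z, ρ_0) be a compact semi-metric space. If there exist δ_n-isometries g_n : (Z,ρ_0) → (Z_n,ρ_n) with δ_n → 0+, then for every ε > 0 there exists N such that for all n ≥ N there exists an ε-isometry f_n : (Z_n,ρ_n) → (Z,ρ_0); in particular (Z_n,ρ_n) AI-converges to (Z,ρ_0). -/
open Filter Topology Metric
open scoped ENNReal

universe u v

lemma isEpsIsometry_mono {Z₁ : Type*} {Z₂ : Type*} {ρ₁ : Z₁ → Z₁ → ℝ} {ρ₂ : Z₂ → Z₂ → ℝ}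
    {a b : ℝ} (hab : a ≤ b) {f : Z₁ → Z₂}
    (h : IsEpsIsometry ρ₁ ρ₂ a f) : IsEpsIsometry ρ₁ ρ₂ b f :=
  ⟨fun ξ η => (h.1 ξ η).trans_le hab, fun ζ => (h.2 ζ).imp fun _ hξ => hξ.trans_le hab⟩


/-- If `(Z n, ρ n)` is an equicontinuous sequence of compact semi-metric
spaces and there are `δ n`-isometries `g n : (W, ρ₀) → (Z n, ρ n)` with `δ n → 0+`, then for
every `ε > 0` there are `ε`-isometries `(Z n, ρ n) → (W, ρ₀)` for all sufficiently large `n`;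
in particular `(Z n, ρ n)` AI-converges to `(W, ρ₀)`. -/
theorem AI_converges_of_inverse_isometries_of_equicontinuous
    {Z : ℕ → Type u} [∀ n, TopologicalSpace (Z n)] [∀ n, CompactSpace (Z n)]
    [∀ n, TopologicalSpace.MetrizableSpace (Z n)]
    (ρ : ∀ n, Z n → Z n → ℝ) (hρ : ∀ n, IsSemiMetric (ρ n))
    (hEq : EquicontinuousFamily ρ)
    {W : Type v} [TopologicalSpace W] [CompactSpace W] [TopologicalSpace.MetrizableSpace W]
    (ρ₀ : W → W → ℝ) (hρ₀ : IsSemiMetric ρ₀)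
    (δ : ℕ → ℝ) (hδ : ∀ n, 0 < δ n) (hδ0 : Tendsto δ atTop (𝓝 0))
    (hg : ∀ n, ∃ g : W → Z n, IsEpsIsometry ρ₀ (ρ n) (δ n) g) :
    (∀ ε : ℝ, 0 < ε → ∃ N : ℕ, ∀ n, N ≤ n →
      ∃ f : Z n → W, IsEpsIsometry (ρ n) ρ₀ ε f) ∧
    AIConverges ρ ρ₀ := by
  have H : ∀ ε : ℝ, 0 < ε → ∃ N : ℕ, ∀ n, N ≤ n →
      ∃ f : Z n → W, IsEpsIsometry (ρ n) ρ₀ ε f := by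
    intro ε hε
    obtain ⟨δ', hδ'pos, hδ'⟩ := hEq (ε / 4) (by positivity)
    have hmin : (0 : ℝ) < min δ' (ε / 4) := lt_min hδ'pos (by positivity)
    obtain ⟨N, hN⟩ := eventually_atTop.1 (hδ0.eventually (gt_mem_nhds hmin))
    refine ⟨N, fun n hn => ?_⟩
    have hδn : δ n < min δ' (ε / 4) := hN n hn
    have hδn1 : δ n < δ' := hδn.trans_le (min_le_left _ _)
    have hδn2 : δ n < ε / 4 := hδn.trans_le (min_le_right _ _)
    obtain ⟨g, hg1, hg2⟩ := hg n
    choose f hf using hg2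
    refine ⟨f, fun z z' => ?_, fun ζ => ⟨g ζ, ?_⟩⟩
    · have h1 : |ρ₀ (f z) (f z') - ρ n (g (f z)) (g (f z'))| < δ n := by
        have := hg1 (f z) (f z'); rwa [abs_sub_comm] at this
      have h2 : |ρ n (g (f z)) (g (f z')) - ρ n z (g (f z'))| < ε / 4 :=
        hδ' n (g (f z)) z ((hf z).trans hδn1) (g (f z'))
      have h3 : |ρ n z (g (f z')) - ρ n z z'| < ε / 4 := by
        rw [(hρ n).2.1 z (g (f z')), (hρ n).2.1 z z']
        exact hδ' n (g (f z')) z' ((hf z').trans hδn1) z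
      have t1 := abs_sub_le (ρ₀ (f z) (f z')) (ρ n (g (f z)) (g (f z'))) (ρ n z z')
      have t2 := abs_sub_le (ρ n (g (f z)) (g (f z'))) (ρ n z (g (f z'))) (ρ n z z')
      linarith
    · have h1 := (abs_lt.1 (hg1 (f (g ζ)) ζ)).1
      have h2 := hf (g ζ)
      linarith
  refine ⟨H, ?_⟩
  set S : ℕ → Set ℝ := fun n => {c | 0 < c ∧ ∃ f : Z n → W, IsEpsIsometry (ρ n) ρ₀ c f} with hS
  have hSne : ∀ n, (S n).Nonempty := by
    intro n
    obtain ⟨g, hg1, hg2⟩ := hg n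
    by_cases hZ : Nonempty (Z n)
    · obtain ⟨z₀⟩ := hZ
      obtain ⟨w₀, -⟩ := hg2 z₀
      obtain ⟨p, -, hC⟩ := isCompact_univ.exists_isMaxOn ⟨(z₀, z₀), Set.mem_univ _⟩
        ((hρ n).1.continuousOn)
      obtain ⟨q, -, hC'⟩ := isCompact_univ.exists_isMaxOn (f := fun ζ => ρ₀ w₀ ζ)
        ⟨w₀, Set.mem_univ _⟩ ((hρ₀.1.comp (Continuous.prodMk_right w₀)).continuousOn)
      set C : ℝ := Function.uncurry (ρ n) p
      set C' : ℝ := ρ₀ w₀ q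
      have hC0 : 0 ≤ C := le_trans ((hρ n).2.2.1 z₀ z₀) (hC (Set.mem_univ (z₀, z₀)))
      have hC'0 : 0 ≤ C' := le_trans (hρ₀.2.2.1 w₀ w₀) (hC' (Set.mem_univ w₀))
      refine ⟨C + C' + 1, by positivity, fun _ => w₀, fun ξ η => ?_, fun ζ => ⟨z₀, ?_⟩⟩
      · have h0 : ρ₀ w₀ w₀ = 0 := (hρ₀.2.2.2 w₀ w₀).2 rfl
        have hb : ρ n ξ η ≤ C := hC (Set.mem_univ (ξ, η))
        have hnn : 0 ≤ ρ n ξ η := (hρ n).2.2.1 ξ η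
        rw [h0, zero_sub, abs_neg, abs_of_nonneg hnn]
        linarith
      · have := hC' (Set.mem_univ ζ)
        have hnn : 0 ≤ ρ₀ w₀ ζ := hρ₀.2.2.1 w₀ ζ
        simp only [Function.comp] at this
        calc ρ₀ w₀ ζ ≤ C' := this
        _ < C + C' + 1 := by linarith
    · refine ⟨1, one_pos, fun z => absurd ⟨z⟩ hZ, fun ξ => absurd ⟨ξ⟩ hZ, fun ζ => absurd ⟨g ζ⟩ hZ⟩
  have hSbdd : ∀ n, BddBelow (S n) := fun n => ⟨0, fun c hc => hc.1.le⟩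
  have hSInf0 : ∀ n, 0 ≤ sInf (S n) := fun n => le_csInf (hSne n) fun c hc => hc.1.le
  set e : ℕ → ℝ := fun n => sInf (S n) + 1 / (n + 1) with he
  have hepos : ∀ n, 0 < e n := fun n => by
    have : (0:ℝ) < 1 / (n + 1) := by positivity
    have := hSInf0 n; simp only [he]; linarith
  refine ⟨e, hepos, ?_, ?_⟩
  · rw [Metric.tendsto_atTop]
    intro r hr
    obtain ⟨N1, hN1⟩ := H (r / 3) (by positivity)
    obtain ⟨N2, hN2⟩ := eventually_atTop.1
      (tendsto_one_div_add_atTop_nhds_zero_nat.eventually (gt_mem_nhds (by positivity : (0:ℝ) < r / 3)))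
    refine ⟨max N1 N2, fun n hn => ?_⟩
    have hs : sInf (S n) ≤ r / 3 :=
      csInf_le (hSbdd n) ⟨by positivity, hN1 n (le_of_max_le_left hn)⟩
    have h2 : (1:ℝ) / (n + 1) < r / 3 := hN2 n (le_of_max_le_right hn)
    rw [Real.dist_eq, sub_zero, abs_of_nonneg (hepos n).le]
    simp only [he]; linarith
  · intro n
    obtain ⟨a, ha, halt⟩ := Real.lt_sInf_add_pos (hSne n) (by positivity : (0:ℝ) < 1 / (n + 1))
    obtain ⟨f, hf⟩ := ha.2
    exact ⟨f, isEpsIsometry_mono halt.le hf⟩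
end

section
/- Let (Z_n, ρ_n), n ≥ 1, be a sequence of compact semi-metric spaces. If (Z_n, ρ_n) AI-converges both to a compact semi-metric space (Z, ρ_0) and to a compact semi-metric space (Z', ρ_0'), then (Z, ρ_0) and (Z', ρ_0') are isometric: there exists a surjective map f : Z' → Z with ρ_0(f(ξ),f(η)) = ρ_0'(ξ,η) for all ξ,η ∈ Z'. -/
open Filter Topology Metric
open scoped ENNReal

universe u v

/-- Monotonicity of `ε`-isometries in `ε`. -/
theorem IsEpsIsometry.mono {Z₁ : Type*} {Z₂ : Type*} {ρ₁ : Z₁ → Z₁ → ℝ} {ρ₂ : Z₂ → Z₂ → ℝ}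
    {ε ε' : ℝ} {f : Z₁ → Z₂} (hf : IsEpsIsometry ρ₁ ρ₂ ε f) (hle : ε ≤ ε') :
    IsEpsIsometry ρ₁ ρ₂ ε' f :=
  ⟨fun ξ η => lt_of_lt_of_le (hf.1 ξ η) hle, fun ζ => by
    obtain ⟨ξ, hξ⟩ := hf.2 ζ; exact ⟨ξ, lt_of_lt_of_le hξ hle⟩⟩

/-- If the AI distance is less than `ENNReal.ofReal ε`, there are `ε`-isometries both ways. -/
theorem dAI_lt_elim {Z₁ : Type*} {Z₂ : Type*} {ρ₁ : Z₁ → Z₁ → ℝ} {ρ₂ : Z₂ → Z₂ → ℝ}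
    {ε : ℝ} (hε : 0 < ε) (hd : dAI ρ₁ ρ₂ < ENNReal.ofReal ε) :
    (∃ f : Z₁ → Z₂, IsEpsIsometry ρ₁ ρ₂ ε f) ∧ ∃ g : Z₂ → Z₁, IsEpsIsometry ρ₂ ρ₁ ε g := by
  rw [dAI] at hd
  simp only [iInf_lt_iff] at hd
  obtain ⟨ε', hε', ⟨f, hf⟩, ⟨g, hg⟩, hlt⟩ := hd
  have hlt' : ε' ≤ ε := le_of_lt ((ENNReal.ofReal_lt_ofReal_iff hε).1 hlt)
  exact ⟨⟨f, hf.mono hlt'⟩, ⟨g, hg.mono hlt'⟩⟩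

/-- The uniform "almost triangle inequality" for a continuous semi-metric on a compact space. -/
theorem semiMetric_tri {W : Type*} [TopologicalSpace W] [CompactSpace W]
    {ρ : W → W → ℝ} (hρ : IsSemiMetric ρ) {ε : ℝ} (hε : 0 < ε) :
    ∃ δ > 0, ∀ x y z : W, ρ x y < δ → ρ y z < δ → ρ x z < ε := by
  obtain ⟨hc, _hsym, hnn, hzero⟩ := hρ
  set K : Set (W × W × W) := {p | ε ≤ ρ p.1 p.2.2} with hK
  rcases Set.eq_empty_or_nonempty K with hKe | hKne
  · refine ⟨1, one_pos, fun x y z _ _ => ?_⟩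
    by_contra hcon
    have : (x, y, z) ∈ K := le_of_not_gt hcon
    simp [hKe] at this
  · have hm : Continuous fun p : W × W × W => max (ρ p.1 p.2.1) (ρ p.2.1 p.2.2) := by
      refine Continuous.max ?_ ?_
      · exact hc.comp ((continuous_fst.prodMk (continuous_fst.comp continuous_snd)) :
          Continuous fun p : W × W × W => (p.1, p.2.1))
      · exact hc.comp (((continuous_fst.comp continuous_snd).prodMk
          (continuous_snd.comp continuous_snd)) :
          Continuous fun p : W × W × W => (p.2.1, p.2.2))
    have hKc : IsCompact K := by
      have : IsClosed K := by
        have : Continuous fun p : W × W × W => ρ p.1 p.2.2 :=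
          hc.comp ((continuous_fst.prodMk (continuous_snd.comp continuous_snd)) :
            Continuous fun p : W × W × W => (p.1, p.2.2))
        exact isClosed_le continuous_const this
      exact this.isCompact
    obtain ⟨p₀, hp₀K, hp₀min⟩ := hKc.exists_isMinOn hKne hm.continuousOn
    set δ := max (ρ p₀.1 p₀.2.1) (ρ p₀.2.1 p₀.2.2) with hδ
    have hδpos : 0 < δ := by
      rcases lt_or_eq_of_le (le_max_iff.2 (Or.inl (hnn p₀.1 p₀.2.1)) : (0:ℝ) ≤ δ) with h | h
      · exact h
      · exfalso
        have h1 : ρ p₀.1 p₀.2.1 = 0 :=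
          le_antisymm (h ▸ le_max_left _ _) (hnn _ _)
        have h2 : ρ p₀.2.1 p₀.2.2 = 0 :=
          le_antisymm (h ▸ le_max_right _ _) (hnn _ _)
        have e1 : p₀.1 = p₀.2.1 := (hzero _ _).1 h1
        have e2 : p₀.2.1 = p₀.2.2 := (hzero _ _).1 h2
        have : ρ p₀.1 p₀.2.2 = 0 := by rw [e1, e2, (hzero _ _).2 rfl]
        have := hp₀K
        rw [hK] at this
        simp only [Set.mem_setOf_eq] at this
        linarith
    refine ⟨δ, hδpos, fun x y z hxy hyz => ?_⟩
    by_contra hcon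
    have hmem : (x, y, z) ∈ K := le_of_not_gt hcon
    have := hp₀min hmem
    simp only [Set.mem_setOf_eq] at this
    have : δ ≤ max (ρ x y) (ρ y z) := this
    rcases max_le_iff.1 (le_of_eq rfl : max (ρ x y) (ρ y z) ≤ _) with _
    have hlt : max (ρ x y) (ρ y z) < δ := max_lt hxy hyz
    linarith

/-- The AI-limit of a sequence of compact semi-metric spaces is unique up to
isometry. -/
theorem AI_limit_unique_up_to_isometry
    {Z : ℕ → Type u} [∀ n, TopologicalSpace (Z n)] [∀ n, CompactSpace (Z n)]
    [∀ n, TopologicalSpace.MetrizableSpace (Z n)]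
    (ρ : ∀ n, Z n → Z n → ℝ) (hρ : ∀ n, IsSemiMetric (ρ n))
    {W : Type v} [TopologicalSpace W] [CompactSpace W] [TopologicalSpace.MetrizableSpace W]
    (ρ₀ : W → W → ℝ) (hρ₀ : IsSemiMetric ρ₀)
    {W' : Type v} [TopologicalSpace W'] [CompactSpace W'] [TopologicalSpace.MetrizableSpace W']
    (ρ₀' : W' → W' → ℝ) (hρ₀' : IsSemiMetric ρ₀')
    (h : Tendsto (fun n => dAI (ρ n) ρ₀) atTop (𝓝 0))
    (h' : Tendsto (fun n => dAI (ρ n) ρ₀') atTop (𝓝 0)) :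
    ∃ f : W' → W, Function.Surjective f ∧ ∀ ξ η : W', ρ₀ (f ξ) (f η) = ρ₀' ξ η := by
  -- the scale sequence
  set e : ℕ → ℝ := fun m => 1 / (m + 1 : ℝ) with he
  have hepos : ∀ m, 0 < e m := fun m => by positivity
  have he0 : Tendsto e atTop (𝓝 0) := tendsto_one_div_add_atTop_nhds_zero_nat
  have he20 : Tendsto (fun m => 2 * e m) atTop (𝓝 0) := by
    simpa [he, one_div] using he0.const_mul 2
  -- construct almost isometries F m : W' → W with vanishing distortion and near-net property
  have hF : ∀ m : ℕ, ∃ F : W' → W,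
      (∀ ξ η : W', |ρ₀ (F ξ) (F η) - ρ₀' ξ η| < 2 * e m) ∧
      ∀ ζ : W, ∃ ξ : W', ∃ x : W, ρ₀ (F ξ) x < 2 * e m ∧ ρ₀ x ζ < 2 * e m := by
    intro m
    have hofpos : (0 : ℝ≥0∞) < ENNReal.ofReal (e m) := ENNReal.ofReal_pos.2 (hepos m)
    obtain ⟨n, hn, hn'⟩ :=
      ((h.eventually_lt_const hofpos).and (h'.eventually_lt_const hofpos)).exists
    obtain ⟨⟨f, hf⟩, -⟩ := dAI_lt_elim (hepos m) hn
    obtain ⟨-, ⟨g, hg⟩⟩ := dAI_lt_elim (hepos m) hn'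
    refine ⟨f ∘ g, fun ξ η => ?_, fun ζ => ?_⟩
    · calc |ρ₀ (f (g ξ)) (f (g η)) - ρ₀' ξ η|
          ≤ |ρ₀ (f (g ξ)) (f (g η)) - ρ n (g ξ) (g η)| + |ρ n (g ξ) (g η) - ρ₀' ξ η| :=
            abs_sub_le _ _ _
        _ < e m + e m := add_lt_add (hf.1 (g ξ) (g η)) (hg.1 ξ η)
        _ = 2 * e m := by ring
    · obtain ⟨z, hz⟩ := hf.2 ζ
      obtain ⟨ξ, hξ⟩ := hg.2 z
      refine ⟨ξ, f z, ?_, lt_of_lt_of_le hz (by nlinarith [hepos m])⟩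
      have h1 : |ρ₀ (f (g ξ)) (f z) - ρ n (g ξ) z| < e m := hf.1 (g ξ) z
      have h2 : ρ n (g ξ) z < e m := hξ
      have := abs_lt.1 h1
      simp only [Function.comp_apply]
      linarith [this.2]
  choose F hFdist hFnet using hF
  -- a nonprincipal ultrafilter extending atTop
  let U : Ultrafilter ℕ := Ultrafilter.of atTop
  have hU : (U : Filter ℕ) ≤ atTop := Ultrafilter.of_le atTop
  -- the limiting map
  let f : W' → W := fun ξ => (U.map fun m => F m ξ).lim
  have hfconv : ∀ ξ : W', Tendsto (fun m => F m ξ) (U : Filter ℕ) (𝓝 (f ξ)) := fun ξ =>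
    (U.map fun m => F m ξ).le_nhds_lim
  -- the isometry property
  have hiso : ∀ ξ η : W', ρ₀ (f ξ) (f η) = ρ₀' ξ η := by
    intro ξ η
    have h1 : Tendsto (fun m => ρ₀ (F m ξ) (F m η)) (U : Filter ℕ) (𝓝 (ρ₀ (f ξ) (f η))) :=
      (hρ₀.1.tendsto (f ξ, f η)).comp ((hfconv ξ).prodMk_nhds (hfconv η))
    have h2 : Tendsto (fun m => ρ₀ (F m ξ) (F m η)) atTop (𝓝 (ρ₀' ξ η)) := by
      rw [tendsto_iff_dist_tendsto_zero]
      refine squeeze_zero (fun m => dist_nonneg) (fun m => ?_) he20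
      rw [Real.dist_eq]
      exact le_of_lt (hFdist m ξ η)
    exact tendsto_nhds_unique h1 (h2.mono_left hU)
  -- surjectivity
  refine ⟨f, fun ζ => ?_, hiso⟩
  choose ξs xs hξs hxs using fun m => hFnet m ζ
  let ξ : W' := (U.map ξs).lim
  have hξconv : Tendsto ξs (U : Filter ℕ) (𝓝 ξ) := (U.map ξs).le_nhds_lim
  refine ⟨ξ, ?_⟩
  -- show ρ₀ (f ξ) ζ ≤ ε for every ε > 0
  have key : ∀ ε : ℝ, 0 < ε → ρ₀ (f ξ) ζ ≤ ε := by
    intro ε hε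
    obtain ⟨δ₁, hδ₁, htri₁⟩ := semiMetric_tri hρ₀ hε
    obtain ⟨δ₂', hδ₂', htri₂⟩ := semiMetric_tri hρ₀ hδ₁
    set δ₂ := min δ₁ δ₂' with hδ₂def
    have hδ₂ : 0 < δ₂ := lt_min hδ₁ hδ₂'
    -- eventually ρ₀ (F m ξ) (F m (ξs m)) < δ₂
    have hA : ∀ᶠ m in (U : Filter ℕ), ρ₀ (F m ξ) (F m (ξs m)) < δ₂ := by
      have hcont : Tendsto (fun m => ρ₀' ξ (ξs m)) (U : Filter ℕ) (𝓝 0) := by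
        have := (hρ₀'.1.tendsto (ξ, ξ)).comp (tendsto_const_nhds.prodMk_nhds hξconv)
        rwa [show Function.uncurry ρ₀' (ξ, ξ) = 0 from (hρ₀'.2.2.2 ξ ξ).2 rfl] at this
      have hsum : Tendsto (fun m => ρ₀' ξ (ξs m) + 2 * e m) (U : Filter ℕ) (𝓝 0) := by
        simpa using hcont.add (he20.mono_left hU)
      filter_upwards [hsum.eventually_lt_const hδ₂] with m hm
      have := abs_lt.1 (hFdist m ξ (ξs m))
      linarith [this.2]
    have hB : ∀ᶠ m in (U : Filter ℕ), ρ₀ (F m (ξs m)) (xs m) < δ₂ := by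
      filter_upwards [(he20.mono_left hU).eventually_lt_const hδ₂] with m hm
      exact lt_trans (hξs m) hm
    have hC : ∀ᶠ m in (U : Filter ℕ), ρ₀ (xs m) ζ < δ₁ := by
      filter_upwards [(he20.mono_left hU).eventually_lt_const hδ₁] with m hm
      exact lt_trans (hxs m) hm
    have hε' : ∀ᶠ m in (U : Filter ℕ), ρ₀ (F m ξ) ζ < ε := by
      filter_upwards [hA, hB, hC] with m hA hB hC
      have h1 : ρ₀ (F m ξ) (xs m) < δ₁ :=
        htri₂ _ _ _ (lt_of_lt_of_le hA (min_le_right _ _)) (lt_of_lt_of_le hB (min_le_right _ _))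
      exact htri₁ _ _ _ h1 hC
    have hten : Tendsto (fun m => ρ₀ (F m ξ) ζ) (U : Filter ℕ) (𝓝 (ρ₀ (f ξ) ζ)) := by
      have : Continuous fun w : W => ρ₀ w ζ :=
        hρ₀.1.comp (continuous_id.prodMk continuous_const)
      exact (this.tendsto (f ξ)).comp (hfconv ξ)
    exact le_of_tendsto hten (hε'.mono fun m hm => le_of_lt hm)
  have hle0 : ρ₀ (f ξ) ζ ≤ 0 := by
    by_contra hcon
    push_neg at hcon
    have := key (ρ₀ (f ξ) ζ / 2) (by linarith)
    linarith
  have : ρ₀ (f ξ) ζ = 0 := le_antisymm hle0 (hρ₀.2.2.1 _ _)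
  exact (hρ₀.2.2.2 _ _).1 this
end

section
/- Let (Z_n, ρ_n), n ≥ 1, be a sequence of compact semi-metric spaces that AI-converges to a compact semi-metric space (Z, ρ_0). Then the family {(Z_n, ρ_n)}_{n≥1} is equicontinuous: for every ε > 0 there exists δ > 0 such that for all n and all ξ, η ∈ Z_n with ρ_n(ξ,η) < δ, one has |ρ_n(ξ,ζ) − ρ_n(η,ζ)| < ε for all ζ ∈ Z_n. -/
open Filter Topology Metric
open scoped ENNReal

universe u v

/-- Key compactness lemma: a single compact semi-metric space is "uniformly" continuous
in the above sense. -/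
lemma semiMetric_unif {Z : Type*} [TopologicalSpace Z] [CompactSpace Z]
    (ρ : Z → Z → ℝ) (hρ : IsSemiMetric ρ) (ε : ℝ) (hε : 0 < ε) :
    ∃ δ : ℝ, 0 < δ ∧ ∀ ξ η : Z, ρ ξ η < δ → ∀ ζ : Z, |ρ ξ ζ - ρ η ζ| < ε := by
  obtain ⟨hc, hsymm, hnn, hdiag⟩ := hρ
  have hc1 : Continuous fun p : Z × Z × Z => ρ p.1 p.2.2 :=
    hc.comp (continuous_fst.prodMk (continuous_snd.comp continuous_snd))
  have hc2 : Continuous fun p : Z × Z × Z => ρ p.2.1 p.2.2 :=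
    hc.comp ((continuous_fst.comp continuous_snd).prodMk (continuous_snd.comp continuous_snd))
  have hg : Continuous fun p : Z × Z × Z => |ρ p.1 p.2.2 - ρ p.2.1 p.2.2| :=
    (hc1.sub hc2).abs
  set K : Set (Z × Z × Z) := {p | ε ≤ |ρ p.1 p.2.2 - ρ p.2.1 p.2.2|} with hKdef
  have hKclosed : IsClosed K := isClosed_le continuous_const hg
  have hKcompact : IsCompact K := hKclosed.isCompact
  have hd : Continuous fun p : Z × Z × Z => ρ p.1 p.2.1 :=
    hc.comp (continuous_fst.prodMk (continuous_fst.comp continuous_snd))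
  by_cases hne : K.Nonempty
  · obtain ⟨p₀, hp₀K, hmin⟩ := hKcompact.exists_isMinOn hne hd.continuousOn
    refine ⟨ρ p₀.1 p₀.2.1, ?_, ?_⟩
    · rcases lt_or_eq_of_le (hnn p₀.1 p₀.2.1) with h | h
      · exact h
      · exfalso
        have : p₀.1 = p₀.2.1 := (hdiag _ _).1 h.symm
        have : |ρ p₀.1 p₀.2.2 - ρ p₀.2.1 p₀.2.2| = 0 := by rw [this]; simp
        have := hp₀K
        rw [hKdef] at this
        simp only [Set.mem_setOf_eq] at this
        linarith [hp₀K, ‹|ρ p₀.1 p₀.2.2 - ρ p₀.2.1 p₀.2.2| = 0›]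
    · intro ξ η hlt ζ
      by_contra h
      push_neg at h
      have hmem : (ξ, η, ζ) ∈ K := h
      have := hmin hmem
      simp only [Set.mem_setOf_eq] at this
      exact absurd hlt (not_lt.2 this)
  · refine ⟨1, one_pos, fun ξ η _ ζ => ?_⟩
    by_contra h
    push_neg at h
    exact hne ⟨(ξ, η, ζ), h⟩

/-- An AI-convergent sequence of compact semi-metric spaces is an
equicontinuous family. -/
theorem equicontinuous_of_AI_converges
    {Z : ℕ → Type u} [∀ n, TopologicalSpace (Z n)] [∀ n, CompactSpace (Z n)]
    [∀ n, TopologicalSpace.MetrizableSpace (Z n)]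
    (ρ : ∀ n, Z n → Z n → ℝ) (hρ : ∀ n, IsSemiMetric (ρ n))
    {W : Type v} [TopologicalSpace W] [CompactSpace W] [TopologicalSpace.MetrizableSpace W]
    (ρ₀ : W → W → ℝ) (hρ₀ : IsSemiMetric ρ₀)
    (hAI : AIConverges ρ ρ₀) :
    EquicontinuousFamily ρ := by
  intro ε hε
  obtain ⟨e, hepos, hto0, hf⟩ := hAI
  obtain ⟨δ₀, hδ₀, hW⟩ := semiMetric_unif ρ₀ hρ₀ (ε / 2) (by linarith)
  have hsmall : ∀ᶠ n in atTop, e n < min (ε / 4) (δ₀ / 2) :=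
    hto0.eventually (gt_mem_nhds (by positivity))
  obtain ⟨N, hN⟩ := hsmall.exists_forall_of_atTop
  choose D hDpos hD using fun n => semiMetric_unif (ρ n) (hρ n) ε hε
  set S : Finset ℝ := insert (δ₀ / 2) ((Finset.range N).image D) with hS
  have hSne : S.Nonempty := ⟨δ₀ / 2, Finset.mem_insert_self _ _⟩
  refine ⟨S.min' hSne, ?_, ?_⟩
  · have := S.min'_mem hSne
    rcases Finset.mem_insert.1 this with h | h
    · rw [h]; linarith
    · obtain ⟨n, _, hn⟩ := Finset.mem_image.1 h
      rw [← hn]; exact hDpos n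
  · intro i ξ η hlt ζ
    by_cases hi : i < N
    · have hle : S.min' hSne ≤ D i :=
        Finset.min'_le _ _ (Finset.mem_insert_of_mem
          (Finset.mem_image_of_mem D (Finset.mem_range.2 hi)))
      exact hD i ξ η (lt_of_lt_of_le hlt hle) ζ
    · have hei := hN i (le_of_not_gt hi)
      obtain ⟨f, hdist, _⟩ := hf i
      have hle : S.min' hSne ≤ δ₀ / 2 := Finset.min'_le _ _ (Finset.mem_insert_self _ _)
      have h1 := hdist ξ η
      have h2 := hdist ξ ζ
      have h3 := hdist η ζ
      rw [abs_lt] at h1 h2 h3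
      have hρ₀lt : ρ₀ (f ξ) (f η) < δ₀ := by
        have : ρ i ξ η < δ₀ / 2 := lt_of_lt_of_le hlt hle
        have := lt_min_iff.1 hei
        linarith [h1.2]
      have hmid := hW (f ξ) (f η) hρ₀lt (f ζ)
      rw [abs_lt] at hmid ⊢
      have := lt_min_iff.1 hei
      constructor <;> linarith [h2.1, h2.2, h3.1, h3.2, hmid.1, hmid.2]
end

section
/- Let {(Z_λ, ρ_λ)}_{λ∈Λ} be an equicontinuous family of antipodal spaces and fix R > 0. For every ε > 0 there exists δ > 0 (depending only on R and ε) such that for every λ ∈ Λ, every antipodal function ρ on Z_λ that is Moebius equivalent to ρ_λ with ‖τ_ρ‖_∞ ≤ R (where τ_ρ = log(dρ/dρ_λ)), and all ξ, η ∈ Z_λ with ρ_λ(ξ,η) < δ, one has |τ_ρ(ξ) − τ_ρ(η)| < ε. -/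
open Filter Topology Metric
open scoped ENNReal

universe u v

set_option maxHeartbeats 2000000 in
/-- For an equicontinuous family of antipodal spaces `(Z λ, ρ λ)` and a fixed
`R > 0`: for every `ε > 0` there is a `δ > 0` (depending only on `R` and `ε`) such that for
every `λ`, every antipodal function `β` on `Z λ` Moebius equivalent to `ρ λ` with
`‖τ_β‖_∞ ≤ R` (where `τ_β = log (dβ/dρ λ)`), and all `ξ, η` with `ρ λ ξ η < δ`, one has
`|τ_β ξ - τ_β η| < ε`. -/
theorem equicontinuity_of_log_derivatives
    {Λ : Type v} {Z : Λ → Type u} [∀ l, TopologicalSpace (Z l)] [∀ l, CompactSpace (Z l)]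
    [∀ l, TopologicalSpace.MetrizableSpace (Z l)]
    (ρ : ∀ l, Z l → Z l → ℝ) (hρ : ∀ l, IsAntipodalFn (ρ l))
    (hEq : EquicontinuousFamily ρ)
    (R : ℝ) (hR : 0 < R) :
    ∀ ε : ℝ, 0 < ε → ∃ δ : ℝ, 0 < δ ∧
      ∀ (l : Λ) (β : Z l → Z l → ℝ), IsAntipodalFn β →
        ∀ τ : Z l → ℝ, Continuous τ →
          (∀ ξ η : Z l, β ξ η ^ 2 = Real.exp (τ ξ) * Real.exp (τ η) * ρ l ξ η ^ 2) →
          (∀ ξ : Z l, |τ ξ| ≤ R) →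
          ∀ ξ η : Z l, ρ l ξ η < δ → |τ ξ - τ η| < ε := by
  intro ε hε
  have hE1 : Real.exp (-(ε/2)) < 1 := by
    rw [Real.exp_lt_one_iff]; linarith
  have hE0 : 0 < Real.exp (-(ε/2)) := Real.exp_pos _
  set ε' : ℝ := Real.exp (-R) * (1 - Real.exp (-(ε/2))) / 2 with hε'def
  have hε'pos : 0 < ε' := by
    have h0 := Real.exp_pos (-R); nlinarith
  obtain ⟨δ, hδpos, hδ⟩ := hEq ε' hε'pos
  refine ⟨δ, hδpos, ?_⟩
  intro l β hβ τ hτ hM hτR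
  have hsymm : ∀ a b : Z l, ρ l a b = ρ l b a := (hρ l).1.2.1
  have hρnn : ∀ a b : Z l, 0 ≤ ρ l a b := (hρ l).1.2.2.1
  have key : ∀ ξ η : Z l, ρ l ξ η < δ → τ η - τ ξ < ε := by
    intro ξ η hξη
    obtain ⟨ζ, hζ⟩ := hβ.2.2 ξ
    have h1 : (1:ℝ) = Real.exp (τ ξ) * Real.exp (τ ζ) * ρ l ξ ζ ^ 2 := by
      have := hM ξ ζ; rw [hζ] at this; simp at this; linarith
    have eξ : Real.exp (τ ξ) ≤ Real.exp R := Real.exp_le_exp.2 (le_of_abs_le (hτR ξ))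
    have eζ : Real.exp (τ ζ) ≤ Real.exp R := Real.exp_le_exp.2 (le_of_abs_le (hτR ζ))
    have eξ0 : 0 < Real.exp (τ ξ) := Real.exp_pos _
    have eζ0 : 0 < Real.exp (τ ζ) := Real.exp_pos _
    have eη0 : 0 < Real.exp (τ η) := Real.exp_pos _
    have eR0 : 0 < Real.exp R := Real.exp_pos _
    have eRinv : Real.exp (-R) * Real.exp R = 1 := by
      rw [← Real.exp_add]; simp
    have hRle : Real.exp (-R) ≤ ρ l ξ ζ := by
      have h2 : Real.exp (-R) ^ 2 ≤ ρ l ξ ζ ^ 2 := by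
        nlinarith [sq_nonneg (ρ l ξ ζ), mul_pos eξ0 eζ0,
          mul_le_mul eξ eζ eζ0.le eR0.le]
      exact le_of_pow_le_pow_left₀ two_ne_zero (hρnn _ _) h2
    have hcl : |ρ l ξ ζ - ρ l η ζ| < ε' := hδ l ξ η hξη ζ
    have hcl' : ρ l ξ ζ - ε' < ρ l η ζ := by
      have := abs_lt.1 hcl; linarith [this.1]
    have hξζ0 : 0 < ρ l ξ ζ := lt_of_lt_of_le (Real.exp_pos _) hRle
    -- ρ ξ ζ * exp(-(ε/2)) < ρ η ζ
    have hlow : ρ l ξ ζ * Real.exp (-(ε/2)) < ρ l η ζ := by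
      have hε'le : ε' < ρ l ξ ζ * (1 - Real.exp (-(ε/2))) := by
        have : Real.exp (-R) * (1 - Real.exp (-(ε/2))) ≤
            ρ l ξ ζ * (1 - Real.exp (-(ε/2))) := by
          apply mul_le_mul_of_nonneg_right hRle; linarith
        nlinarith [Real.exp_pos (-R)]
      nlinarith
    have hηζ0 : 0 < ρ l η ζ := lt_of_le_of_lt (by positivity) hlow
    -- squared version: ρ ξ ζ ^ 2 < exp ε * ρ η ζ ^ 2
    have hsq : ρ l ξ ζ ^ 2 < Real.exp ε * ρ l η ζ ^ 2 := by
      have h4 : ρ l ξ ζ < Real.exp (ε/2) * ρ l η ζ := by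
        have hx : Real.exp (-(ε/2)) * Real.exp (ε/2) = 1 := by
          rw [← Real.exp_add]; simp
        nlinarith [Real.exp_pos (ε/2)]
      have := mul_lt_mul'' h4 h4 (hρnn ξ ζ) (hρnn ξ ζ)
      have hee : Real.exp (ε/2) * Real.exp (ε/2) = Real.exp ε := by
        rw [← Real.exp_add]; ring_nf
      nlinarith
    -- β η ζ ≤ 1
    have hb1 : β η ζ ^ 2 ≤ 1 := by
      have h5 := hβ.2.1 η ζ
      have h6 : 0 ≤ β η ζ := hβ.1.2.2.1 η ζ
      nlinarith
    have h7 : Real.exp (τ η) * Real.exp (τ ζ) * ρ l η ζ ^ 2 ≤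
        Real.exp (τ ξ) * Real.exp (τ ζ) * ρ l ξ ζ ^ 2 := by
      rw [← hM η ζ, ← h1]; exact hb1
    have h8 : Real.exp (τ η) * ρ l η ζ ^ 2 ≤ Real.exp (τ ξ) * ρ l ξ ζ ^ 2 := by
      have h7' : Real.exp (τ η) * ρ l η ζ ^ 2 * Real.exp (τ ζ) ≤
          Real.exp (τ ξ) * ρ l ξ ζ ^ 2 * Real.exp (τ ζ) := by linarith [h7]
      exact le_of_mul_le_mul_right h7' eζ0
    have hηζ2 : 0 < ρ l η ζ ^ 2 := by positivity
    have h9' : Real.exp (τ η) * ρ l η ζ ^ 2 <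
        (Real.exp (τ ξ) * Real.exp ε) * ρ l η ζ ^ 2 := by
      refine lt_of_le_of_lt h8 ?_
      calc Real.exp (τ ξ) * ρ l ξ ζ ^ 2
          < Real.exp (τ ξ) * (Real.exp ε * ρ l η ζ ^ 2) :=
            mul_lt_mul_of_pos_left hsq eξ0
        _ = (Real.exp (τ ξ) * Real.exp ε) * ρ l η ζ ^ 2 := by ring
    have h9 : Real.exp (τ η) < Real.exp (τ ξ + ε) := by
      rw [Real.exp_add]
      exact lt_of_mul_lt_mul_right h9' hηζ2.le
    have := Real.exp_lt_exp.1 h9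
    linarith
  intro ξ η hξη
  have h1 := key ξ η hξη
  have h2 := key η ξ (by rw [hsymm]; exact hξη)
  rw [abs_sub_lt_iff]; exact ⟨h2, h1⟩
end
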